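/- arXiv:0708.2545 — 15 statements merged into one kernel-verified Lean document; each statement's English description precedes it below -/
import Mathlib

section
/- Let H be a reflexive semicomplete digraph that does not contain R (the reflexive digraph on vertices {1,2,3} with non-loop arcs 12, 23, 31, 13) as an induced subdigraph, and suppose that in some ordering v_1,...,v_n of its vertices, whenever i < j < k and v_i v_k is a symmetric arc, both v_i v_j and v_j v_k are symmetric arcs, and moreover every consecutive pair v_i v_{i+1} is a symmetric arc. Then for every vertex v_i, if v_i strictly dominates some v_j with j > i, then v_i dominates all vertices v_k with k > i. -/
/-- In a reflexive semicomplete digraph with no induced `R`,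
if the ordering `0,...,n-1` satisfies the proper-interval umbrella condition for
symmetric arcs and all consecutive arcs are symmetric, then a vertex strictly
dominating some later vertex dominates all later vertices. -/
theorem stmt0 {n : ℕ} (A : Fin n → Fin n → Prop)
    (hrefl : ∀ v, A v v)
    (hsemi : ∀ u v : Fin n, u ≠ v → A u v ∨ A v u)
    (hnoR : ¬ ∃ a b c : Fin n, a ≠ b ∧ a ≠ c ∧ b ≠ c ∧
      A a b ∧ A b c ∧ A c a ∧ A a c ∧ ¬ A b a ∧ ¬ A c b)
    (horder : ∀ i j k : Fin n, i < j → j < k → (A i k ∧ A k i) →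
      (A i j ∧ A j i) ∧ (A j k ∧ A k j))
    (hconsec : ∀ i : Fin n, ∀ h : i.val + 1 < n,
      A i ⟨i.val + 1, h⟩ ∧ A ⟨i.val + 1, h⟩ i) :
    ∀ i j : Fin n, i < j → A i j → ¬ A j i → ∀ k : Fin n, i < k → A i k := by
  -- Key lemma: no vertex `i` can simultaneously strictly dominate some `a > i`
  -- and be strictly dominated by some `b > i`.
  have key : ∀ d : ℕ, ∀ i a b : Fin n,
      (a.val - b.val) + (b.val - a.val) < d →
      i < a → i < b → A i a → ¬ A a i → A b i → ¬ A i b → False := by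
    intro d
    induction d with
    | zero => intro i a b hd _ _ _ _ _ _; omega
    | succ d ih =>
      intro i a b hd hia hib hAia hnAai hAbi hnAib
      have hia' : i.val < a.val := hia
      have hib' : i.val < b.val := hib
      have hbi : b ≠ i := fun h => hnAib (h ▸ hrefl i)
      have hab : a ≠ b := fun h => hnAib (h ▸ hAia)
      have hine_a : i ≠ a := fun h => hnAai (h ▸ hrefl i)
      by_cases hsym : A a b ∧ A b a
      · exact hnoR ⟨b, i, a, hbi, hab.symm, hine_a,
          hAbi, hAia, hsym.1, hsym.2, hnAib, hnAai⟩
      · have hvne : a.val ≠ b.val := fun h => hab (Fin.ext h)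
        rcases Nat.lt_or_ge a.val b.val with hlt | hge
        · -- a < b
          by_cases hadj : a.val + 1 = b.val
          · -- consecutive, hence symmetric: contradiction
            have hb : a.val + 1 < n := by omega
            have := hconsec a hb
            have heq : (⟨a.val + 1, hb⟩ : Fin n) = b := Fin.ext hadj
            rw [heq] at this
            exact hsym ⟨this.1, this.2⟩
          · have hc : a.val + 1 < n := lt_of_le_of_lt (by omega) b.isLt
            set c : Fin n := ⟨a.val + 1, hc⟩ with hcdef
            have hic : i < c := by
              show i.val < c.val; simp [hcdef]; omega
            have hicne : i ≠ c := Fin.ne_of_lt hic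
            have hac : a < c := by show a.val < c.val; simp [hcdef]
            by_cases hAic : A i c
            · by_cases hAci : A c i
              · -- i ↔ c symmetric, umbrella gives i ↔ a symmetric, contra
                have := horder i a c hia hac ⟨hAic, hAci⟩
                exact hnAai this.1.2
              · -- recurse on pair (c, b)
                exact ih i c b (by simp [hcdef]; omega) hic hib hAic hAci hAbi hnAib
            · have hAci : A c i := (hsemi i c hicne).resolve_left hAic
              -- recurse on pair (a, c)
              exact ih i a c (by simp [hcdef]; omega) hia hic hAia hnAai hAci hAic
        · -- b < a
          have hlt : b.val < a.val := by omega
          by_cases hadj : b.val + 1 = a.val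
          · have ha : b.val + 1 < n := by omega
            have := hconsec b ha
            have heq : (⟨b.val + 1, ha⟩ : Fin n) = a := Fin.ext hadj
            rw [heq] at this
            exact hsym ⟨this.2, this.1⟩
          · have hc : b.val + 1 < n := lt_of_le_of_lt (by omega) a.isLt
            set c : Fin n := ⟨b.val + 1, hc⟩ with hcdef
            have hic : i < c := by
              show i.val < c.val; simp [hcdef]; omega
            have hicne : i ≠ c := Fin.ne_of_lt hic
            have hbc : b < c := by show b.val < c.val; simp [hcdef]
            by_cases hAic : A i c
            · by_cases hAci : A c i
              · have := horder i b c hib hbc ⟨hAic, hAci⟩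
                exact hnAib this.1.1
              · exact ih i c b (by simp [hcdef]; omega) hic hib hAic hAci hAbi hnAib
            · have hAci : A c i := (hsemi i c hicne).resolve_left hAic
              exact ih i a c (by simp [hcdef]; omega) hia hic hAia hnAai hAci hAic
  intro i j hij hAij hnAji k hik
  by_cases hk : A i k
  · exact hk
  · have hki : A k i := (hsemi i k (Fin.ne_of_lt hik)).resolve_left hk
    exact absurd hki fun _ =>
      key ((j.val - k.val) + (k.val - j.val) + 1) i j k (Nat.lt_succ_self _)
        hij hik hAij hnAji hki hk
end

section
/- Let H be a reflexive semicomplete digraph not containing R as an induced subdigraph, whose symmetric subdigraph H^sym is connected, and such that the underlying undirected graph of H^sym admits an ordering v_1,...,v_n with the property that i < j < k and v_i v_k ∈ E imply v_i v_j ∈ E and v_j v_k ∈ E. Then either the ordering v_1,...,v_n or its reversal has the additional property that v_i → v_j (v_i dominates v_j) for every pair i < j. -/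
theorem master_aux {n : ℕ} (A : Fin n → Fin n → Prop)
    (hrefl : ∀ v, A v v)
    (hsemi : ∀ u v : Fin n, u ≠ v → A u v ∨ A v u)
    (hnoR : ¬ ∃ a b c : Fin n, a ≠ b ∧ a ≠ c ∧ b ≠ c ∧
      A a b ∧ A b c ∧ A c a ∧ A a c ∧ ¬ A b a ∧ ¬ A c b)
    (hconn : ∀ u v : Fin n, Relation.ReflTransGen (fun x y => A x y ∧ A y x) u v)
    (horder : ∀ i j k : Fin n, i < j → j < k → (A i k ∧ A k i) →
      (A i j ∧ A j i) ∧ (A j k ∧ A k j))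
    (p q : Fin n) (hpq : p < q) (hApq : A p q) (hAqp : ¬ A q p) :
    ∀ i j : Fin n, i < j → A i j := by
  have hn : 0 < n := q.pos
  have hqlt : q.val < n := q.isLt
  have hplt : p.val < n := p.isLt
  have hpq' : p.val < q.val := hpq
  -- Lemma L: x→y one-way, x~z symmetric ⇒ A z y
  have hL : ∀ x y z : Fin n, A x y → ¬ A y x → A x z → A z x → A z y := by
    intro x y z h1 h2 h3 h4
    rcases eq_or_ne z y with rfl | hzy
    · exact hrefl _
    rcases eq_or_ne z x with rfl | hzx
    · exact h1
    by_contra h5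
    have hxy : x ≠ y := by rintro rfl; exact h2 (hrefl x)
    have h6 : A y z := (hsemi y z (Ne.symm hzy)).resolve_right h5
    exact hnoR ⟨x, y, z, hxy, Ne.symm hzx, Ne.symm hzy, h1, h6, h4, h3, h2, h5⟩
  -- Lemma L': x→y one-way, z~y symmetric ⇒ A x z
  have hL' : ∀ x y z : Fin n, A x y → ¬ A y x → A z y → A y z → A x z := by
    intro x y z h1 h2 h3 h4
    rcases eq_or_ne z x with rfl | hzx
    · exact hrefl _
    rcases eq_or_ne z y with rfl | hzy
    · exact h1
    by_contra h5
    have hxy : x ≠ y := by rintro rfl; exact h2 (hrefl x)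
    have h6 : A z x := (hsemi z x hzx).resolve_right h5
    exact hnoR ⟨z, x, y, hzx, hzy, hxy, h6, h1, h4, h3, h5, h2⟩
  -- consecutive vertices are symmetric
  have consec : ∀ i : ℕ, ∀ hi : i + 1 < n,
      A ⟨i, by omega⟩ ⟨i+1, hi⟩ ∧ A ⟨i+1, hi⟩ ⟨i, by omega⟩ := by
    intro i hi
    have cross : ∀ u v : Fin n, Relation.ReflTransGen (fun x y => A x y ∧ A y x) u v →
        u.val ≤ i → i < v.val → ∃ a b : Fin n, a.val ≤ i ∧ i < b.val ∧ A a b ∧ A b a := by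
      intro u v huv
      induction huv with
      | refl => intro h1 h2; exact absurd h2 (by omega)
      | @tail b c hub hbc ih =>
        intro h1 h2
        by_cases hb : i < b.val
        · exact ih h1 hb
        · exact ⟨b, c, by omega, h2, hbc⟩
    obtain ⟨a, b, ha, hb, hab⟩ := cross ⟨i, by omega⟩ ⟨i+1, hi⟩ (hconn _ _)
      (le_refl i) (Nat.lt_succ_self i)
    have hib : A ⟨i, by omega⟩ b ∧ A b ⟨i, by omega⟩ := by
      rcases eq_or_lt_of_le ha with he | hlt'
      · have hEq : a = ⟨i, by omega⟩ := Fin.ext he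
        exact hEq ▸ hab
      · exact (horder a ⟨i, by omega⟩ b (Fin.lt_def.mpr hlt') (Fin.lt_def.mpr hb) hab).2
    rcases eq_or_lt_of_le (show i + 1 ≤ b.val from hb) with he | hlt'
    · have hEq : b = ⟨i+1, hi⟩ := Fin.ext he.symm
      exact hEq ▸ hib
    · exact (horder ⟨i, by omega⟩ ⟨i+1, hi⟩ b (Fin.lt_def.mpr (Nat.lt_succ_self i))
        (Fin.lt_def.mpr hlt') hib).1
  -- cast helpers
  have cast1 : ∀ (a b : ℕ) (ha : a < n) (hb : b < n) (y : Fin n), a = b →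
      A ⟨a, ha⟩ y ∧ ¬ A y ⟨a, ha⟩ → A ⟨b, hb⟩ y ∧ ¬ A y ⟨b, hb⟩ := by
    intro a b ha hb y h hx; subst h; exact hx
  have cast2 : ∀ (a b : ℕ) (ha : a < n) (hb : b < n) (x : Fin n), a = b →
      A x ⟨a, ha⟩ ∧ ¬ A ⟨a, ha⟩ x → A x ⟨b, hb⟩ ∧ ¬ A ⟨b, hb⟩ x := by
    intro a b ha hb x h hx; subst h; exact hx
  -- head shifts right
  have headR : ∀ a b : ℕ, ∀ ha : a < n, ∀ hb : b + 1 < n, a < b →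
      A ⟨a, ha⟩ ⟨b, by omega⟩ → ¬ A ⟨b, by omega⟩ ⟨a, ha⟩ →
      A ⟨a, ha⟩ ⟨b+1, hb⟩ ∧ ¬ A ⟨b+1, hb⟩ ⟨a, ha⟩ := by
    intro a b ha hb hab h1 h2
    obtain ⟨c1, c2⟩ := consec b hb
    have h3 : A ⟨a, ha⟩ ⟨b+1, hb⟩ := hL' ⟨a, ha⟩ ⟨b, by omega⟩ ⟨b+1, hb⟩ h1 h2 c2 c1
    refine ⟨h3, fun hc => h2 ?_⟩
    exact (horder ⟨a, ha⟩ ⟨b, by omega⟩ ⟨b+1, hb⟩ (Fin.lt_def.mpr hab)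
      (Fin.lt_def.mpr (Nat.lt_succ_self b)) ⟨h3, hc⟩).1.2
  -- tail shifts left
  have tailL : ∀ a b : ℕ, ∀ ha : a + 1 < n, ∀ hb : b < n, a + 1 < b →
      A ⟨a+1, ha⟩ ⟨b, hb⟩ → ¬ A ⟨b, hb⟩ ⟨a+1, ha⟩ →
      A ⟨a, by omega⟩ ⟨b, hb⟩ ∧ ¬ A ⟨b, hb⟩ ⟨a, by omega⟩ := by
    intro a b ha hb hab h1 h2
    obtain ⟨c1, c2⟩ := consec a ha
    have h3 : A ⟨a, by omega⟩ ⟨b, hb⟩ := hL ⟨a+1, ha⟩ ⟨b, hb⟩ ⟨a, by omega⟩ h1 h2 c2 c1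
    refine ⟨h3, fun hc => h2 ?_⟩
    exact (horder ⟨a, by omega⟩ ⟨a+1, ha⟩ ⟨b, hb⟩ (Fin.lt_def.mpr (Nat.lt_succ_self a))
      (Fin.lt_def.mpr hab) ⟨h3, hc⟩).2.2
  -- extend the one-way arc p→q upward to n-1
  have up : ∀ d : ℕ, ∀ hd : q.val + d < n, A p ⟨q.val + d, hd⟩ ∧ ¬ A ⟨q.val + d, hd⟩ p := by
    intro d
    induction d with
    | zero =>
      intro hd
      have hq : (⟨q.val + 0, hd⟩ : Fin n) = q := Fin.ext rfl
      rw [hq]; exact ⟨hApq, hAqp⟩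
    | succ d ih =>
      intro hd
      have prev := ih (by omega)
      exact headR p.val (q.val + d) p.isLt hd (by omega) prev.1 prev.2
  have top : A p ⟨n-1, by omega⟩ ∧ ¬ A ⟨n-1, by omega⟩ p := by
    have h0 := up (n - 1 - q.val) (by omega)
    exact cast2 (q.val + (n - 1 - q.val)) (n-1) (by omega) (by omega) p (by omega) h0
  -- extend downward to 0
  have down : ∀ d : ℕ, d ≤ p.val → A ⟨p.val - d, by omega⟩ ⟨n-1, by omega⟩ ∧
      ¬ A ⟨n-1, by omega⟩ ⟨p.val - d, by omega⟩ := by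
    intro d
    induction d with
    | zero => intro _; exact cast1 p.val (p.val - 0) p.isLt (by omega) _ (by omega) top
    | succ d ih =>
      intro hd
      have prev := ih (by omega)
      have prev' := cast1 (p.val - d) (p.val - (d+1) + 1) (by omega) (by omega) _ (by omega) prev
      exact tailL (p.val - (d+1)) (n-1) (by omega) (by omega) (by omega) prev'.1 prev'.2
  have big : A ⟨0, hn⟩ ⟨n-1, by omega⟩ ∧ ¬ A ⟨n-1, by omega⟩ ⟨0, hn⟩ :=
    cast1 (p.val - p.val) 0 (by omega) hn _ (by omega) (down p.val le_rfl)
  -- the main conclusion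
  intro i j hij
  by_cases hA : A i j
  · exact hA
  exfalso
  have hij' : i.val < j.val := hij
  have hilt := i.isLt
  have hjlt := j.isLt
  have noSlast : A i ⟨n-1, by omega⟩ ∧ A ⟨n-1, by omega⟩ i → False := by
    intro hc
    rcases eq_or_lt_of_le (show j.val ≤ n-1 by omega) with he | hlt
    · have hEq : j = ⟨n-1, by omega⟩ := Fin.ext he
      exact hA (by rw [hEq]; exact hc.1)
    · exact hA (horder i j ⟨n-1, by omega⟩ hij (Fin.lt_def.mpr hlt) hc).1.1
  -- move tail right from 0 to i
  have in2 : ∀ d : ℕ, ∀ _ : d ≤ i.val, A ⟨d, by omega⟩ ⟨n-1, by omega⟩ ∧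
      ¬ A ⟨n-1, by omega⟩ ⟨d, by omega⟩ := by
    intro d
    induction d with
    | zero => intro _; exact big
    | succ d ih =>
      intro hd
      have prev := ih (by omega)
      obtain ⟨c1, c2⟩ := consec d (by omega)
      have h3 : A ⟨d+1, by omega⟩ ⟨n-1, by omega⟩ :=
        hL ⟨d, by omega⟩ ⟨n-1, by omega⟩ ⟨d+1, by omega⟩ prev.1 prev.2 c1 c2
      refine ⟨h3, fun hc => ?_⟩
      have hSlast : A i ⟨n-1, by omega⟩ ∧ A ⟨n-1, by omega⟩ i := by
        rcases eq_or_lt_of_le (show d+1 ≤ i.val from hd) with he | hlt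
        · have hEq : (⟨d+1, by omega⟩ : Fin n) = i := Fin.ext he
          exact hEq ▸ (⟨h3, hc⟩ : _ ∧ _)
        · exact (horder ⟨d+1, by omega⟩ i ⟨n-1, by omega⟩ (Fin.lt_def.mpr hlt)
            (Fin.lt_def.mpr (show i.val < n-1 by omega)) ⟨h3, hc⟩).2
      exact noSlast hSlast
  -- move head left from n-1 to j
  have in3 : ∀ d : ℕ, d ≤ n-1-j.val → A i ⟨n-1-d, by omega⟩ ∧ ¬ A ⟨n-1-d, by omega⟩ i := by
    intro d
    induction d with
    | zero =>
      intro _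
      exact cast2 (n-1) (n-1-0) (by omega) (by omega) i (by omega) (in2 i.val le_rfl)
    | succ d ih =>
      intro hd
      have prev := ih (by omega)
      obtain ⟨c1, c2⟩ := consec (n-1-(d+1)) (by omega)
      have prev' := cast2 (n-1-d) (n-1-(d+1)+1) (by omega) (by omega) i (by omega) prev
      have h3 : A i ⟨n-1-(d+1), by omega⟩ :=
        hL' i ⟨n-1-(d+1)+1, by omega⟩ ⟨n-1-(d+1), by omega⟩ prev'.1 prev'.2 c1 c2
      refine ⟨h3, fun hc => ?_⟩
      rcases eq_or_lt_of_le (show j.val ≤ n-1-(d+1) by omega) with he | hlt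
      · have hEq : (⟨n-1-(d+1), by omega⟩ : Fin n) = j := Fin.ext he.symm
        exact hA (hEq ▸ h3)
      · exact hA (horder i j ⟨n-1-(d+1), by omega⟩ hij (Fin.lt_def.mpr hlt) ⟨h3, hc⟩).1.1
  have fin := in3 (n-1-j.val) le_rfl
  exact hA (cast2 (n-1-(n-1-j.val)) j.val (by omega) j.isLt i (by omega) fin).1

/-- In a reflexive semicomplete digraph with no induced `R`, with
connected symmetric subdigraph, if the ordering `0,...,n-1` is a proper-interval
ordering for the symmetric arcs, then either the ordering or its reversal has the
property that earlier vertices dominate later vertices. -/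
theorem stmt1 {n : ℕ} (A : Fin n → Fin n → Prop)
    (hrefl : ∀ v, A v v)
    (hsemi : ∀ u v : Fin n, u ≠ v → A u v ∨ A v u)
    (hnoR : ¬ ∃ a b c : Fin n, a ≠ b ∧ a ≠ c ∧ b ≠ c ∧
      A a b ∧ A b c ∧ A c a ∧ A a c ∧ ¬ A b a ∧ ¬ A c b)
    (hconn : ∀ u v : Fin n, Relation.ReflTransGen (fun x y => A x y ∧ A y x) u v)
    (horder : ∀ i j k : Fin n, i < j → j < k → (A i k ∧ A k i) →
      (A i j ∧ A j i) ∧ (A j k ∧ A k j)) :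
    (∀ i j : Fin n, i < j → A i j) ∨ (∀ i j : Fin n, i < j → A j i) := by
  by_cases h : ∃ i j : Fin n, i < j ∧ A i j ∧ ¬ A j i
  · obtain ⟨p, q, h1, h2, h3⟩ := h
    exact Or.inl (master_aux A hrefl hsemi hnoR hconn horder p q h1 h2 h3)
  by_cases h' : ∃ i j : Fin n, i < j ∧ A j i ∧ ¬ A i j
  · obtain ⟨p, q, h1, h2, h3⟩ := h'
    right
    set B : Fin n → Fin n → Prop := fun x y => A x.rev y.rev with hB
    have Brefl : ∀ v, B v v := fun v => hrefl _
    have Bsemi : ∀ u v : Fin n, u ≠ v → B u v ∨ B v u := by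
      intro u v huv
      exact hsemi u.rev v.rev (fun hh => huv (Fin.rev_injective hh))
    have BnoR : ¬ ∃ a b c : Fin n, a ≠ b ∧ a ≠ c ∧ b ≠ c ∧
        B a b ∧ B b c ∧ B c a ∧ B a c ∧ ¬ B b a ∧ ¬ B c b := by
      rintro ⟨a, b, c, d1, d2, d3, e1, e2, e3, e4, e5, e6⟩
      exact hnoR ⟨a.rev, b.rev, c.rev, fun hh => d1 (Fin.rev_injective hh),
        fun hh => d2 (Fin.rev_injective hh), fun hh => d3 (Fin.rev_injective hh),
        e1, e2, e3, e4, e5, e6⟩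
    have Bconn : ∀ u v : Fin n, Relation.ReflTransGen (fun x y => B x y ∧ B y x) u v := by
      have key : ∀ a b : Fin n, Relation.ReflTransGen (fun x y => A x y ∧ A y x) a b →
          Relation.ReflTransGen (fun x y => B x y ∧ B y x) a.rev b.rev := by
        intro a b hab
        induction hab with
        | refl => exact Relation.ReflTransGen.refl
        | @tail x y hx hxy ih =>
          exact ih.tail (by simp only [hB, Fin.rev_rev]; exact hxy)
      intro u v
      have := key u.rev v.rev (hconn _ _)
      simpa [Fin.rev_rev] using this
    have Bord : ∀ i j k : Fin n, i < j → j < k → (B i k ∧ B k i) →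
        (B i j ∧ B j i) ∧ (B j k ∧ B k j) := by
      intro i j k hij hjk hik
      have := horder k.rev j.rev i.rev (Fin.rev_lt_rev.mpr hjk) (Fin.rev_lt_rev.mpr hij)
        ⟨hik.2, hik.1⟩
      exact ⟨⟨this.2.2, this.2.1⟩, ⟨this.1.2, this.1.1⟩⟩
    have hlt : q.rev < p.rev := Fin.rev_lt_rev.mpr h1
    have h2' : B q.rev p.rev := by simp only [hB, Fin.rev_rev]; exact h2
    have h3' : ¬ B p.rev q.rev := by simp only [hB, Fin.rev_rev]; exact h3
    have key := master_aux B Brefl Bsemi BnoR Bconn Bord q.rev p.rev hlt h2' h3'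
    intro i j hij
    have := key j.rev i.rev (Fin.rev_lt_rev.mpr hij)
    simpa [hB, Fin.rev_rev] using this
  push_neg at h'
  left
  intro i j hij
  rcases hsemi i j (Fin.ne_of_lt hij) with h1 | h1
  · exact h1
  · exact h' i j hij h1
end

section
/- Let H be a reflexive semicomplete digraph containing neither R nor the reflexive 3-cycle C*_3 as an induced subdigraph. Let S and T be two distinct connected components of the symmetric subdigraph H^sym. Then all arcs between S and T are asymmetric and oriented in the same direction: either every vertex of S strictly dominates every vertex of T, or every vertex of T strictly dominates every vertex of S. -/
private lemma stmt2_key {n : ℕ} (A : Fin n → Fin n → Prop)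
    (hrefl : ∀ v, A v v)
    (hsemi : ∀ u v : Fin n, u ≠ v → A u v ∨ A v u)
    (hnoR : ¬ ∃ a b c : Fin n, a ≠ b ∧ a ≠ c ∧ b ≠ c ∧
      A a b ∧ A b c ∧ A c a ∧ A a c ∧ ¬ A b a ∧ ¬ A c b)
    (s t : Fin n)
    (hst : ¬ Relation.ReflTransGen (fun x y => A x y ∧ A y x) s t)
    (hA : A s t) (hB : ¬ A t s) :
    ∀ u v : Fin n, Relation.ReflTransGen (fun x y => A x y ∧ A y x) s u →
        Relation.ReflTransGen (fun x y => A x y ∧ A y x) t v → A u v ∧ ¬ A v u := by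
  set B : Fin n → Fin n → Prop := fun x y => A x y ∧ A y x with hBdef
  have Bsymm : Symmetric B := fun x y h => ⟨h.2, h.1⟩
  have Rsymm : Symmetric (Relation.ReflTransGen B) :=
    fun x y h => (@Relation.ReflTransGen.symmetric _ _ ⟨fun a b h => Bsymm h⟩).symm x y h
  -- L1: strict domination propagates along a symmetric edge on the dominated side
  have L1 : ∀ x y z : Fin n, A x y → ¬ A y x → A y z → A z y →
      ¬ Relation.ReflTransGen B x z → A x z ∧ ¬ A z x := by
    intro x y z hxy hyx hyz hzy hconn
    by_cases hyz' : y = z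
    · subst hyz'; exact ⟨hxy, hyx⟩
    have hxz : x ≠ z := fun h => hconn (h ▸ Relation.ReflTransGen.refl)
    have hxy' : x ≠ y := fun h => hyx (h ▸ hxy)
    have hzx : ¬ A z x := by
      intro hzx
      by_cases hxz' : A x z
      · exact hconn (Relation.ReflTransGen.single ⟨hxz', hzx⟩)
      · exact hnoR ⟨z, x, y, hxz.symm, fun h => hyx (h ▸ hzx),
          hxy', hzx, hxy, hyz, hzy, hxz', hyx⟩
    rcases hsemi x z hxz with h | h
    · exact ⟨h, hzx⟩
    · exact absurd h hzx
  -- L2: strict domination propagates along a symmetric edge on the dominating side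
  have L2 : ∀ x y w : Fin n, A x y → ¬ A y x → A x w → A w x →
      ¬ Relation.ReflTransGen B w y → A w y ∧ ¬ A y w := by
    intro x y w hxy hyx hxw hwx hconn
    by_cases hxw' : x = w
    · subst hxw'; exact ⟨hxy, hyx⟩
    have hwy : w ≠ y := fun h => hconn (h ▸ Relation.ReflTransGen.refl)
    have hxy' : x ≠ y := fun h => hyx (h ▸ hxy)
    have hyw : ¬ A y w := by
      intro hyw
      by_cases hwy' : A w y
      · exact hconn (Relation.ReflTransGen.single ⟨hwy', hyw⟩)
      · exact hnoR ⟨x, y, w, hxy', hxw', hwy.symm, hxy, hyw, hwx, hxw, hyx, hwy'⟩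
    rcases hsemi w y hwy with h | h
    · exact ⟨h, hyw⟩
    · exact absurd h hyw
  -- step 1: s strictly dominates every v in t's component
  have step1 : ∀ v : Fin n, Relation.ReflTransGen B t v → A s v ∧ ¬ A v s := by
    intro v hv
    induction hv with
    | refl => exact ⟨hA, hB⟩
    | @tail b c hb hbc ih =>
        refine L1 s b c ih.1 ih.2 hbc.1 hbc.2 ?_
        intro h
        exact hst (h.trans ((Relation.ReflTransGen.single (Bsymm hbc)).trans (Rsymm hb)))
  intro u v hu hv
  induction hu with
  | refl => exact step1 v hv
  | @tail b c hb hbc ih =>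
      refine L2 b v c ih.1 ih.2 hbc.1 hbc.2 ?_
      intro h
      exact hst ((hb.trans (Relation.ReflTransGen.single hbc)).trans (h.trans (Rsymm hv)))

/-- In a reflexive semicomplete digraph with no induced `R` and no
induced reflexive 3-cycle, the arcs between two distinct components of the
symmetric subdigraph are all asymmetric and oriented the same way. -/
theorem stmt2 {n : ℕ} (A : Fin n → Fin n → Prop)
    (hrefl : ∀ v, A v v)
    (hsemi : ∀ u v : Fin n, u ≠ v → A u v ∨ A v u)
    (hnoR : ¬ ∃ a b c : Fin n, a ≠ b ∧ a ≠ c ∧ b ≠ c ∧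
      A a b ∧ A b c ∧ A c a ∧ A a c ∧ ¬ A b a ∧ ¬ A c b)
    (hnoC3 : ¬ ∃ a b c : Fin n, a ≠ b ∧ a ≠ c ∧ b ≠ c ∧
      A a b ∧ A b c ∧ A c a ∧ ¬ A b a ∧ ¬ A c b ∧ ¬ A a c)
    (s t : Fin n)
    (hst : ¬ Relation.ReflTransGen (fun x y => A x y ∧ A y x) s t) :
    (∀ u v : Fin n, Relation.ReflTransGen (fun x y => A x y ∧ A y x) s u →
        Relation.ReflTransGen (fun x y => A x y ∧ A y x) t v → A u v ∧ ¬ A v u) ∨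
    (∀ u v : Fin n, Relation.ReflTransGen (fun x y => A x y ∧ A y x) s u →
        Relation.ReflTransGen (fun x y => A x y ∧ A y x) t v → A v u ∧ ¬ A u v) := by
  have hne : s ≠ t := fun h => hst (h ▸ Relation.ReflTransGen.refl)
  have Rsymm : Symmetric (Relation.ReflTransGen (fun x y => A x y ∧ A y x)) :=
    fun x y h => (@Relation.ReflTransGen.symmetric _ _ ⟨fun x y h => ⟨h.2, h.1⟩⟩).symm x y h
  have hst' : ¬ Relation.ReflTransGen (fun x y => A x y ∧ A y x) t s :=
    fun h => hst (Rsymm h)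
  rcases hsemi s t hne with h | h
  · have h' : ¬ A t s := fun h' => hst (Relation.ReflTransGen.single ⟨h, h'⟩)
    exact Or.inl (stmt2_key A hrefl hsemi hnoR s t hst h h')
  · have h' : ¬ A s t := fun h' => hst (Relation.ReflTransGen.single ⟨h', h⟩)
    exact Or.inr (fun u v hu hv => stmt2_key A hrefl hsemi hnoR t s hst' h h' v u hv hu)
end

section
/- Let H be a reflexive semicomplete digraph containing neither R nor C*_3 as an induced subdigraph, such that the underlying graph of H^sym is a proper interval graph. Then the connected components of H^sym can be linearly ordered H_1, H_2, ..., H_l so that whenever u ∈ H_i, v ∈ H_j and i < j, u strictly dominates v. -/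
/-- In a reflexive semicomplete digraph with no induced `R`, no induced
reflexive 3-cycle, and whose symmetric subdigraph has proper interval underlying
graph, the components of the symmetric subdigraph can be linearly ordered so that
every vertex of an earlier component strictly dominates every vertex of a later one.
The component structure is encoded by a labeling `φ` constant exactly on components. -/
theorem stmt3 {n : ℕ} (A : Fin n → Fin n → Prop)
    (hrefl : ∀ v, A v v)
    (hsemi : ∀ u v : Fin n, u ≠ v → A u v ∨ A v u)
    (hnoR : ¬ ∃ a b c : Fin n, a ≠ b ∧ a ≠ c ∧ b ≠ c ∧
      A a b ∧ A b c ∧ A c a ∧ A a c ∧ ¬ A b a ∧ ¬ A c b)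
    (hnoC3 : ¬ ∃ a b c : Fin n, a ≠ b ∧ a ≠ c ∧ b ≠ c ∧
      A a b ∧ A b c ∧ A c a ∧ ¬ A b a ∧ ¬ A c b ∧ ¬ A a c)
    (hpin : ∃ σ : Equiv.Perm (Fin n), ∀ i j k : Fin n, i < j → j < k →
      (A (σ i) (σ k) ∧ A (σ k) (σ i)) →
      (A (σ i) (σ j) ∧ A (σ j) (σ i)) ∧ (A (σ j) (σ k) ∧ A (σ k) (σ j))) :
    ∃ φ : Fin n → ℕ,
      (∀ u v : Fin n,
        Relation.ReflTransGen (fun x y => A x y ∧ A y x) u v ↔ φ u = φ v) ∧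
      (∀ u v : Fin n, φ u < φ v → A u v ∧ ¬ A v u) := by
  classical
  set S : Fin n → Fin n → Prop := fun x y => A x y ∧ A y x with hSdef
  set D : Fin n → Fin n → Prop := fun x y => A x y ∧ ¬ A y x with hDdef
  set E : Fin n → Fin n → Prop := Relation.ReflTransGen S with hEdef
  have hSsymm : ∀ u v, S u v → S v u := fun u v h => ⟨h.2, h.1⟩
  have hEsymm : ∀ u v, E u v → E v u := fun u v h =>
    (@Relation.ReflTransGen.symmetric _ S ⟨fun x y h => hSsymm x y h⟩).symm u v h
  have hEtrans : ∀ {u v w}, E u v → E v w → E u w := fun h1 h2 =>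
    Relation.ReflTransGen.trans h1 h2
  -- vertices with D u v are distinct
  have hDne : ∀ u v, D u v → u ≠ v := by
    rintro u v ⟨_, hvu⟩ rfl; exact hvu (hrefl u)
  -- trichotomy
  have htri : ∀ u v, u ≠ v → ¬ S u v → D u v ∨ D v u := by
    intro u v huv hS
    rcases hsemi u v huv with h | h
    · by_cases h' : A v u
      · exact absurd ⟨h, h'⟩ hS
      · exact Or.inl ⟨h, h'⟩
    · by_cases h' : A u v
      · exact absurd ⟨h', h⟩ hS
      · exact Or.inr ⟨h, h'⟩
  -- transitivity of strict domination
  have hDtrans : ∀ u v w, D u v → D v w → D u w := by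
    rintro u v w ⟨huv, hvu⟩ ⟨hvw, hwv⟩
    have huw : u ≠ w := by rintro rfl; exact hvu hvw
    have huvne : u ≠ v := by rintro rfl; exact hvu (hrefl u)
    have hvwne : v ≠ w := by rintro rfl; exact hwv (hrefl v)
    by_cases h1 : A u w
    · by_cases h2 : A w u
      · exact absurd ⟨u, v, w, huvne, huw, hvwne, huv, hvw, h2, h1, hvu, hwv⟩ hnoR
      · exact ⟨h1, h2⟩
    · have h2 : A w u := (hsemi u w huw).resolve_left h1
      exact absurd ⟨u, v, w, huvne, huw, hvwne, huv, hvw, h2, hvu, hwv, h1⟩ hnoC3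
  -- one step of symmetric adjacency preserves domination of another component
  have hstep : ∀ u u' v, S u u' → ¬ E u v → D u v → D u' v := by
    rintro u u' v hS hnE ⟨huv, hvu⟩
    by_cases huu' : u = u'
    · subst huu'; exact ⟨huv, hvu⟩
    have huvne : u ≠ v := by rintro rfl; exact hvu (hrefl u)
    have hu'v : u' ≠ v := by rintro rfl; exact hvu hS.2
    have hnS : ¬ S u' v := by
      intro h
      exact hnE (Relation.ReflTransGen.tail (Relation.ReflTransGen.single hS) h)
    rcases htri u' v hu'v hnS with h | h
    · exact h
    · exact absurd ⟨u, v, u', huvne, huu', hu'v.symm ∘ Eq.symm ∘ Eq.symm ∘ id ∘ (fun x => x), huv, h.1, hS.2, hS.1, hvu, h.2⟩ hnoR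
  have hstep' : ∀ u u' v, S u u' → ¬ E v u → D v u → D v u' := by
    rintro u u' v hS hnE ⟨hvu, huv⟩
    by_cases huu' : u = u'
    · subst huu'; exact ⟨hvu, huv⟩
    have hvune : v ≠ u := by rintro rfl; exact huv (hrefl v)
    have hvu' : v ≠ u' := by
      rintro rfl
      exact hnE (Relation.ReflTransGen.single (hSsymm u v hS))
    have hnS : ¬ S v u' := by
      intro h
      exact hnE (Relation.ReflTransGen.tail (Relation.ReflTransGen.single h)
        (hSsymm u u' hS))
    rcases htri v u' hvu' hnS with h | h
    · exact h
    · exact absurd ⟨u', v, u, (Ne.symm hvu'), (Ne.symm huu'), hvune, h.1, hvu, hS.1, hS.2, h.2, huv⟩ hnoR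
  -- domination extends along symmetric paths
  have hEdom : ∀ u u' v, E u u' → ¬ E u v → D u v → D u' v := by
    intro u u' v h
    induction h with
    | refl => exact fun _ h => h
    | @tail b c hub hbc ih =>
      intro hnE hD
      have hnEb : ¬ E b v := fun h => hnE (hEtrans hub h)
      exact hstep b c v hbc hnEb (ih hnE hD)
  have hEdom' : ∀ u u' v, E u u' → ¬ E v u → D v u → D v u' := by
    intro u u' v h
    induction h with
    | refl => exact fun _ h => h
    | @tail b c hub hbc ih =>
      intro hnE hD
      have hnEb : ¬ E v b := fun h => hnE (hEtrans h (hEsymm u b hub))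
      exact hstep' b c v hbc hnEb (ih hnE hD)
  -- the labeling
  set φ : Fin n → ℕ := fun u => (Finset.univ.filter (fun w => D w u ∧ ¬ E w u)).card with hφ
  -- equal on components
  have heq : ∀ u v, E u v → φ u = φ v := by
    intro u v hE
    have hset : ∀ w, (D w u ∧ ¬ E w u) ↔ (D w v ∧ ¬ E w v) := by
      intro w
      constructor
      · rintro ⟨hD, hnE⟩
        have hnE' : ¬ E w v := fun h => hnE (hEtrans h (hEsymm u v hE))
        exact ⟨hEdom' u v w hE hnE hD, hnE'⟩
      · rintro ⟨hD, hnE⟩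
        have hnE' : ¬ E w u := fun h => hnE (hEtrans h hE)
        exact ⟨hEdom' v u w (hEsymm u v hE) hnE hD, hnE'⟩
    simp only [hφ]
    congr 1
    apply Finset.filter_congr
    intro w _
    simp [hset w]
  -- strict monotonicity across components
  have hmono : ∀ u v, ¬ E u v → D u v → φ u < φ v := by
    intro u v hnE hD
    apply Finset.card_lt_card
    constructor
    · intro w hw
      simp only [Finset.mem_filter, Finset.mem_univ, true_and] at hw ⊢
      obtain ⟨hDw, hnEw⟩ := hw
      have hnEwv : ¬ E w v := by
        intro h
        have : D v u := hEdom w v u h hnEw hDw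
        exact this.2 hD.1
      refine ⟨?_, hnEwv⟩
      have hwv : w ≠ v := by rintro rfl; exact hDw.2 hD.1
      have hnS : ¬ S w v := fun h => hnEwv (Relation.ReflTransGen.single h)
      rcases htri w v hwv hnS with h | h
      · exact h
      · exact absurd ((hDtrans u v w hD h).2) (fun h2 => h2 hDw.1)
    · intro hsub
      have hu : u ∈ Finset.univ.filter (fun w => D w v ∧ ¬ E w v) := by
        simp only [Finset.mem_filter, Finset.mem_univ, true_and]
        exact ⟨hD, hnE⟩
      have hu' := hsub hu
      simp only [Finset.mem_filter, Finset.mem_univ, true_and] at hu'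
      exact hu'.1.2 (hrefl u)
  refine ⟨φ, ?_, ?_⟩
  · intro u v
    constructor
    · exact heq u v
    · intro h
      by_contra hnE
      have huv : u ≠ v := by rintro rfl; exact hnE Relation.ReflTransGen.refl
      have hnS : ¬ S u v := fun h' => hnE (Relation.ReflTransGen.single h')
      rcases htri u v huv hnS with hD | hD
      · exact absurd h (Nat.ne_of_lt (hmono u v hnE hD))
      · exact absurd h.symm (Nat.ne_of_lt (hmono v u (fun h' => hnE (hEsymm v u h')) hD))
  · intro u v hlt
    by_cases hE : E u v
    · exact absurd (heq u v hE) (Nat.ne_of_lt hlt)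
    · have huv : u ≠ v := by rintro rfl; exact hE Relation.ReflTransGen.refl
      have hnS : ¬ S u v := fun h' => hE (Relation.ReflTransGen.single h')
      rcases htri u v huv hnS with hD | hD
      · exact hD
      · exact absurd hlt (Nat.lt_asymm (hmono v u (fun h' => hE (hEsymm v u h')) hD))
end

section
/- Let H be a reflexive semicomplete digraph containing neither R nor C*_3 as an induced subdigraph, such that the underlying graph of H^sym is a proper interval graph. Then the vertices of H can be ordered v_1,...,v_n so that (a) whenever i < j < k and v_i v_k is a symmetric arc, both v_i v_j and v_j v_k are symmetric arcs, and (b) v_i dominates v_j for every pair i < j. -/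
namespace Stmt4Aux

variable {n : ℕ}

/-- Bundle of hypotheses on a relation on `Fin n`, in "position space". -/
structure Gd (B : Fin n → Fin n → Prop) : Prop where
  refl : ∀ v, B v v
  semi : ∀ u v, u ≠ v → B u v ∨ B v u
  noR : ∀ a b c, B a b → ¬ B b a → B b c → ¬ B c b → B a c → B c a → False
  noC3 : ∀ a b c, B a b → ¬ B b a → B b c → ¬ B c b → B c a → ¬ B a c → False
  umb : ∀ i j k : Fin n, i < j → j < k → B i k → B k i →
    (B i j ∧ B j i) ∧ (B j k ∧ B k j)

def strR (B : Fin n → Fin n → Prop) (a b : Fin n) : Prop := B a b ∧ ¬ B b a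
def symR (B : Fin n → Fin n → Prop) (a b : Fin n) : Prop := B a b ∧ B b a
def CR (B : Fin n → Fin n → Prop) : Fin n → Fin n → Prop :=
  Relation.ReflTransGen (symR B)

variable {B : Fin n → Fin n → Prop}

lemma symR_symm {a b : Fin n} (h : symR B a b) : symR B b a := ⟨h.2, h.1⟩

lemma symR_symmetric : Symmetric (symR B) := fun _ _ h => symR_symm h

lemma CR_refl (a : Fin n) : CR B a a := Relation.ReflTransGen.refl

lemma CR_symm {a b : Fin n} (h : CR B a b) : CR B b a :=
  by haveI : Std.Symm (symR B) := ⟨fun _ _ h => symR_symm h⟩; exact Std.Symm.symm (r := Relation.ReflTransGen (symR B)) _ _ h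

lemma CR_trans {a b c : Fin n} (h : CR B a b) (h' : CR B b c) : CR B a c :=
  Relation.ReflTransGen.trans h h'

lemma CR_of_symR {a b : Fin n} (h : symR B a b) : CR B a b :=
  Relation.ReflTransGen.single h

lemma str_ne {a b : Fin n} (h : strR B a b) : a ≠ b := by
  rintro rfl; exact h.2 h.1

lemma str_trans (hg : Gd B) {a b c : Fin n} (h1 : strR B a b) (h2 : strR B b c) :
    strR B a c := by
  have hac : a ≠ c := by rintro rfl; exact h1.2 h2.1
  have hBac : B a c := by
    by_contra hn
    rcases hg.semi a c hac with h | h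
    · exact hn h
    · exact hg.noC3 a b c h1.1 h1.2 h2.1 h2.2 h hn
  refine ⟨hBac, fun hca => ?_⟩
  exact hg.noR a b c h1.1 h1.2 h2.1 h2.2 hBac hca

lemma umb' (hg : Gd B) {i j k : Fin n} (hij : i < j) (hjk : j < k)
    (h : symR B i k) : symR B i j ∧ symR B j k := by
  have := hg.umb i j k hij hjk h.1 h.2
  exact ⟨⟨this.1.1, this.1.2⟩, ⟨this.2.1, this.2.2⟩⟩

/-- transform: reverse positions -/
lemma Gd.revP (hg : Gd B) : Gd (fun i j => B (Fin.rev i) (Fin.rev j)) := by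
  constructor
  · intro v; exact hg.refl _
  · intro u v huv
    exact hg.semi _ _ (fun h => huv (Fin.rev_injective h))
  · exact fun a b c h1 h2 h3 h4 h5 h6 => hg.noR _ _ _ h1 h2 h3 h4 h5 h6
  · exact fun a b c h1 h2 h3 h4 h5 h6 => hg.noC3 _ _ _ h1 h2 h3 h4 h5 h6
  · intro i j k hij hjk h1 h2
    have := hg.umb (Fin.rev k) (Fin.rev j) (Fin.rev i)
      (Fin.rev_lt_rev.mpr hjk) (Fin.rev_lt_rev.mpr hij) h2 h1
    exact ⟨⟨this.2.2, this.2.1⟩, ⟨this.1.2, this.1.1⟩⟩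

/-- transform: reverse positions and transpose -/
lemma Gd.revT (hg : Gd B) : Gd (fun i j => B (Fin.rev j) (Fin.rev i)) := by
  constructor
  · intro v; exact hg.refl _
  · intro u v huv
    rcases hg.semi (Fin.rev u) (Fin.rev v)
      (fun h => huv (by simpa [Fin.rev_rev] using congrArg Fin.rev h)) with h | h
    · exact Or.inr h
    · exact Or.inl h
  · intro a b c h1 h2 h3 h4 h5 h6
    exact hg.noR (Fin.rev c) (Fin.rev b) (Fin.rev a) h3 h4 h1 h2 h5 h6
  · intro a b c h1 h2 h3 h4 h5 h6
    exact hg.noC3 (Fin.rev a) (Fin.rev c) (Fin.rev b) h5 h6 h3 h4 h1 h2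
  · intro i j k hij hjk h1 h2
    have := hg.umb (Fin.rev k) (Fin.rev j) (Fin.rev i)
      (Fin.rev_lt_rev.mpr hjk) (Fin.rev_lt_rev.mpr hij) h1 h2
    exact ⟨⟨this.2.1, this.2.2⟩, ⟨this.1.1, this.1.2⟩⟩

lemma CR_lift {B' : Fin n → Fin n → Prop} (g : Fin n → Fin n)
    (hmap : ∀ a b, symR B a b → symR B' (g a) (g b)) {x y : Fin n}
    (h : CR B x y) : CR B' (g x) (g y) :=
  Relation.ReflTransGen.lift g hmap _ _ h

/-- interval property of components -/
lemma INT (hg : Gd B) {x y z : Fin n} (h : CR B x y) (hxz : x ≤ z) (hzy : z ≤ y) :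
    CR B x z := by
  induction h with
  | refl =>
    cases le_antisymm hxz hzy
    exact CR_refl x
  | @tail w y hC hs ih =>
    rcases le_or_gt z w with hzw | hwz
    · exact ih hzw
    · rcases eq_or_lt_of_le hzy with rfl | hzy'
      · exact hC.tail hs
      · have := umb' hg hwz hzy' hs
        exact hC.tail this.1

/-- stepping stone to the right -/
lemma ADJ (hg : Gd B) {p q : Fin n} (h : CR B p q) (hpq : p < q) :
    ∃ w, p < w ∧ w ≤ q ∧ symR B p w ∧ CR B w q := by
  induction h with
  | refl => exact absurd hpq (lt_irrefl p)
  | @tail m q hC hs ih =>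
    rcases lt_trichotomy p m with hpm | rfl | hmp
    · obtain ⟨w, hpw, hwm, hsw, hCw⟩ := ih hpm
      have hCwq : CR B w q := hCw.tail hs
      rcases le_or_gt w q with hwq | hqw
      · exact ⟨w, hpw, hwq, hsw, hCwq⟩
      · have := umb' hg hpq hqw hsw
        exact ⟨q, hpq, le_refl q, this.1, CR_refl q⟩
    · exact ⟨q, hpq, le_refl q, hs, CR_refl q⟩
    · have := umb' hg hmp hpq hs
      exact ⟨q, hpq, le_refl q, this.2, CR_refl q⟩

/-- step of right propagation -/
lemma P1 (hg : Gd B) {u v w : Fin n} (h : strR B u v) (hs : symR B v w)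
    (huv : u < v) (hvw : v < w) : strR B u w := by
  have hwu : ¬ B w u := by
    intro hwu
    by_cases huw : B u w
    · have := umb' hg huv hvw ⟨huw, hwu⟩
      exact h.2 this.1.2
    · exact hg.noR w u v hwu huw h.1 h.2 hs.2 hs.1
  rcases hg.semi u w (ne_of_lt (huv.trans hvw)) with h' | h'
  · exact ⟨h', hwu⟩
  · exact absurd h' hwu

/-- right propagation -/
lemma GENR (hg : Gd B) : ∀ k (u v b : Fin n), (b : ℕ) - (v : ℕ) = k →
    strR B u v → u < v → CR B v b → v ≤ b → strR B u b := by
  intro k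
  induction k using Nat.strong_induction_on with
  | _ k ih =>
    intro u v b hk hs huv hC hvb
    rcases eq_or_lt_of_le hvb with rfl | hlt
    · exact hs
    · obtain ⟨w, hvw, hwb, hsym, hC'⟩ := ADJ hg hC hlt
      have hm : (b : ℕ) - (w : ℕ) < k := by
        have h1 : (v : ℕ) < (w : ℕ) := hvw
        have h2 : (w : ℕ) ≤ (b : ℕ) := hwb
        omega
      exact ih _ hm u w b rfl (P1 hg hs hsym huv hvw) (huv.trans hvw) hC' hwb

/-- left propagation, by transform -/
lemma GENL (hg : Gd B) {a u v : Fin n} (hs : strR B u v) (huv : u < v)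
    (hC : CR B a u) (hau : a ≤ u) : strR B a v := by
  have hg' : Gd (fun i j => B (Fin.rev j) (Fin.rev i)) := hg.revT
  have hmap : ∀ x y : Fin n, symR B x y →
      symR (fun i j => B (Fin.rev j) (Fin.rev i)) (Fin.rev x) (Fin.rev y) := by
    intro x y hxy
    constructor <;> simp only [Fin.rev_rev] <;> [exact hxy.2; exact hxy.1]
  have hC' : CR (fun i j => B (Fin.rev j) (Fin.rev i)) (Fin.rev u) (Fin.rev a) :=
    CR_lift _ hmap (CR_symm hC)
  have hres := GENR hg' _ (Fin.rev v) (Fin.rev u) (Fin.rev a) rfl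
    (by constructor <;> simp only [Fin.rev_rev] <;> [exact hs.1; exact hs.2])
    (Fin.rev_lt_rev.mpr huv) hC' (Fin.rev_le_rev.mpr hau)
  constructor
  · have := hres.1; simpa [Fin.rev_rev] using this
  · have := hres.2; simpa [Fin.rev_rev] using this

/-- full propagation of a forward strict arc -/
lemma FULL (hg : Gd B) {a u v b : Fin n} (hs : strR B u v) (huv : u < v)
    (hCa : CR B a u) (hau : a ≤ u) (hCb : CR B v b) (hvb : v ≤ b) :
    strR B a b := by
  have h1 : strR B u b := GENR hg _ u v b rfl hs huv hCb hvb
  exact GENL hg h1 (lt_of_lt_of_le huv hvb) hCa hau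

/-- full propagation of a backward strict arc -/
lemma FULLrev (hg : Gd B) {a p q b : Fin n} (hs : strR B q p) (hpq : p < q)
    (hCa : CR B p a) (hap : a ≤ p) (hCb : CR B q b) (hqb : q ≤ b) :
    strR B b a := by
  have hg' : Gd (fun i j => B (Fin.rev i) (Fin.rev j)) := hg.revP
  have hmap : ∀ x y : Fin n, symR B x y →
      symR (fun i j => B (Fin.rev i) (Fin.rev j)) (Fin.rev x) (Fin.rev y) := by
    intro x y hxy
    constructor <;> simp only [Fin.rev_rev] <;> [exact hxy.1; exact hxy.2]
  have hres := FULL hg' (a := Fin.rev b) (u := Fin.rev q) (v := Fin.rev p) (b := Fin.rev a)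
    (by constructor <;> simp only [Fin.rev_rev] <;> [exact hs.1; exact hs.2])
    (Fin.rev_lt_rev.mpr hpq)
    (CR_lift _ hmap (CR_symm hCb)) (Fin.rev_le_rev.mpr hqb)
    (CR_lift _ hmap hCa) (Fin.rev_le_rev.mpr hap)
  constructor
  · have := hres.1; simpa [Fin.rev_rev] using this
  · have := hres.2; simpa [Fin.rev_rev] using this

/-- no forward and backward strict arcs in a common component -/
lemma CONS (hg : Gd B) {u v p q : Fin n} (hCuv : CR B u v) (huv : u < v)
    (hsf : strR B u v) (hCup : CR B u p) (hCuq : CR B u q) (hpq : p < q)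
    (hsb : strR B q p) : False := by
  set a0 := min u p with ha0
  set b0 := max v q with hb0
  have hCa0u : CR B a0 u := by
    rcases min_cases u p with ⟨h1, _⟩ | ⟨h1, _⟩
    · rw [ha0, h1]; exact CR_refl u
    · rw [ha0, h1]; exact CR_symm hCup
  have hCa0p : CR B a0 p := by
    rcases min_cases u p with ⟨h1, _⟩ | ⟨h1, _⟩
    · rw [ha0, h1]; exact hCup
    · rw [ha0, h1]; exact CR_refl p
  have hCvb0 : CR B v b0 := by
    rcases max_cases v q with ⟨h1, _⟩ | ⟨h1, _⟩
    · rw [hb0, h1]; exact CR_refl v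
    · rw [hb0, h1]; exact CR_trans (CR_symm hCuv) hCuq
  have hCqb0 : CR B q b0 := by
    rcases max_cases v q with ⟨h1, _⟩ | ⟨h1, _⟩
    · rw [hb0, h1]; exact CR_trans (CR_symm hCuq) hCuv
    · rw [hb0, h1]; exact CR_refl q
  have h1 : strR B a0 b0 :=
    FULL hg hsf huv hCa0u (min_le_left u p) hCvb0 (le_max_left v q)
  have h2 : strR B b0 a0 :=
    FULLrev hg hsb hpq (CR_symm hCa0p) (min_le_right u p) hCqb0 (le_max_right v q)
  exact h1.2 h2.1

/-- moving the target of a cross-component strict arc within its component -/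
lemma moveTarget (hg : Gd B) {s a b : Fin n} (hs : strR B s a) (hn : ¬ CR B s a)
    (hC : CR B a b) : strR B s b ∧ ¬ CR B s b := by
  induction hC with
  | refl => exact ⟨hs, hn⟩
  | @tail w z hC hsym ih =>
    obtain ⟨ihs, ihn⟩ := ih
    have hnz : ¬ CR B s z := fun h => ihn (h.tail (symR_symm hsym))
    have hne : s ≠ z := by rintro rfl; exact hnz (CR_refl s)
    have hnsym : ¬ symR B s z := fun h => hnz (CR_of_symR h)
    have hnzs : ¬ B z s := by
      intro hzs
      by_cases hsz : B s z
      · exact hnsym ⟨hsz, hzs⟩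
      · exact hg.noR z s w hzs hsz ihs.1 ihs.2 hsym.2 hsym.1
    rcases hg.semi s z hne with h' | h'
    · exact ⟨⟨h', hnzs⟩, hnz⟩
    · exact absurd h' hnzs

/-- moving the source of a cross-component strict arc within its component -/
lemma moveSource (hg : Gd B) {a t b : Fin n} (hs : strR B a t) (hn : ¬ CR B a t)
    (hC : CR B a b) : strR B b t ∧ ¬ CR B b t := by
  induction hC with
  | refl => exact ⟨hs, hn⟩
  | @tail w z hC hsym ih =>
    obtain ⟨ihs, ihn⟩ := ih
    have hnz : ¬ CR B z t := fun h => ihn ((CR_of_symR hsym).trans h)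
    have hne : z ≠ t := by rintro rfl; exact hnz (CR_refl z)
    have hnsym : ¬ symR B z t := fun h => hnz (CR_of_symR h)
    have hntz : ¬ B t z := by
      intro htz
      by_cases hzt : B z t
      · exact hnsym ⟨hzt, htz⟩
      · exact hg.noR w t z ihs.1 ihs.2 htz hzt hsym.1 hsym.2
    rcases hg.semi z t hne with h' | h'
    · exact ⟨⟨h', hntz⟩, hnz⟩
    · exact absurd h' hntz

/-- the component of `x` contains a backward strict arc -/
def revCp (B : Fin n → Fin n → Prop) (x : Fin n) : Prop :=
  ∃ p q, CR B x p ∧ CR B x q ∧ p < q ∧ strR B q p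

lemma revCp_congr {x y : Fin n} (h : CR B x y) : revCp B x ↔ revCp B y := by
  constructor
  · rintro ⟨p, q, h1, h2, h3, h4⟩
    exact ⟨p, q, (CR_symm h).trans h1, (CR_symm h).trans h2, h3, h4⟩
  · rintro ⟨p, q, h1, h2, h3, h4⟩
    exact ⟨p, q, h.trans h1, h.trans h2, h3, h4⟩

/-- the final strict total order -/
def prec (B : Fin n → Fin n → Prop) (x y : Fin n) : Prop :=
  (¬ CR B x y ∧ strR B x y) ∨
  (CR B x y ∧ x ≠ y ∧ ((revCp B x ∧ y < x) ∨ (¬ revCp B x ∧ x < y)))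

lemma prec_irrefl (x : Fin n) : ¬ prec B x x := by
  rintro (⟨h, _⟩ | ⟨_, h, _⟩)
  · exact h (CR_refl x)
  · exact h rfl

lemma prec_total (hg : Gd B) {x y : Fin n} (hne : x ≠ y) :
    prec B x y ∨ prec B y x := by
  by_cases hC : CR B x y
  · by_cases hr : revCp B x
    · rcases lt_or_gt_of_ne hne with h | h
      · exact Or.inr (Or.inr ⟨CR_symm hC, hne.symm,
          Or.inl ⟨(revCp_congr hC).mp hr, h⟩⟩)
      · exact Or.inl (Or.inr ⟨hC, hne, Or.inl ⟨hr, h⟩⟩)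
    · rcases lt_or_gt_of_ne hne with h | h
      · exact Or.inl (Or.inr ⟨hC, hne, Or.inr ⟨hr, h⟩⟩)
      · exact Or.inr (Or.inr ⟨CR_symm hC, hne.symm,
          Or.inr ⟨fun h' => hr ((revCp_congr hC).mpr h'), h⟩⟩)
  · have hnsym : ¬ symR B x y := fun h => hC (CR_of_symR h)
    have hC' : ¬ CR B y x := fun h => hC (CR_symm h)
    rcases hg.semi x y hne with h | h
    · have : ¬ B y x := fun h' => hnsym ⟨h, h'⟩
      exact Or.inl (Or.inl ⟨hC, h, this⟩)
    · have : ¬ B x y := fun h' => hnsym ⟨h', h⟩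
      exact Or.inr (Or.inl ⟨hC', h, this⟩)

lemma prec_trans (hg : Gd B) {x y z : Fin n} (h1 : prec B x y) (h2 : prec B y z) :
    prec B x z := by
  rcases h1 with ⟨hn1, hs1⟩ | ⟨hC1, hne1, hw1⟩
  · rcases h2 with ⟨hn2, hs2⟩ | ⟨hC2, hne2, hw2⟩
    · -- both cross
      have hnxz : ¬ CR B x z := by
        intro hxz
        have := moveTarget hg hs2 hn2 (CR_symm hxz)
        exact this.1.2 hs1.1
      exact Or.inl ⟨hnxz, str_trans hg hs1 hs2⟩
    · -- cross then within
      exact Or.inl ⟨(moveTarget hg hs1 hn1 hC2).2, (moveTarget hg hs1 hn1 hC2).1⟩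
  · rcases h2 with ⟨hn2, hs2⟩ | ⟨hC2, hne2, hw2⟩
    · -- within then cross
      exact Or.inl ⟨(moveSource hg hs2 hn2 (CR_symm hC1)).2,
        (moveSource hg hs2 hn2 (CR_symm hC1)).1⟩
    · -- both within
      have hCxz : CR B x z := hC1.trans hC2
      have hrxy : revCp B x ↔ revCp B y := revCp_congr hC1
      rcases hw1 with ⟨hr, hlt1⟩ | ⟨hr, hlt1⟩
      · rcases hw2 with ⟨_, hlt2⟩ | ⟨hr2, _⟩
        · exact Or.inr ⟨hCxz, ne_of_gt (hlt2.trans hlt1), Or.inl ⟨hr, hlt2.trans hlt1⟩⟩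
        · exact absurd (hrxy.mp hr) hr2
      · rcases hw2 with ⟨hr2, _⟩ | ⟨_, hlt2⟩
        · exact absurd ((hrxy.symm).mp hr2) hr
        · exact Or.inr ⟨hCxz, ne_of_lt (hlt1.trans hlt2), Or.inr ⟨hr, hlt1.trans hlt2⟩⟩

/-- domination along `prec` -/
lemma prec_dom (hg : Gd B) {x y : Fin n} (h : prec B x y) : B x y := by
  rcases h with ⟨_, hs⟩ | ⟨hC, hne, hw⟩
  · exact hs.1
  rcases hw with ⟨hr, hlt⟩ | ⟨hr, hlt⟩
  · -- reversed component, y < x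
    by_contra hnxy
    have hyx : B y x := (hg.semi y x hne.symm).resolve_right hnxy
    have hsf : strR B y x := ⟨hyx, hnxy⟩
    obtain ⟨p, q, hp, hq, hpq, hsb⟩ := hr
    exact CONS hg (CR_symm hC) hlt hsf ((CR_symm hC).trans hp)
      ((CR_symm hC).trans hq) hpq hsb
  · -- forward component, x < y
    by_contra hnxy
    have hyx : B y x := (hg.semi y x hne.symm).resolve_right hnxy
    exact hr ⟨x, y, CR_refl x, hC, hlt, ⟨hyx, hnxy⟩⟩

/-- umbrella property along `prec` -/
lemma prec_umb (hg : Gd B) {x y z : Fin n} (h1 : prec B x y) (h2 : prec B y z)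
    (hs : symR B x z) : symR B x y ∧ symR B y z := by
  have hCxz : CR B x z := CR_of_symR hs
  have hCxy : CR B x y := by
    rcases h1 with ⟨hn1, hs1⟩ | ⟨hC1, _, _⟩
    · exfalso
      rcases h2 with ⟨hn2, hs2⟩ | ⟨hC2, _, _⟩
      · have := moveTarget hg hs2 hn2 (CR_symm hCxz)
        exact this.1.2 hs1.1
      · exact hn1 (hCxz.trans (CR_symm hC2))
    · exact hC1
  have hCyz : CR B y z := (CR_symm hCxy).trans hCxz
  have hw1 : x ≠ y ∧ ((revCp B x ∧ y < x) ∨ (¬ revCp B x ∧ x < y)) := by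
    rcases h1 with ⟨hn1, _⟩ | ⟨_, hne1, hw1⟩
    · exact absurd hCxy hn1
    · exact ⟨hne1, hw1⟩
  have hw2 : y ≠ z ∧ ((revCp B y ∧ z < y) ∨ (¬ revCp B y ∧ y < z)) := by
    rcases h2 with ⟨hn2, _⟩ | ⟨_, hne2, hw2⟩
    · exact absurd hCyz hn2
    · exact ⟨hne2, hw2⟩
  have hrxy : revCp B x ↔ revCp B y := revCp_congr hCxy
  rcases hw1.2 with ⟨hr, hlt1⟩ | ⟨hr, hlt1⟩
  · rcases hw2.2 with ⟨_, hlt2⟩ | ⟨hr2, _⟩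
    · have := umb' hg hlt2 hlt1 (symR_symm hs)
      exact ⟨symR_symm this.2, symR_symm this.1⟩
    · exact absurd (hrxy.mp hr) hr2
  · rcases hw2.2 with ⟨hr2, _⟩ | ⟨_, hlt2⟩
    · exact absurd (hrxy.symm.mp hr2) hr
    · exact umb' hg hlt1 hlt2 hs

open Classical in
/-- the counting function -/
noncomputable def cnt (B : Fin n → Fin n → Prop) (v : Fin n) : ℕ :=
  (Finset.univ.filter fun u => prec B u v).card

open Classical in
lemma cnt_mono (hg : Gd B) {a b : Fin n} (h : prec B a b) : cnt B a < cnt B b := by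
  classical
  apply Finset.card_lt_card
  rw [Finset.ssubset_iff_of_subset]
  · exact ⟨a, by simp [h], by simp [prec_irrefl]⟩
  · intro u hu
    simp only [Finset.mem_filter, Finset.mem_univ, true_and] at hu ⊢
    exact prec_trans hg hu h

open Classical in
lemma cnt_lt_n (v : Fin n) : cnt B v < n := by
  classical
  have : (Finset.univ.filter fun u => prec B u v) ⊂ Finset.univ := by
    rw [Finset.ssubset_iff_of_subset (Finset.subset_univ _)]
    exact ⟨v, Finset.mem_univ v, by simp [prec_irrefl]⟩
  have := Finset.card_lt_card this
  unfold cnt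
  simpa using this

/-- main construction: a permutation realizing `prec` -/
lemma main (hg : Gd B) : ∃ π : Equiv.Perm (Fin n),
    ∀ i j : Fin n, i < j → prec B (π i) (π j) := by
  classical
  set g : Fin n → Fin n := fun v => ⟨cnt B v, cnt_lt_n v⟩ with hgdef
  have hginj : Function.Injective g := by
    intro a b hab
    by_contra hne
    have hc : cnt B a = cnt B b := congrArg Fin.val hab
    rcases prec_total hg hne with h | h
    · exact absurd hc (ne_of_lt (cnt_mono hg h))
    · exact absurd hc.symm (ne_of_lt (cnt_mono hg h))
  have hgbij : Function.Bijective g := (Finite.injective_iff_bijective).mp hginj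
  set e : Fin n ≃ Fin n := Equiv.ofBijective g hgbij with hedef
  refine ⟨e.symm, fun i j hij => ?_⟩
  have h1 : g (e.symm i) = i := e.apply_symm_apply i
  have h2 : g (e.symm j) = j := e.apply_symm_apply j
  have hne : e.symm i ≠ e.symm j := fun h => (ne_of_lt hij) (by rw [← h1, ← h2, h])
  rcases prec_total hg hne with h | h
  · exact h
  · exfalso
    have := cnt_mono hg h
    have hv1 : cnt B (e.symm i) = (i : ℕ) := congrArg Fin.val h1
    have hv2 : cnt B (e.symm j) = (j : ℕ) := congrArg Fin.val h2
    rw [hv1, hv2] at this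
    exact absurd hij (not_lt.mpr (le_of_lt this))

end Stmt4Aux

/-- A reflexive semicomplete digraph with no induced `R`, no induced
reflexive 3-cycle, and proper interval underlying graph of its symmetric subdigraph,
admits an ordering in which symmetric arcs satisfy the umbrella condition and every
earlier vertex dominates every later vertex. -/
theorem stmt4 {n : ℕ} (A : Fin n → Fin n → Prop)
    (hrefl : ∀ v, A v v)
    (hsemi : ∀ u v : Fin n, u ≠ v → A u v ∨ A v u)
    (hnoR : ¬ ∃ a b c : Fin n, a ≠ b ∧ a ≠ c ∧ b ≠ c ∧
      A a b ∧ A b c ∧ A c a ∧ A a c ∧ ¬ A b a ∧ ¬ A c b)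
    (hnoC3 : ¬ ∃ a b c : Fin n, a ≠ b ∧ a ≠ c ∧ b ≠ c ∧
      A a b ∧ A b c ∧ A c a ∧ ¬ A b a ∧ ¬ A c b ∧ ¬ A a c)
    (hpin : ∃ σ : Equiv.Perm (Fin n), ∀ i j k : Fin n, i < j → j < k →
      (A (σ i) (σ k) ∧ A (σ k) (σ i)) →
      (A (σ i) (σ j) ∧ A (σ j) (σ i)) ∧ (A (σ j) (σ k) ∧ A (σ k) (σ j))) :
    ∃ σ : Equiv.Perm (Fin n),
      (∀ i j k : Fin n, i < j → j < k → (A (σ i) (σ k) ∧ A (σ k) (σ i)) →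
        (A (σ i) (σ j) ∧ A (σ j) (σ i)) ∧ (A (σ j) (σ k) ∧ A (σ k) (σ j))) ∧
      (∀ i j : Fin n, i < j → A (σ i) (σ j)) := by
  obtain ⟨σ₀, hσ₀⟩ := hpin
  set B : Fin n → Fin n → Prop := fun i j => A (σ₀ i) (σ₀ j) with hB
  have hg : Stmt4Aux.Gd B := by
    constructor
    · intro v; exact hrefl _
    · intro u v huv; exact hsemi _ _ (fun h => huv (σ₀.injective h))
    · intro a b c h1 h2 h3 h4 h5 h6
      have hab : a ≠ b := by rintro rfl; exact h2 h1
      have hbc : b ≠ c := by rintro rfl; exact h4 h3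
      have hac : a ≠ c := by rintro rfl; exact h4 h1
      exact hnoR ⟨σ₀ a, σ₀ b, σ₀ c, σ₀.injective.ne hab, σ₀.injective.ne hac,
        σ₀.injective.ne hbc, h1, h3, h6, h5, h2, h4⟩
    · intro a b c h1 h2 h3 h4 h5 h6
      have hab : a ≠ b := by rintro rfl; exact h2 h1
      have hbc : b ≠ c := by rintro rfl; exact h4 h3
      have hac : a ≠ c := by rintro rfl; exact h6 (hrefl _)
      exact hnoC3 ⟨σ₀ a, σ₀ b, σ₀ c, σ₀.injective.ne hab, σ₀.injective.ne hac,
        σ₀.injective.ne hbc, h1, h3, h5, h2, h4, h6⟩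
    · intro i j k hij hjk h1 h2
      exact hσ₀ i j k hij hjk ⟨h1, h2⟩
  obtain ⟨π, hπ⟩ := Stmt4Aux.main hg
  refine ⟨π.trans σ₀, ?_, ?_⟩
  · intro i j k hij hjk hsym
    have h1 := hπ i j hij
    have h2 := hπ j k hjk
    have hs : Stmt4Aux.symR B (π i) (π k) := ⟨hsym.1, hsym.2⟩
    have := Stmt4Aux.prec_umb hg h1 h2 hs
    exact ⟨⟨this.1.1, this.1.2⟩, ⟨this.2.1, this.2.2⟩⟩
  · intro i j hij
    exact Stmt4Aux.prec_dom hg (hπ i j hij)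
end

section
/- Let H be a reflexive semicomplete digraph containing neither R nor C*_3 as an induced subdigraph, such that the underlying graph of H^sym is a proper interval graph. Then H has a Min-Max ordering: an ordering v_1,...,v_n of V(H) such that for any two arcs v_i v_k and v_j v_s of H, both v_{min(i,j)} v_{min(k,s)} and v_{max(i,j)} v_{max(k,s)} are arcs of H. -/
namespace Stmt5

variable {n : ℕ}

/-- symmetric pair (edge) -/
def Ed (B : Fin n → Fin n → Prop) (u v : Fin n) : Prop := B u v ∧ B v u
/-- one-way arc -/
def Ow (B : Fin n → Fin n → Prop) (u v : Fin n) : Prop := B u v ∧ ¬ B v u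
/-- reachability via symmetric edges (same component) -/
def Rc (B : Fin n → Fin n → Prop) : Fin n → Fin n → Prop := Relation.ReflTransGen (Ed B)
/-- component contains a "leftward" one-way arc -/
def Rev (B : Fin n → Fin n → Prop) (u : Fin n) : Prop :=
  ∃ p q : Fin n, Rc B u p ∧ Rc B u q ∧ q < p ∧ Ow B p q
/-- the new strict order -/
def Lt' (B : Fin n → Fin n → Prop) (u v : Fin n) : Prop :=
  (Rc B u v ∧ ((Rev B u ∧ v < u) ∨ (¬ Rev B u ∧ u < v))) ∨ (¬ Rc B u v ∧ Ow B u v)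

structure Good (B : Fin n → Fin n → Prop) : Prop where
  refl : ∀ v, B v v
  semi : ∀ u v : Fin n, u ≠ v → B u v ∨ B v u
  t : ∀ a b c, Ow B a b → Ow B b c → ¬ B c a
  umb : ∀ i j k : Fin n, i < j → j < k → Ed B i k → Ed B i j ∧ Ed B j k

variable {B : Fin n → Fin n → Prop}

lemma ed_symm {u v : Fin n} (h : Ed B u v) : Ed B v u := ⟨h.2, h.1⟩

lemma ed_refl (hG : Good B) (v : Fin n) : Ed B v v := ⟨hG.refl v, hG.refl v⟩

lemma ow_ne {u v : Fin n} (h : Ow B u v) : u ≠ v := fun he => h.2 (he ▸ h.1)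

lemma ow_not_ed {u v : Fin n} (h : Ow B u v) : ¬ Ed B u v := fun he => h.2 he.2

lemma rc_symm {u v : Fin n} (h : Rc B u v) : Rc B v u := by
  induction h with
  | refl => exact Relation.ReflTransGen.refl
  | tail _ e ih => exact Relation.ReflTransGen.head (ed_symm e) ih

/-- composition of one-way arcs -/
lemma tcomp (hG : Good B) {a b c : Fin n} (h1 : Ow B a b) (h2 : Ow B b c) :
    Ow B a c ∧ ¬ Ed B a c := by
  have hca : ¬ B c a := hG.t a b c h1 h2
  have hac : a ≠ c := by rintro rfl; exact hca (hG.refl a)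
  have hBac : B a c := (hG.semi a c hac).resolve_right hca
  exact ⟨⟨hBac, hca⟩, fun he => hca he.2⟩

/-- sub-edge lemma from umbrella-freeness -/
lemma SE (hG : Good B) {p q x y : Fin n} (hpq : Ed B p q) (hpx : p ≤ x) (hxy : x < y)
    (hyq : y ≤ q) : Ed B x y := by
  have hxq : Ed B x q := by
    rcases eq_or_lt_of_le hpx with rfl | h
    · exact hpq
    · exact (hG.umb p x q h (lt_of_lt_of_le hxy hyq) hpq).2
  rcases eq_or_lt_of_le hyq with rfl | h
  · exact hxq
  · exact (hG.umb x y q hxy h hxq).1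

lemma crossing (x z t : Fin n) (h : Rc B x t) : x ≤ z → z < t →
    ∃ a b : Fin n, Ed B a b ∧ a ≤ z ∧ z < b := by
  induction h with
  | refl => intro h1 h2; exact absurd (lt_of_le_of_lt h1 h2) (lt_irrefl x)
  | @tail b c _ e ih =>
    intro hxz hzt
    by_cases hc : z < b
    · exact ih hxz hc
    · exact ⟨b, c, e, le_of_not_gt hc, hzt⟩

lemma consec (hG : Good B) {s t : Fin n} (m : Fin n) (hrc : Rc B s t) (h1 : s ≤ m)
    (h2 : m < t) (h3 : m.1 + 1 < n) : Ed B m ⟨m.1 + 1, h3⟩ := by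
  obtain ⟨a, b, hab, haz, hzb⟩ := crossing s m t hrc h1 h2
  refine SE hG hab haz (Fin.lt_def.mpr (Nat.lt_succ_self m.1)) (Fin.le_def.mpr ?_)
  exact Fin.lt_def.mp hzb

/-- move the right endpoint of a one-way arc across an edge -/
lemma moveR (hG : Good B) {α β β' : Fin n} (h1 : Ow B α β) (h2 : Ed B β β')
    (h3 : ¬ Ed B α β') : Ow B α β' := by
  have hne : α ≠ β' := by rintro rfl; exact h3 (ed_refl hG α)
  by_cases hb : B β' α
  · have hab : ¬ B α β' := fun h => h3 ⟨h, hb⟩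
    have := tcomp hG ⟨hb, hab⟩ h1
    exact absurd (ed_symm h2) this.2
  · exact ⟨(hG.semi α β' hne).resolve_right hb, hb⟩

/-- move the left endpoint of a one-way arc across an edge -/
lemma moveL (hG : Good B) {α α' β : Fin n} (h1 : Ow B α β) (h2 : Ed B α α')
    (h3 : ¬ Ed B α' β) : Ow B α' β := by
  have hne : α' ≠ β := fun he => h3 (he ▸ ed_refl hG α')
  by_cases hb : B β α'
  · have hab : ¬ B α' β := fun h => h3 ⟨h, hb⟩
    have := tcomp hG h1 ⟨hb, hab⟩
    exact absurd h2 this.2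
  · exact ⟨(hG.semi α' β hne).resolve_right hb, hb⟩

lemma chain_up (P : Fin n → Prop) :
    ∀ (k : ℕ) (s t : Fin n), t.1 - s.1 = k → s ≤ t → P s →
      (∀ m : Fin n, s ≤ m → m < t → P m → ∀ h : m.1 + 1 < n, P ⟨m.1 + 1, h⟩) → P t := by
  intro k
  induction k with
  | zero =>
    intro s t hk hst hs _
    have hst' := Fin.le_def.mp hst
    have : s = t := Fin.ext (by omega)
    exact this ▸ hs
  | succ k ih =>
    intro s t hk hst hs step
    have hlt : s.1 < t.1 := by omega
    have h1 : s.1 + 1 < n := Nat.lt_of_le_of_lt hlt t.isLt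
    refine ih ⟨s.1 + 1, h1⟩ t (show t.1 - (s.1 + 1) = k by omega)
      (Fin.le_def.mpr hlt) (step s le_rfl (Fin.lt_def.mpr hlt) hs h1) ?_
    intro m hm hmt
    exact step m (le_trans (Fin.le_def.mpr (Nat.le_succ _)) hm) hmt

lemma chain_down (P : Fin n → Prop) :
    ∀ (k : ℕ) (s t : Fin n), t.1 - s.1 = k → s ≤ t → P t →
      (∀ m : Fin n, s < m → m ≤ t → P m →
        P ⟨m.1 - 1, Nat.lt_of_le_of_lt (Nat.sub_le _ _) m.isLt⟩) → P s := by
  intro k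
  induction k with
  | zero =>
    intro s t hk hst ht _
    have hst' := Fin.le_def.mp hst
    have : s = t := Fin.ext (by omega)
    exact this ▸ ht
  | succ k ih =>
    intro s t hk hst ht step
    have hlt : s.1 < t.1 := by omega
    have ht' := step t (Fin.lt_def.mpr hlt) le_rfl ht
    refine ih s ⟨t.1 - 1, Nat.lt_of_le_of_lt (Nat.sub_le _ _) t.isLt⟩
      (show t.1 - 1 - s.1 = k by omega) (Fin.le_def.mpr (show s.1 ≤ t.1 - 1 by omega)) ht' ?_
    intro m hsm hmt hPm
    exact step m hsm (le_trans hmt (Fin.le_def.mpr (Nat.sub_le _ _))) hPm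

/-- slide the right endpoint of a one-way arc upward -/
lemma climbR (hG : Good B) {α s t : Fin n} (h : Ow B α s) (hst : s ≤ t) (hrc : Rc B s t)
    (hnadj : ∀ m : Fin n, s ≤ m → m ≤ t → ¬ Ed B α m) : Ow B α t := by
  refine chain_up (fun m => Ow B α m) (t.1 - s.1) s t rfl hst h ?_
  intro m hm1 hm2 hP hh
  have hed : Ed B m ⟨m.1 + 1, hh⟩ := consec hG m hrc hm1 hm2 hh
  refine moveR hG hP hed (hnadj ⟨m.1 + 1, hh⟩ (le_trans hm1 (Fin.le_def.mpr (Nat.le_succ _)))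
    (Fin.le_def.mpr (Fin.lt_def.mp hm2)))

/-- slide the right endpoint of a one-way arc downward -/
lemma descR (hG : Good B) {α s t : Fin n} (h : Ow B α t) (hst : s ≤ t) (hrc : Rc B s t)
    (hnadj : ∀ m : Fin n, s ≤ m → m ≤ t → ¬ Ed B α m) : Ow B α s := by
  refine chain_down (fun m => Ow B α m) (t.1 - s.1) s t rfl hst h ?_
  intro m hm1 hm2 hP
  have hms : s.1 < m.1 := Fin.lt_def.mp hm1
  set m' : Fin n := ⟨m.1 - 1, Nat.lt_of_le_of_lt (Nat.sub_le _ _) m.isLt⟩ with hm'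
  have hh : m'.1 + 1 < n := by have := m.isLt; simp [hm']; omega
  have hed : Ed B m' ⟨m'.1 + 1, hh⟩ :=
    consec hG m' hrc (Fin.le_def.mpr (by simp [hm']; omega))
      (Fin.lt_def.mpr (by have := Fin.le_def.mp hm2; have := Fin.lt_def.mp hm1; simp [hm']; omega)) hh
  have heq : (⟨m'.1 + 1, hh⟩ : Fin n) = m := Fin.ext (by simp [hm']; omega)
  rw [heq] at hed
  exact moveR hG hP (ed_symm hed)
    (hnadj m' (Fin.le_def.mpr (by simp [hm']; omega))
      (le_trans (Fin.le_def.mpr (Nat.sub_le _ _)) hm2))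

/-- slide the left endpoint of a one-way arc upward -/
lemma climbL (hG : Good B) {β s t : Fin n} (h : Ow B s β) (hst : s ≤ t) (hrc : Rc B s t)
    (hnadj : ∀ m : Fin n, s ≤ m → m ≤ t → ¬ Ed B m β) : Ow B t β := by
  refine chain_up (fun m => Ow B m β) (t.1 - s.1) s t rfl hst h ?_
  intro m hm1 hm2 hP hh
  have hed : Ed B m ⟨m.1 + 1, hh⟩ := consec hG m hrc hm1 hm2 hh
  refine moveL hG hP hed (hnadj ⟨m.1 + 1, hh⟩ (le_trans hm1 (Fin.le_def.mpr (Nat.le_succ _)))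
    (Fin.le_def.mpr (Fin.lt_def.mp hm2)))

/-- slide the left endpoint of a one-way arc downward -/
lemma descL (hG : Good B) {β s t : Fin n} (h : Ow B t β) (hst : s ≤ t) (hrc : Rc B s t)
    (hnadj : ∀ m : Fin n, s ≤ m → m ≤ t → ¬ Ed B m β) : Ow B s β := by
  refine chain_down (fun m => Ow B m β) (t.1 - s.1) s t rfl hst h ?_
  intro m hm1 hm2 hP
  have hms : s.1 < m.1 := Fin.lt_def.mp hm1
  set m' : Fin n := ⟨m.1 - 1, Nat.lt_of_le_of_lt (Nat.sub_le _ _) m.isLt⟩ with hm'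
  have hh : m'.1 + 1 < n := by have := m.isLt; simp [hm']; omega
  have hed : Ed B m' ⟨m'.1 + 1, hh⟩ :=
    consec hG m' hrc (Fin.le_def.mpr (by simp [hm']; omega))
      (Fin.lt_def.mpr (by have := Fin.le_def.mp hm2; have := Fin.lt_def.mp hm1; simp [hm']; omega)) hh
  have heq : (⟨m'.1 + 1, hh⟩ : Fin n) = m := Fin.ext (by simp [hm']; omega)
  rw [heq] at hed
  exact moveL hG hP (ed_symm hed)
    (hnadj m' (Fin.le_def.mpr (by simp [hm']; omega))
      (le_trans (Fin.le_def.mpr (Nat.sub_le _ _)) hm2))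

/-- Two one-way arcs of opposite direction cannot live in the same component. -/
lemma claimA (hG : Good B) {u w p q : Fin n} (huw : u < w) (how : Ow B u w)
    (hqp : q < p) (hopq : Ow B p q)
    (r1 : Rc B u w) (r2 : Rc B u p) (r3 : Rc B u q) : False := by
  have nadj_u : ∀ m : Fin n, w ≤ m → ¬ Ed B u m :=
    fun m hm he => ow_not_ed how (SE hG he le_rfl huw hm)
  have nadj_q : ∀ m : Fin n, p ≤ m → ¬ Ed B q m :=
    fun m hm he => ow_not_ed hopq (ed_symm (SE hG he le_rfl hqp hm))
  rcases le_total w p with hwp | hpw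
  · -- hub is p
    have rwp : Rc B w p := (rc_symm r1).trans r2
    have s1 : Ow B u p := climbR hG how hwp rwp (fun m hm _ => nadj_u m hm)
    have hup : u < p := lt_of_lt_of_le huw hwp
    have hEqp : ¬ Ed B q p := fun he => ow_not_ed hopq (ed_symm he)
    have nadj2 : ∀ m : Fin n, ¬ Ed B m p ∨ (¬ (m ≤ u) ∧ ¬ (m ≤ q)) := by
      intro m
      by_cases h : m ≤ u
      · exact Or.inl (fun he => ow_not_ed s1 (SE hG he h hup le_rfl))
      · by_cases h2 : m ≤ q
        · exact Or.inl (fun he => hEqp (SE hG he h2 hqp le_rfl))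
        · exact Or.inr ⟨h, h2⟩
    have nadj3 : ∀ m : Fin n, m ≤ u ∨ m ≤ q → ¬ Ed B m p := by
      intro m hm
      rcases nadj2 m with h | h
      · exact h
      · rcases hm with hm | hm
        · exact absurd hm h.1
        · exact absurd hm h.2
    have s2 : Ow B q p := by
      rcases le_total u q with h | h
      · exact climbL hG s1 h r3 (fun m _ hm2 => nadj3 m (Or.inr hm2))
      · exact descL hG s1 h (rc_symm r3) (fun m _ hm2 => nadj3 m (Or.inl hm2))
    exact hopq.2 s2.1
  · -- hub is w
    have hEqw : ¬ Ed B q w :=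
      fun he => ow_not_ed hopq (ed_symm (SE hG he le_rfl hqp hpw))
    have nadj3 : ∀ m : Fin n, m ≤ u ∨ m ≤ q → ¬ Ed B m w := by
      intro m hm he
      rcases hm with hm | hm
      · exact ow_not_ed how (SE hG he hm huw le_rfl)
      · exact hEqw (SE hG he hm (lt_of_lt_of_le hqp hpw) le_rfl)
    have s2 : Ow B q w := by
      rcases le_total u q with h | h
      · exact climbL hG how h r3 (fun m _ hm2 => nadj3 m (Or.inr hm2))
      · exact descL hG how h (rc_symm r3) (fun m _ hm2 => nadj3 m (Or.inl hm2))
    have rpw : Rc B p w := (rc_symm r2).trans r1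
    have s3 : Ow B q p := descR hG s2 hpw rpw (fun m hm1 _ => nadj_q m hm1)
    exact hopq.2 s3.1

/-- transport a one-way arc: left endpoint moves within its component -/
lemma crossL (hG : Good B) {v w u : Fin n} (how : Ow B v w) (hn : ¬ Rc B v w)
    (hr : Rc B v u) : Ow B u w := by
  induction hr with
  | refl => exact how
  | @tail b c hab e ih =>
    exact moveL hG ih e (fun hed => hn ((hab.tail e).tail hed))

/-- transport a one-way arc: right endpoint moves within its component -/
lemma crossR (hG : Good B) {v w u : Fin n} (how : Ow B v w) (hn : ¬ Rc B v w)
    (hr : Rc B w u) : Ow B v u := by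
  induction hr with
  | refl => exact how
  | @tail b c hab e ih =>
    exact moveR hG ih e
      (fun hed => hn ((Relation.ReflTransGen.single hed).trans (rc_symm (hab.tail e))))

lemma rev_congr {u v : Fin n} (hr : Rc B u v) : Rev B u ↔ Rev B v :=
  ⟨fun ⟨p, q, h1, h2, h3, h4⟩ => ⟨p, q, (rc_symm hr).trans h1, (rc_symm hr).trans h2, h3, h4⟩,
   fun ⟨p, q, h1, h2, h3, h4⟩ => ⟨p, q, hr.trans h1, hr.trans h2, h3, h4⟩⟩

lemma ow_in_comp (hG : Good B) {x y : Fin n} (ho : Ow B x y) (hr : Rc B x y) :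
    Lt' B x y := by
  by_cases hrev : Rev B x
  · obtain ⟨p, q, h1, h2, h3, h4⟩ := hrev
    have hyx : y < x := by
      rcases lt_trichotomy x y with h | h | h
      · exact (claimA hG h ho h3 h4 hr h1 h2).elim
      · exact absurd h (ow_ne ho)
      · exact h
    exact Or.inl ⟨hr, Or.inl ⟨⟨p, q, h1, h2, h3, h4⟩, hyx⟩⟩
  · have hxy : x < y := by
      rcases lt_trichotomy x y with h | h | h
      · exact h
      · exact absurd h (ow_ne ho)
      · exact absurd ⟨x, y, Relation.ReflTransGen.refl, hr, h, ho⟩ hrev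
    exact Or.inl ⟨hr, Or.inr ⟨hrev, hxy⟩⟩

lemma ow_lt' (hG : Good B) {x y : Fin n} (ho : Ow B x y) : Lt' B x y := by
  by_cases hr : Rc B x y
  · exact ow_in_comp hG ho hr
  · exact Or.inr ⟨hr, ho⟩

lemma lt'_irrefl (u : Fin n) : ¬ Lt' B u u := by
  intro h
  rcases h with ⟨_, h⟩ | ⟨hn, _⟩
  · rcases h with ⟨_, h⟩ | ⟨_, h⟩ <;> exact lt_irrefl u h
  · exact hn Relation.ReflTransGen.refl

lemma lt'_trans (hG : Good B) {u v w : Fin n} (h1 : Lt' B u v) (h2 : Lt' B v w) :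
    Lt' B u w := by
  rcases h1 with ⟨r1, c1⟩ | ⟨n1, o1⟩
  · rcases h2 with ⟨r2, c2⟩ | ⟨n2, o2⟩
    · have hruw : Rc B u w := r1.trans r2
      have hrev : Rev B u ↔ Rev B v := rev_congr r1
      rcases c1 with ⟨hv, hlt1⟩ | ⟨hv, hlt1⟩
      · rcases c2 with ⟨_, hlt2⟩ | ⟨hv2, hlt2⟩
        · exact Or.inl ⟨hruw, Or.inl ⟨hv, lt_trans hlt2 hlt1⟩⟩
        · exact absurd (hrev.mp hv) hv2
      · rcases c2 with ⟨hv2, _⟩ | ⟨_, hlt2⟩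
        · exact absurd (hrev.mpr hv2) hv
        · exact Or.inl ⟨hruw, Or.inr ⟨hv, lt_trans hlt1 hlt2⟩⟩
    · have hnuw : ¬ Rc B u w := fun h => n2 ((rc_symm r1).trans h)
      exact Or.inr ⟨hnuw, crossL hG o2 n2 (rc_symm r1)⟩
  · rcases h2 with ⟨r2, c2⟩ | ⟨n2, o2⟩
    · have hnuw : ¬ Rc B u w := fun h => n1 (h.trans (rc_symm r2))
      exact Or.inr ⟨hnuw, crossR hG o1 n1 r2⟩
    · obtain ⟨ho, _⟩ := tcomp hG o1 o2
      exact ow_lt' hG ho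

lemma lt'_trichot (hG : Good B) (u v : Fin n) :
    Lt' B u v ∨ u = v ∨ Lt' B v u := by
  rcases eq_or_ne u v with rfl | hne
  · exact Or.inr (Or.inl rfl)
  by_cases hr : Rc B u v
  · have hrev := rev_congr (B := B) hr
    by_cases hv : Rev B u
    · rcases lt_trichotomy u v with h | h | h
      · exact Or.inr (Or.inr (Or.inl ⟨rc_symm hr, Or.inl ⟨hrev.mp hv, h⟩⟩))
      · exact absurd h hne
      · exact Or.inl (Or.inl ⟨hr, Or.inl ⟨hv, h⟩⟩)
    · rcases lt_trichotomy u v with h | h | h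
      · exact Or.inl (Or.inl ⟨hr, Or.inr ⟨hv, h⟩⟩)
      · exact absurd h hne
      · exact Or.inr (Or.inr (Or.inl ⟨rc_symm hr, Or.inr ⟨fun hx => hv (hrev.mpr hx), h⟩⟩))
  · have hnd : ¬ Ed B u v := fun he => hr (Relation.ReflTransGen.single he)
    have hr' : ¬ Rc B v u := fun h => hr (rc_symm h)
    rcases hG.semi u v hne with h | h
    · by_cases h2 : B v u
      · exact absurd ⟨h, h2⟩ hnd
      · exact Or.inl (Or.inr ⟨hr, h, h2⟩)
    · by_cases h2 : B u v
      · exact absurd ⟨h2, h⟩ hnd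
      · exact Or.inr (Or.inr (Or.inr ⟨hr', h, h2⟩))

/-- sorting permutation for the new order -/
lemma exists_perm (hG : Good B) : ∃ τ : Equiv.Perm (Fin n),
    ∀ i j : Fin n, i < j → Lt' B (τ i) (τ j) := by
  have hsto : IsStrictTotalOrder (Fin n) (Lt' B) :=
    { trichotomous := fun a b h1 h2 => ((lt'_trichot hG a b).resolve_left h1).resolve_right h2
      irrefl := lt'_irrefl
      trans := fun _ _ _ h1 h2 => lt'_trans hG h1 h2 }
  let L : LinearOrder (Fin n) := @linearOrderOfSTO (Fin n) (Lt' B) hsto (Classical.decRel _)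
  let e := @monoEquivOfFin (Fin n) _ L n (by simp)
  refine ⟨e.toEquiv, fun i j hij => ?_⟩
  have hle := e.map_rel_iff.mpr (le_of_lt hij)
  rcases (show e i = e j ∨ Lt' B (e i) (e j) from hle) with h | h
  · exact absurd (e.toEquiv.injective h) (ne_of_lt hij)
  · exact h

/-- the Min-Max verification -/
lemma minmax {C : Fin n → Fin n → Prop} (hrefl : ∀ v, C v v)
    (hsemi : ∀ u v : Fin n, u ≠ v → C u v ∨ C v u)
    (hfwd : ∀ x y : Fin n, C x y → ¬ C y x → x < y)
    (humb : ∀ i j k : Fin n, i < j → j < k → Ed C i k → Ed C i j ∧ Ed C j k) :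
    ∀ i k j s : Fin n, C i k → C j s →
      C (min i j) (min k s) ∧ C (max i j) (max k s) := by
  have half : ∀ i k j s : Fin n, i ≤ j → C i k → C j s →
      C i (min k s) ∧ C j (max k s) := by
    intro i k j s hij hik hjs
    constructor
    · rcases le_total k s with h | h
      · rwa [min_eq_left h]
      · rw [min_eq_right h]
        by_contra hcis
        have his : i ≠ s := by rintro rfl; exact hcis (hrefl i)
        have hsi : C s i := (hsemi s i (Ne.symm his)).resolve_right hcis
        have hslt : s < i := hfwd s i hsi hcis
        have hsj : s < j := lt_of_lt_of_le hslt hij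
        have hcsj : C s j := by
          by_contra hcsj
          exact absurd (hfwd j s hjs hcsj) (not_lt.mpr (le_of_lt hsj))
        rcases eq_or_lt_of_le hij with rfl | hij'
        · exact hcis hjs
        · exact hcis (humb s i j hslt hij' ⟨hcsj, hjs⟩).1.2
    · rcases le_total k s with h | h
      · rwa [max_eq_right h]
      · rw [max_eq_left h]
        by_contra hcjk
        have hjk : j ≠ k := by rintro rfl; exact hcjk (hrefl j)
        have hkj : C k j := (hsemi k j (Ne.symm hjk)).resolve_right hcjk
        have hklt : k < j := hfwd k j hkj hcjk
        have hsj : s < j := lt_of_le_of_lt h hklt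
        have hcsj : C s j := by
          by_contra hcsj
          exact absurd (hfwd j s hjs hcsj) (not_lt.mpr (le_of_lt hsj))
        rcases eq_or_lt_of_le h with rfl | hsk
        · exact hcjk hjs
        · exact hcjk (humb s k j hsk hklt ⟨hcsj, hjs⟩).2.2
  intro i k j s hik hjs
  rcases le_total i j with h | h
  · rw [min_eq_left h, max_eq_right h]
    exact half i k j s h hik hjs
  · rw [min_eq_right h, max_eq_left h, min_comm k s, max_comm k s]
    exact half j s i k h hjs hik

end Stmt5

/-- A reflexive semicomplete digraph with no induced `R`, no induced
reflexive 3-cycle, and proper interval underlying graph of its symmetric subdigraph,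
has a Min-Max ordering. -/
theorem stmt5 {n : ℕ} (A : Fin n → Fin n → Prop)
    (hrefl : ∀ v, A v v)
    (hsemi : ∀ u v : Fin n, u ≠ v → A u v ∨ A v u)
    (hnoR : ¬ ∃ a b c : Fin n, a ≠ b ∧ a ≠ c ∧ b ≠ c ∧
      A a b ∧ A b c ∧ A c a ∧ A a c ∧ ¬ A b a ∧ ¬ A c b)
    (hnoC3 : ¬ ∃ a b c : Fin n, a ≠ b ∧ a ≠ c ∧ b ≠ c ∧
      A a b ∧ A b c ∧ A c a ∧ ¬ A b a ∧ ¬ A c b ∧ ¬ A a c)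
    (hpin : ∃ σ : Equiv.Perm (Fin n), ∀ i j k : Fin n, i < j → j < k →
      (A (σ i) (σ k) ∧ A (σ k) (σ i)) →
      (A (σ i) (σ j) ∧ A (σ j) (σ i)) ∧ (A (σ j) (σ k) ∧ A (σ k) (σ j))) :
    ∃ σ : Equiv.Perm (Fin n), ∀ i k j s : Fin n, A (σ i) (σ k) → A (σ j) (σ s) →
      A (σ (min i j)) (σ (min k s)) ∧ A (σ (max i j)) (σ (max k s)) := by
  classical
  obtain ⟨σ0, hσ0⟩ := hpin
  set B : Fin n → Fin n → Prop := fun i j => A (σ0 i) (σ0 j) with hB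
  have hG : Stmt5.Good B := by
    refine ⟨fun v => hrefl _, fun u v huv => hsemi _ _ (fun h => huv (σ0.injective h)),
      ?_, fun i j k hij hjk he => hσ0 i j k hij hjk he⟩
    intro a b c h1 h2 hca
    have hab : a ≠ b := Stmt5.ow_ne h1
    have hbc : b ≠ c := Stmt5.ow_ne h2
    have hac' : a ≠ c := by rintro rfl; exact h1.2 h2.1
    have hxy : σ0 a ≠ σ0 b := fun h => hab (σ0.injective h)
    have hyz : σ0 b ≠ σ0 c := fun h => hbc (σ0.injective h)
    have hxz : σ0 a ≠ σ0 c := fun h => hac' (σ0.injective h)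
    by_cases hac : A (σ0 a) (σ0 c)
    · exact hnoR ⟨σ0 a, σ0 b, σ0 c, hxy, hxz, hyz, h1.1, h2.1, hca, hac, h1.2, h2.2⟩
    · exact hnoC3 ⟨σ0 a, σ0 b, σ0 c, hxy, hxz, hyz, h1.1, h2.1, hca, h1.2, h2.2, hac⟩
  obtain ⟨τ, hτ⟩ := Stmt5.exists_perm hG
  have hreflC : ∀ v, B (τ v) (τ v) := fun v => hG.refl _
  have hsemiC : ∀ u v : Fin n, u ≠ v → B (τ u) (τ v) ∨ B (τ v) (τ u) :=
    fun u v h => hG.semi _ _ (fun he => h (τ.injective he))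
  have hfwdC : ∀ x y : Fin n, B (τ x) (τ y) → ¬ B (τ y) (τ x) → x < y := by
    intro x y h1 h2
    have hlt : Stmt5.Lt' B (τ x) (τ y) := Stmt5.ow_lt' hG ⟨h1, h2⟩
    rcases lt_trichotomy x y with h | h | h
    · exact h
    · exact absurd (h ▸ h1) h2
    · exact absurd (Stmt5.lt'_trans hG hlt (hτ y x h)) (Stmt5.lt'_irrefl _)
  have humbC : ∀ i j k : Fin n, i < j → j < k →
      Stmt5.Ed (fun i j => B (τ i) (τ j)) i k →
      Stmt5.Ed (fun i j => B (τ i) (τ j)) i j ∧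
        Stmt5.Ed (fun i j => B (τ i) (τ j)) j k := by
    intro i j k hij hjk hik
    have hik' : Stmt5.Ed B (τ i) (τ k) := hik
    have r_ik : Stmt5.Rc B (τ i) (τ k) := Relation.ReflTransGen.single hik'
    have l1 : Stmt5.Lt' B (τ i) (τ j) := hτ _ _ hij
    have l2 : Stmt5.Lt' B (τ j) (τ k) := hτ _ _ hjk
    have rj1 : Stmt5.Rc B (τ i) (τ j) := by
      by_contra hnr
      have o1 : Stmt5.Ow B (τ i) (τ j) := by
        rcases l1 with ⟨r, _⟩ | ⟨_, o⟩
        · exact absurd r hnr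
        · exact o
      have o2 : Stmt5.Ow B (τ j) (τ k) := by
        rcases l2 with ⟨r, _⟩ | ⟨_, o⟩
        · exact absurd (r_ik.trans (Stmt5.rc_symm r)) hnr
        · exact o
      exact (Stmt5.tcomp hG o1 o2).2 hik'
    have rj2 : Stmt5.Rc B (τ j) (τ k) := (Stmt5.rc_symm rj1).trans r_ik
    have hrev := Stmt5.rev_congr (B := B) rj1
    rcases l1 with ⟨_, c1⟩ | ⟨hn, _⟩
    swap
    · exact absurd rj1 hn
    rcases l2 with ⟨_, c2⟩ | ⟨hn, _⟩
    swap
    · exact absurd rj2 hn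
    rcases c1 with ⟨hv1, hlt1⟩ | ⟨hv1, hlt1⟩
    · rcases c2 with ⟨hv2, hlt2⟩ | ⟨hv2, hlt2⟩
      · have := hG.umb (τ k) (τ j) (τ i) hlt2 hlt1 (Stmt5.ed_symm hik')
        exact ⟨Stmt5.ed_symm this.2, Stmt5.ed_symm this.1⟩
      · exact absurd (hrev.mp hv1) hv2
    · rcases c2 with ⟨hv2, hlt2⟩ | ⟨hv2, hlt2⟩
      · exact absurd (hrev.mpr hv2) hv1
      · exact hG.umb (τ i) (τ j) (τ k) hlt1 hlt2 hik'
  have main := Stmt5.minmax hreflC hsemiC hfwdC humbC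
  refine ⟨τ.trans σ0, fun i k j s hik hjs => ?_⟩
  exact main i k j s hik hjs
end

section
/- A reflexive undirected graph H has a Min-Max ordering if and only if its vertices can be ordered v_1, v_2, ..., v_n so that i < j < k and v_i v_k ∈ E(H) imply v_i v_j ∈ E(H) and v_j v_k ∈ E(H). -/
private lemma umb_le {n : ℕ} (F : Fin n → Fin n → Prop) (hr : ∀ v, F v v)
    (hu : ∀ i j k : Fin n, i < j → j < k → F i k → F i j ∧ F j k) :
    ∀ i j k : Fin n, i ≤ j → j ≤ k → F i k → F i j ∧ F j k := by
  intro i j k hij hjk h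
  rcases eq_or_lt_of_le hij with rfl | hij
  · exact ⟨hr i, h⟩
  rcases eq_or_lt_of_le hjk with rfl | hjk
  · exact ⟨h, hr j⟩
  exact hu i j k hij hjk h

private lemma key_aux {n : ℕ} (F : Fin n → Fin n → Prop) (hr : ∀ v, F v v)
    (hs : ∀ u v, F u v → F v u)
    (hu : ∀ i j k : Fin n, i < j → j < k → F i k → F i j ∧ F j k) :
    ∀ i j k s : Fin n, i ≤ j → F i k → F j s → F i (min k s) ∧ F j (max k s) := by
  intro i j k s hij hik hjs
  rcases le_total k s with hks | hsk
  · rw [min_eq_left hks, max_eq_right hks]; exact ⟨hik, hjs⟩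
  · rw [min_eq_right hsk, max_eq_left hsk]
    constructor
    · rcases le_total i s with his | hsi
      · exact (umb_le F hr hu i s k his hsk hik).1
      · exact hs _ _ (umb_le F hr hu s i j hsi hij (hs _ _ hjs)).1
    · rcases le_total j k with hjk | hkj
      · exact (umb_le F hr hu i j k hij hjk hik).2
      · exact hs _ _ (umb_le F hr hu s k j hsk hkj (hs _ _ hjs)).2

/-- A reflexive undirected graph (symmetric reflexive relation `E`)
has a Min-Max ordering iff it has a proper-interval ("umbrella") ordering. -/
theorem stmt6 {n : ℕ} (E : Fin n → Fin n → Prop)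
    (hrefl : ∀ v, E v v)
    (hsym : ∀ u v : Fin n, E u v → E v u) :
    (∃ σ : Equiv.Perm (Fin n), ∀ i k j s : Fin n, E (σ i) (σ k) → E (σ j) (σ s) →
      E (σ (min i j)) (σ (min k s)) ∧ E (σ (max i j)) (σ (max k s))) ↔
    (∃ σ : Equiv.Perm (Fin n), ∀ i j k : Fin n, i < j → j < k → E (σ i) (σ k) →
      E (σ i) (σ j) ∧ E (σ j) (σ k)) := by
  constructor
  · rintro ⟨σ, h⟩
    refine ⟨σ, fun i j k hij hjk hik => ?_⟩
    have := h i k j j hik (hrefl (σ j))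
    rwa [min_eq_left hij.le, min_eq_right hjk.le, max_eq_right hij.le,
      max_eq_left hjk.le] at this
  · rintro ⟨σ, h⟩
    refine ⟨σ, fun i k j s hik hjs => ?_⟩
    set F : Fin n → Fin n → Prop := fun x y => E (σ x) (σ y) with hF
    have hr : ∀ v, F v v := fun v => hrefl _
    have hs : ∀ u v, F u v → F v u := fun u v => hsym _ _
    rcases le_total i j with hij | hji
    · rw [min_eq_left hij, max_eq_right hij]
      exact key_aux F hr hs h i j k s hij hik hjs
    · rw [min_eq_right hji, max_eq_left hji, min_comm k s, max_comm k s]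
      exact key_aux F hr hs h j i s k hji hjs hik
end

section
/- Let H be a semicomplete digraph with possible loops, let L be the induced subdigraph on the vertices with loops and I the induced subdigraph on loopless vertices. Suppose H contains no induced copy of W, R', or a directed 3-cycle with at least one loop; L contains neither R nor C*_3 as an induced subdigraph; the underlying graph of L^sym is a proper interval graph; and I is a transitive tournament. Then for every loopless vertex u of I and every connected component S of L^sym, either u strictly dominates every vertex of S, or every vertex of S strictly dominates u. -/
/-- In a semicomplete digraph with possible loops satisfying the
polynomiality conditions (no induced W, R', or loopy 3-cycle; reflexive part L with
no induced R or reflexive 3-cycle and proper interval U(L^sym); loopless part I a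
transitive tournament), every loopless vertex either strictly dominates a whole
component of L^sym or is strictly dominated by it. -/
theorem stmt7 {n : ℕ} (A : Fin n → Fin n → Prop)
    (hsemi : ∀ u v : Fin n, u ≠ v → A u v ∨ A v u)
    (hnoW : ¬ ∃ a b : Fin n, a ≠ b ∧ A a b ∧ A b a ∧ A b b ∧ ¬ A a a)
    (hnoR' : ¬ ∃ a b c : Fin n, a ≠ b ∧ a ≠ c ∧ b ≠ c ∧
      A a b ∧ ¬ A b a ∧ A b c ∧ A c b ∧ A c a ∧ ¬ A a c ∧ A b b ∧ A c c ∧ ¬ A a a)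
    (hnoC3loop : ¬ ∃ a b c : Fin n, a ≠ b ∧ a ≠ c ∧ b ≠ c ∧
      A a b ∧ A b c ∧ A c a ∧ ¬ A b a ∧ ¬ A c b ∧ ¬ A a c ∧ (A a a ∨ A b b ∨ A c c))
    (hLnoR : ¬ ∃ a b c : Fin n, A a a ∧ A b b ∧ A c c ∧ a ≠ b ∧ a ≠ c ∧ b ≠ c ∧
      A a b ∧ A b c ∧ A c a ∧ A a c ∧ ¬ A b a ∧ ¬ A c b)
    (hLnoC3 : ¬ ∃ a b c : Fin n, A a a ∧ A b b ∧ A c c ∧ a ≠ b ∧ a ≠ c ∧ b ≠ c ∧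
      A a b ∧ A b c ∧ A c a ∧ ¬ A b a ∧ ¬ A c b ∧ ¬ A a c)
    (hpin : ∃ f : Fin n → ℕ, (∀ x y, A x x → A y y → f x = f y → x = y) ∧
      ∀ x y z : Fin n, A x x → A y y → A z z → f x < f y → f y < f z →
        (A x z ∧ A z x) → (A x y ∧ A y x) ∧ (A y z ∧ A z y))
    (hItour : ∀ u v : Fin n, ¬ A u u → ¬ A v v → u ≠ v → ¬ (A u v ∧ A v u))
    (hItrans : ∀ u v w : Fin n, ¬ A u u → ¬ A v v → ¬ A w w → A u v → A v w → A u w) :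
    ∀ u : Fin n, ¬ A u u → ∀ s : Fin n, A s s →
      (∀ v : Fin n,
        Relation.ReflTransGen (fun a b => A a a ∧ A b b ∧ A a b ∧ A b a) s v →
        A u v ∧ ¬ A v u) ∨
      (∀ v : Fin n,
        Relation.ReflTransGen (fun a b => A a a ∧ A b b ∧ A a b ∧ A b a) s v →
        A v u ∧ ¬ A u v) := by

  intro u hu s hs
  -- for loopy c, exactly one direction between u and c
  have key : ∀ c : Fin n, A c c → (A u c ∧ ¬ A c u) ∨ (A c u ∧ ¬ A u c) := by
    intro c hc
    have hne : u ≠ c := fun h => hu (h ▸ hc)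
    rcases hsemi u c hne with h | h
    · left; refine ⟨h, fun h' => hnoW ⟨u, c, hne, h, h', hc, hu⟩⟩
    · right; refine ⟨h, fun h' => hnoW ⟨u, c, hne, h', h, hc, hu⟩⟩
  have step1 : ∀ b c : Fin n, (A b b ∧ A c c ∧ A b c ∧ A c b) →
      (A u b ∧ ¬ A b u) → (A u c ∧ ¬ A c u) := by
    intro b c ⟨hb, hc, hbc, hcb⟩ ⟨hub, hbu⟩
    rcases key c hc with h | ⟨hcu, huc⟩
    · exact h
    · by_cases hbceq : b = c
      · exact absurd (hbceq ▸ hub) huc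
      · exact (hnoR' ⟨u, b, c, fun h => hu (h ▸ hb),
          fun h => hu (h ▸ hc), hbceq, hub, hbu, hbc, hcb, hcu, huc, hb, hc, hu⟩).elim
  have step2 : ∀ b c : Fin n, (A b b ∧ A c c ∧ A b c ∧ A c b) →
      (A b u ∧ ¬ A u b) → (A c u ∧ ¬ A u c) := by
    intro b c ⟨hb, hc, hbc, hcb⟩ ⟨hbu, hub⟩
    rcases key c hc with ⟨huc, hcu⟩ | h
    · by_cases hbceq : b = c
      · exact absurd (hbceq ▸ hbu) hcu
      · exact (hnoR' ⟨u, c, b, fun h => hu (h ▸ hc),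
          fun h => hu (h ▸ hb), fun h => hbceq h.symm, huc, hcu, hcb, hbc, hbu, hub, hc, hb, hu⟩).elim
    · exact h
  rcases key s hs with h | h
  · left
    intro v hv
    induction hv with
    | refl => exact h
    | tail _ hstep ih => exact step1 _ _ hstep ih
  · right
    intro v hv
    induction hv with
    | refl => exact h
    | tail _ hstep ih => exact step2 _ _ hstep ih
end

section
/- Let H be a semicomplete digraph with possible loops such that: L (the reflexive part) contains neither R nor C*_3 as an induced subdigraph and the underlying graph of L^sym is a proper interval graph; I (the loopless part) is a transitive tournament; and H contains no induced W, R', or directed 3-cycle with at least one loop. Then the vertices of H can be ordered v_1,...,v_n so that v_i dominates v_j whenever i < j. -/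
/-- Under the same polynomiality conditions as Statement 7, the
vertices of `H` can be ordered so that every earlier vertex dominates every later
vertex. -/
theorem stmt8 {n : ℕ} (A : Fin n → Fin n → Prop)
    (hsemi : ∀ u v : Fin n, u ≠ v → A u v ∨ A v u)
    (hnoW : ¬ ∃ a b : Fin n, a ≠ b ∧ A a b ∧ A b a ∧ A b b ∧ ¬ A a a)
    (hnoR' : ¬ ∃ a b c : Fin n, a ≠ b ∧ a ≠ c ∧ b ≠ c ∧
      A a b ∧ ¬ A b a ∧ A b c ∧ A c b ∧ A c a ∧ ¬ A a c ∧ A b b ∧ A c c ∧ ¬ A a a)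
    (hnoC3loop : ¬ ∃ a b c : Fin n, a ≠ b ∧ a ≠ c ∧ b ≠ c ∧
      A a b ∧ A b c ∧ A c a ∧ ¬ A b a ∧ ¬ A c b ∧ ¬ A a c ∧ (A a a ∨ A b b ∨ A c c))
    (hLnoR : ¬ ∃ a b c : Fin n, A a a ∧ A b b ∧ A c c ∧ a ≠ b ∧ a ≠ c ∧ b ≠ c ∧
      A a b ∧ A b c ∧ A c a ∧ A a c ∧ ¬ A b a ∧ ¬ A c b)
    (hLnoC3 : ¬ ∃ a b c : Fin n, A a a ∧ A b b ∧ A c c ∧ a ≠ b ∧ a ≠ c ∧ b ≠ c ∧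
      A a b ∧ A b c ∧ A c a ∧ ¬ A b a ∧ ¬ A c b ∧ ¬ A a c)
    (hpin : ∃ f : Fin n → ℕ, (∀ x y, A x x → A y y → f x = f y → x = y) ∧
      ∀ x y z : Fin n, A x x → A y y → A z z → f x < f y → f y < f z →
        (A x z ∧ A z x) → (A x y ∧ A y x) ∧ (A y z ∧ A z y))
    (hItour : ∀ u v : Fin n, ¬ A u u → ¬ A v v → u ≠ v → ¬ (A u v ∧ A v u))
    (hItrans : ∀ u v w : Fin n, ¬ A u u → ¬ A v v → ¬ A w w → A u v → A v w → A u w) :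
    ∃ σ : Equiv.Perm (Fin n), ∀ i j : Fin n, i < j → A (σ i) (σ j) := by
  classical
  -- the strict part of A
  set r : Fin n → Fin n → Prop := fun u v => u ≠ v ∧ A u v ∧ ¬ A v u with hrdef
  -- symmetric pairs have loops at both ends
  have hsymloop : ∀ u v : Fin n, u ≠ v → A u v → A v u → A u u ∧ A v v := by
    intro u v huv huvA hvuA
    constructor
    · by_contra huu
      by_cases hvv : A v v
      · exact hnoW ⟨u, v, huv, huvA, hvuA, hvv, huu⟩
      · exact hItour u v huu hvv huv ⟨huvA, hvuA⟩
    · by_contra hvv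
      by_cases huu : A u u
      · exact hnoW ⟨v, u, huv.symm, hvuA, huvA, huu, hvv⟩
      · exact hItour u v huu hvv huv ⟨huvA, hvuA⟩
  -- r is transitive
  have hrtrans : ∀ u v w : Fin n, r u v → r v w → r u w := by
    intro u v w ⟨huv, hAuv, hAvu⟩ ⟨hvw, hAvw, hAwv⟩
    have huw : u ≠ w := by rintro rfl; exact hAvu hAvw
    have hAuw : A u w := by
      by_contra hAuw
      have hAwu : A w u := (hsemi u w huw).resolve_left hAuw
      -- strict 3-cycle u → v → w → u
      by_cases hl : A u u ∨ A v v ∨ A w w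
      · exact hnoC3loop ⟨u, v, w, huv, huw, hvw, hAuv, hAvw, hAwu, hAvu, hAwv, hAuw, hl⟩
      · push_neg at hl
        exact hAuw (hItrans u v w hl.1 hl.2.1 hl.2.2 hAuv hAvw)
    refine ⟨huw, hAuw, ?_⟩
    intro hAwu
    -- u ~ w symmetric, so both have loops
    obtain ⟨huu, hww⟩ := hsymloop u w huw hAuw hAwu
    by_cases hvv : A v v
    · exact hLnoR ⟨u, v, w, huu, hvv, hww, huv, huw, hvw, hAuv, hAvw, hAwu, hAuw, hAvu, hAwv⟩
    · exact hnoR' ⟨v, w, u, hvw, (Ne.symm huv), (Ne.symm huw), hAvw, hAwv, hAwu, hAuw, hAuv,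
        hAvu, hww, huu, hvv⟩
  -- reflexive closure of r is a partial order
  set r' : Fin n → Fin n → Prop := fun u v => r u v ∨ u = v with hr'def
  haveI : IsPartialOrder (Fin n) r' :=
    { refl := fun a => Or.inr rfl
      trans := by
        rintro a b c (hab | rfl) (hbc | rfl)
        · exact Or.inl (hrtrans a b c hab hbc)
        · exact Or.inl hab
        · exact Or.inl hbc
        · exact Or.inr rfl
      antisymm := by
        rintro a b (hab | rfl) hba
        · rcases hba with hba | hba
          · exact absurd hab.2.1 hba.2.2
          · exact hba.symm
        · rfl }
  obtain ⟨s, hslin, hrs⟩ := extend_partialOrder r'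
  haveI := hslin.1
  haveI := hslin.2
  letI : DecidableRel s := fun a b => Classical.dec _
  set l : List (Fin n) := Finset.univ.sort s with hldef
  have hmem : ∀ x : Fin n, x ∈ l := fun x => (Finset.mem_sort s).2 (Finset.mem_univ x)
  have hnd : l.Nodup := Finset.sort_nodup (r := s) _
  have hsorted : l.Pairwise s := Finset.pairwise_sort (r := s) _
  have hlen : l.length = n := by
    rw [hldef, Finset.length_sort, Finset.card_univ, Fintype.card_fin]
  set e : Fin l.length ≃ Fin n := hnd.getEquivOfForallMemList l hmem with hedef
  have he : ∀ i : Fin l.length, e i = l.get i := fun i => rfl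
  refine ⟨(finCongr hlen.symm).trans e, ?_⟩
  intro i j hij
  set i' : Fin l.length := finCongr hlen.symm i with hi'
  set j' : Fin l.length := finCongr hlen.symm j with hj'
  have hij' : i' < j' := hij
  have hs : s (l.get i') (l.get j') := hsorted.rel_get_of_lt hij'
  have hne : l.get i' ≠ l.get j' := by
    intro h
    exact absurd (hnd.get_inj_iff.1 h) (Fin.ne_of_lt hij')
  show A (l.get i') (l.get j')
  by_contra hA
  have hA' : A (l.get j') (l.get i') := (hsemi _ _ hne).resolve_left hA
  have : s (l.get j') (l.get i') := hrs _ _ (Or.inl ⟨hne.symm, hA', hA⟩)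
  exact hne (antisymm hs this)
end

section
/- Let H be a semicomplete digraph with possible loops satisfying: L contains neither R nor C*_3 as an induced subdigraph, the underlying graph of L^sym is a proper interval graph, I is a transitive tournament, and H contains no induced W, R', or directed 3-cycle with at least one loop. Then H has a Min-Max ordering of its vertices. -/
/-- Under the same polynomiality conditions as Statement 7, `H` has a
Min-Max ordering. -/
theorem stmt9 {n : ℕ} (A : Fin n → Fin n → Prop)
    (hsemi : ∀ u v : Fin n, u ≠ v → A u v ∨ A v u)
    (hnoW : ¬ ∃ a b : Fin n, a ≠ b ∧ A a b ∧ A b a ∧ A b b ∧ ¬ A a a)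
    (hnoR' : ¬ ∃ a b c : Fin n, a ≠ b ∧ a ≠ c ∧ b ≠ c ∧
      A a b ∧ ¬ A b a ∧ A b c ∧ A c b ∧ A c a ∧ ¬ A a c ∧ A b b ∧ A c c ∧ ¬ A a a)
    (hnoC3loop : ¬ ∃ a b c : Fin n, a ≠ b ∧ a ≠ c ∧ b ≠ c ∧
      A a b ∧ A b c ∧ A c a ∧ ¬ A b a ∧ ¬ A c b ∧ ¬ A a c ∧ (A a a ∨ A b b ∨ A c c))
    (hLnoR : ¬ ∃ a b c : Fin n, A a a ∧ A b b ∧ A c c ∧ a ≠ b ∧ a ≠ c ∧ b ≠ c ∧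
      A a b ∧ A b c ∧ A c a ∧ A a c ∧ ¬ A b a ∧ ¬ A c b)
    (hLnoC3 : ¬ ∃ a b c : Fin n, A a a ∧ A b b ∧ A c c ∧ a ≠ b ∧ a ≠ c ∧ b ≠ c ∧
      A a b ∧ A b c ∧ A c a ∧ ¬ A b a ∧ ¬ A c b ∧ ¬ A a c)
    (hpin : ∃ f : Fin n → ℕ, (∀ x y, A x x → A y y → f x = f y → x = y) ∧
      ∀ x y z : Fin n, A x x → A y y → A z z → f x < f y → f y < f z →
        (A x z ∧ A z x) → (A x y ∧ A y x) ∧ (A y z ∧ A z y))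
    (hItour : ∀ u v : Fin n, ¬ A u u → ¬ A v v → u ≠ v → ¬ (A u v ∧ A v u))
    (hItrans : ∀ u v w : Fin n, ¬ A u u → ¬ A v v → ¬ A w w → A u v → A v w → A u w) :
    ∃ σ : Equiv.Perm (Fin n), ∀ i k j s : Fin n, A (σ i) (σ k) → A (σ j) (σ s) →
      A (σ (min i j)) (σ (min k s)) ∧ A (σ (max i j)) (σ (max k s)) := by
  classical
  obtain ⟨f, hfinj, hfpin⟩ := hpin
  -- totality
  have total : ∀ x y : Fin n, x ≠ y → ¬ A x y → A y x := by
    intro x y hne h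
    rcases hsemi x y hne with h' | h'
    · exact absurd h' h
    · exact h'
  -- symmetric pairs consist of loops
  have loops : ∀ x y : Fin n, x ≠ y → A x y → A y x → A x x ∧ A y y := by
    intro x y hne hxy hyx
    by_cases hx : A x x
    · by_cases hy : A y y
      · exact ⟨hx, hy⟩
      · exact absurd ⟨y, x, hne.symm, hyx, hxy, hx, hy⟩ hnoW
    · by_cases hy : A y y
      · exact absurd ⟨x, y, hne, hxy, hyx, hy, hx⟩ hnoW
      · exact absurd ⟨hxy, hyx⟩ (hItour x y hx hy hne)
  -- F1: the triangle rule
  have F1 : ∀ a b c : Fin n, A a b → ¬ A b a → A b c → A c a → a ≠ c → b ≠ c →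
      A c b ∧ A a c := by
    intro a b c hab hnba hbc hca hac' hbc'
    have hab' : a ≠ b := by rintro rfl; exact hnba hab
    -- step 1 : A c b ∨ A a c
    have step1 : A c b ∨ A a c := by
      by_contra h
      push_neg at h
      obtain ⟨hncb, hnac⟩ := h
      rcases Classical.em (A a a ∨ A b b ∨ A c c) with hl | hl
      · exact hnoC3loop ⟨a, b, c, hab', hac', hbc', hab, hbc, hca, hnba, hncb, hnac, hl⟩
      · push_neg at hl
        exact hnac (hItrans a b c hl.1 hl.2.1 hl.2.2 hab hbc)
    -- step 2 : A c b
    have hcb : A c b := by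
      by_contra hncb
      have hac2 : A a c := step1.resolve_left hncb
      obtain ⟨haa, hcc⟩ := loops a c hac' hac2 hca
      by_cases hbb : A b b
      · exact hLnoR ⟨a, b, c, haa, hbb, hcc, hab', hac', hbc', hab, hbc, hca, hac2, hnba, hncb⟩
      · exact hnoR' ⟨b, c, a, hbc', hab'.symm, hac'.symm, hbc, hncb, hca, hac2, hab, hnba,
          hcc, haa, hbb⟩
    obtain ⟨hbb, hcc⟩ := loops b c hbc' hbc hcb
    have hac2 : A a c := by
      by_contra hnac
      by_cases haa : A a a
      · exact hLnoR ⟨c, a, b, hcc, haa, hbb, hac'.symm, hbc'.symm, hab', hca, hab, hbc,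
          hcb, hnac, hnba⟩
      · exact hnoR' ⟨a, b, c, hab', hac', hbc', hab, hnba, hbc, hcb, hca, hnac, hbb, hcc, haa⟩
    exact ⟨hcb, hac2⟩
  -- F2 : transitivity of strict domination
  have F2 : ∀ a b c : Fin n, A a b → ¬ A b a → A b c → ¬ A c b → A a c ∧ ¬ A c a := by
    intro a b c hab hnba hbc hncb
    have hac' : a ≠ c := by rintro rfl; exact hnba hbc
    have hbc' : b ≠ c := by rintro rfl; exact hncb hbc
    have hnca : ¬ A c a := by
      intro hca
      exact hncb (F1 a b c hab hnba hbc hca hac' hbc').1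
    exact ⟨total c a hac'.symm hnca, hnca⟩
  -- sameside lemmas : two sym-partners of z on the same f-side must be symmetric
  have sameside1 : ∀ z s t : Fin n, z ≠ s → z ≠ t → s ≠ t →
      A z s → A s z → A z t → A t z → ¬ (A s t ∧ A t s) →
      f z < f s → f z < f t → False := by
    intro z s t hzs hzt hst hzs1 hsz1 hzt1 htz1 hnst h1 h2
    obtain ⟨hzz, hss⟩ := loops z s hzs hzs1 hsz1
    obtain ⟨_, htt⟩ := loops z t hzt hzt1 htz1
    have hfst : f s ≠ f t := fun h => hst (hfinj s t hss htt h)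
    rcases lt_or_gt_of_ne hfst with h | h
    · exact hnst (hfpin z s t hzz hss htt h1 h ⟨hzt1, htz1⟩).2
    · exact hnst ⟨((hfpin z t s hzz htt hss h2 h ⟨hzs1, hsz1⟩).2).2,
        ((hfpin z t s hzz htt hss h2 h ⟨hzs1, hsz1⟩).2).1⟩
  have sameside2 : ∀ z s t : Fin n, z ≠ s → z ≠ t → s ≠ t →
      A z s → A s z → A z t → A t z → ¬ (A s t ∧ A t s) →
      f s < f z → f t < f z → False := by
    intro z s t hzs hzt hst hzs1 hsz1 hzt1 htz1 hnst h1 h2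
    obtain ⟨hzz, hss⟩ := loops z s hzs hzs1 hsz1
    obtain ⟨_, htt⟩ := loops z t hzt hzt1 htz1
    have hfst : f s ≠ f t := fun h => hst (hfinj s t hss htt h)
    rcases lt_or_gt_of_ne hfst with h | h
    · exact hnst (hfpin s t z hss htt hzz h h2 ⟨hsz1, hzs1⟩).1
    · exact hnst ⟨(hfpin t s z htt hss hzz h h1 ⟨htz1, hzt1⟩).1.2,
        (hfpin t s z htt hss hzz h h1 ⟨htz1, hzt1⟩).1.1⟩
  -- star lemma : a vertex cannot be symmetric to three pairwise non-symmetric vertices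
  have star : ∀ z x y w : Fin n, z ≠ x → z ≠ y → z ≠ w → x ≠ y → x ≠ w → y ≠ w →
      A z x → A x z → A z y → A y z → A z w → A w z →
      ¬ (A x y ∧ A y x) → ¬ (A x w ∧ A w x) → ¬ (A y w ∧ A w y) → False := by
    intro z x y w hzx hzy hzw hxy hxw hyw hzx1 hxz1 hzy1 hyz1 hzw1 hwz1 nxy nxw nyw
    obtain ⟨hzz, hxx⟩ := loops z x hzx hzx1 hxz1
    obtain ⟨_, hyy⟩ := loops z y hzy hzy1 hyz1
    obtain ⟨_, hww⟩ := loops z w hzw hzw1 hwz1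
    have hfx : f x ≠ f z := fun h => hzx (hfinj x z hxx hzz h).symm
    have hfy : f y ≠ f z := fun h => hzy (hfinj y z hyy hzz h).symm
    have hfw : f w ≠ f z := fun h => hzw (hfinj w z hww hzz h).symm
    rcases lt_or_gt_of_ne hfx with h1 | h1 <;>
      rcases lt_or_gt_of_ne hfy with h2 | h2 <;>
        rcases lt_or_gt_of_ne hfw with h3 | h3
    · exact sameside2 z x y hzx hzy hxy hzx1 hxz1 hzy1 hyz1 nxy h1 h2
    · exact sameside2 z x y hzx hzy hxy hzx1 hxz1 hzy1 hyz1 nxy h1 h2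
    · exact sameside2 z x w hzx hzw hxw hzx1 hxz1 hzw1 hwz1 nxw h1 h3
    · exact sameside1 z y w hzy hzw hyw hzy1 hyz1 hzw1 hwz1 nyw h2 h3
    · exact sameside2 z y w hzy hzw hyw hzy1 hyz1 hzw1 hwz1 nyw h2 h3
    · exact sameside1 z x w hzx hzw hxw hzx1 hxz1 hzw1 hwz1 nxw h1 h3
    · exact sameside1 z x y hzx hzy hxy hzx1 hxz1 hzy1 hyz1 nxy h1 h2
    · exact sameside1 z x y hzx hzy hxy hzx1 hxz1 hzy1 hyz1 nxy h1 h2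
  -- no quad : two disjoint non-symmetric pairs forming a symmetric 4-cycle is impossible
  have noquadH : ∀ x y z w : Fin n, x ≠ y → w ≠ z →
      ¬ (A x y ∧ A y x) → ¬ (A w z ∧ A z w) →
      A x z → A z x → A y z → A z y → A w y → A y w → A w x → A x w →
      f x < f y → False := by
    intro x y z w hxy hwz nxy nwz sxz1 sxz2 syz1 syz2 swy1 swy2 swx1 swx2 hfxy
    have hxz : x ≠ z := by rintro rfl; exact nxy ⟨syz2, syz1⟩
    have hyz : y ≠ z := by rintro rfl; exact nxy ⟨sxz1, sxz2⟩
    have hwx : w ≠ x := by rintro rfl; exact nxy ⟨swy1, swy2⟩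
    have hwy : w ≠ y := by rintro rfl; exact nxy ⟨swx2, swx1⟩
    obtain ⟨hxx, hzz⟩ := loops x z hxz sxz1 sxz2
    obtain ⟨hyy, _⟩ := loops y z hyz syz1 syz2
    obtain ⟨hww, _⟩ := loops w x hwx swx1 swx2
    have hfwx : f w ≠ f x := fun h => hwx (hfinj w x hww hxx h)
    have hfwy : f w ≠ f y := fun h => hwy (hfinj w y hww hyy h)
    have hfwz : f w ≠ f z := fun h => hwz (hfinj w z hww hzz h)
    have hfzx : f z ≠ f x := fun h => hxz (hfinj z x hzz hxx h).symm
    have hfzy : f z ≠ f y := fun h => hyz (hfinj z y hzz hyy h).symm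
    rcases lt_or_gt_of_ne hfwx with h1 | h1
    · -- f w < f x < f y , pair (w,y) spans x
      exact nxy (hfpin w x y hww hxx hyy h1 hfxy ⟨swy1, swy2⟩).2
    · rcases lt_or_gt_of_ne hfwy with h2 | h2
      · -- f x < f w < f y ; case on z
        rcases lt_or_gt_of_ne hfzx with h3 | h3
        · exact nxy (hfpin z x y hzz hxx hyy h3 hfxy ⟨syz2, syz1⟩).2
        · rcases lt_or_gt_of_ne hfwz with h4 | h4
          · -- f x < f z and f z < f w?? h4 : f w < f z ; then f w < f z < f y ?
            rcases lt_or_gt_of_ne hfzy with h5 | h5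
            · exact nwz ((hfpin w z y hww hzz hyy h4 h5 ⟨swy1, swy2⟩).1)
            · exact nxy (hfpin x y z hxx hyy hzz hfxy h5 ⟨sxz1, sxz2⟩).1
          · -- f x < f z < f w , pair (x,w) spans z
            exact nwz ⟨((hfpin x z w hxx hzz hww h3 h4 ⟨swx2, swx1⟩).2).2,
              ((hfpin x z w hxx hzz hww h3 h4 ⟨swx2, swx1⟩).2).1⟩
      · -- f y < f w , pair (x,w) spans y
        exact nxy (hfpin x y w hxx hyy hww hfxy h2 ⟨swx2, swx1⟩).1
  have noquad : ∀ x y z w : Fin n, x ≠ y → w ≠ z →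
      ¬ (A x y ∧ A y x) → ¬ (A w z ∧ A z w) →
      A x z → A z x → A y z → A z y → A w y → A y w → A w x → A x w → False := by
    intro x y z w hxy hwz nxy nwz sxz1 sxz2 syz1 syz2 swy1 swy2 swx1 swx2
    have hxz : x ≠ z := by rintro rfl; exact nxy ⟨syz2, syz1⟩
    have hyz : y ≠ z := by rintro rfl; exact nxy ⟨sxz1, sxz2⟩
    obtain ⟨hxx, _⟩ := loops x z hxz sxz1 sxz2
    obtain ⟨hyy, _⟩ := loops y z hyz syz1 syz2
    have hfxy : f x ≠ f y := fun h => hxy (hfinj x y hxx hyy h)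
    rcases lt_or_gt_of_ne hfxy with h | h
    · exact noquadH x y z w hxy hwz nxy nwz sxz1 sxz2 syz1 syz2 swy1 swy2 swx1 swx2 h
    · exact noquadH y x z w hxy.symm hwz (fun p => nxy ⟨p.2, p.1⟩) nwz
        syz1 syz2 sxz1 sxz2 swx1 swx2 swy1 swy2 h
  -- the potential function δ
  set din : Fin n → ℕ := fun v => Set.ncard {w | A w v ∧ ¬ A v w} with hdin
  set dout : Fin n → ℕ := fun v => Set.ncard {w | A v w ∧ ¬ A w v} with hdout
  set δ : Fin n → ℤ := fun v => (din v : ℤ) - (dout v : ℤ) with hδ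
  have hmono : ∀ S T : Set (Fin n), S ⊆ T → S.ncard ≤ T.ncard := by
    intro S T h
    exact Set.ncard_le_ncard h (Set.toFinite T)
  have hsmono : ∀ (S T : Set (Fin n)) (x : Fin n), S ⊆ T → x ∈ T → x ∉ S →
      S.ncard < T.ncard := by
    intro S T x h hx hnx
    exact Set.ncard_lt_ncard ⟨h, fun h' => hnx (h' hx)⟩ (Set.toFinite T)
  -- strict domination decreases δ
  have StrictDelta : ∀ x y : Fin n, A x y → ¬ A y x → δ x < δ y := by
    intro x y hxy hnyx
    have h1 : {w | A w x ∧ ¬ A x w} ⊆ {w | A w y ∧ ¬ A y w} := by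
      intro w hw
      obtain ⟨hwx, hnxw⟩ := hw
      exact ⟨(F2 w x y hwx hnxw hxy hnyx).1, fun h => (F2 w x y hwx hnxw hxy hnyx).2 h⟩
    have h2 : din x < din y := by
      rw [hdin]
      exact hsmono _ _ x h1 ⟨hxy, hnyx⟩ (fun h => h.2 h.1)
    have h3 : {w | A y w ∧ ¬ A w y} ⊆ {w | A x w ∧ ¬ A w x} := by
      intro w hw
      obtain ⟨hyw, hnwy⟩ := hw
      exact (F2 x y w hxy hnyx hyw hnwy).imp id (fun h => h)
    have h4 : dout y < dout x := by
      rw [hdout]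
      exact hsmono _ _ y h3 ⟨hxy, hnyx⟩ (fun h => h.2 h.1)
    rw [hδ]
    simp only
    omega
  -- apexHead : strict arc x -> y with z symmetric to both endpoints : z comes before y
  have apexHead : ∀ x y z : Fin n, A x y → ¬ A y x → A x z → A z x → x ≠ z →
      A y z → A z y → y ≠ z → δ z < δ y := by
    intro x y z hxy hnyx hxz1 hxz2 hxz' hyz1 hyz2 hyz'
    have hxy' : x ≠ y := by rintro rfl; exact hnyx hxy
    have h1 : {w | A w z ∧ ¬ A z w} ⊆ {w | A w y ∧ ¬ A y w} := by
      intro w hw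
      obtain ⟨hwz, hnzw⟩ := hw
      have hwz' : w ≠ z := by rintro rfl; exact hnzw hwz
      have hwx' : w ≠ x := by rintro rfl; exact hnzw hxz2
      have hwy' : w ≠ y := by rintro rfl; exact hnzw hyz2
      by_cases hwy2 : A w y
      · by_cases hyw : A y w
        · -- Sym w y : pin down w vs x, then noquad
          exfalso
          by_cases hxw : A x w
          · by_cases hwx2 : A w x
            · exact noquad x y z w hxy' hwz' (fun p => hnyx p.2) (fun p => hnzw p.2)
                hxz1 hxz2 hyz1 hyz2 hwy2 hyw hwx2 hxw
            · exact (F2 x w z hxw hwx2 hwz hnzw).2 hxz2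
          · have hwx3 : A w x := total x w hwx'.symm hxw
            exact (F2 w x y hwx3 hxw hxy hnyx).2 hyw
        · exact ⟨hwy2, hyw⟩
      · have hyw2 : A y w := total w y hwy' hwy2
        exact absurd ((F2 y w z hyw2 hwy2 hwz hnzw).2 hyz2) (fun h => h)
    have hd1 : din z < din y := by
      rw [hdin]
      exact hsmono _ _ x h1 ⟨hxy, hnyx⟩ (fun h => h.2 hxz2)
    have h3 : {w | A y w ∧ ¬ A w y} ⊆ {w | A z w ∧ ¬ A w z} := by
      intro w hw
      obtain ⟨hyw, hnwy⟩ := hw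
      have hwy' : w ≠ y := by rintro rfl; exact hnwy hyw
      have hwz' : w ≠ z := by rintro rfl; exact hnwy hyz2
      have hwx' : w ≠ x := by rintro rfl; exact hnwy hxy
      by_cases hzw : A z w
      · by_cases hwz2 : A w z
        · -- Sym z w : star at z
          exfalso
          refine star z x y w hxz'.symm hyz'.symm hwz'.symm hxy'
            (by rintro rfl; exact hnyx hyw) hwy'.symm
            hxz2 hxz1 hyz2 hyz1 hzw hwz2
            (fun p => hnyx p.2) (fun p => (F2 x y w hxy hnyx hyw hnwy).2 p.2)
            (fun p => hnwy p.2)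
        · exact ⟨hzw, hwz2⟩
      · have hwz3 : A w z := total z w hwz'.symm hzw
        exact absurd ((h1 ⟨hwz3, hzw⟩).2 hyw) (fun h => h)
    have hd2 : dout y ≤ dout z := by
      rw [hdout]
      exact hmono _ _ h3
    rw [hδ]
    simp only
    omega
  -- apexTail : strict arc y -> z with x symmetric to both endpoints : y comes before x
  have apexTail : ∀ x y z : Fin n, A y z → ¬ A z y → A x y → A y x → x ≠ y →
      A x z → A z x → x ≠ z → δ y < δ x := by
    intro x y z hyz1 hnzy hxy1 hxy2 hxy' hxz1 hxz2 hxz'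
    have hyz' : y ≠ z := by rintro rfl; exact hnzy hyz1
    have h1 : {w | A w y ∧ ¬ A y w} ⊆ {w | A w x ∧ ¬ A x w} := by
      intro w hw
      obtain ⟨hwy, hnyw⟩ := hw
      have hwy' : w ≠ y := by rintro rfl; exact hnyw hwy
      have hwx' : w ≠ x := by rintro rfl; exact hnyw hxy2
      have hwz' : w ≠ z := by rintro rfl; exact hnzy hwy
      by_cases hxw : A x w
      · by_cases hwx : A w x
        · -- Sym w x : star at x with partners w, y, z
          exfalso
          refine star x w y z hwx'.symm hxy' hxz' hwy' hwz' hyz'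
            hxw hwx hxy1 hxy2 hxz1 hxz2
            (fun p => hnyw p.2) (fun p => (F2 w y z hwy hnyw hyz1 hnzy).2 p.2)
            (fun p => hnzy p.2)
        · exfalso
          exact (F2 x w y hxw hwx hwy hnyw).2 hxy2
      · have hwx3 : A w x := total x w hwx'.symm hxw
        exact ⟨hwx3, hxw⟩
    have hd1 : din y ≤ din x := by
      rw [hdin]
      exact hmono _ _ h1
    have h3 : {w | A x w ∧ ¬ A w x} ⊆ {w | A y w ∧ ¬ A w y} := by
      intro w hw
      obtain ⟨hxw, hnwx⟩ := hw
      have hwx' : w ≠ x := by rintro rfl; exact hnwx hxw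
      have hwy' : w ≠ y := by rintro rfl; exact hnwx hxy2
      have hwz' : w ≠ z := by rintro rfl; exact hnwx hxz2
      by_cases hyw : A y w
      · by_cases hwy : A w y
        · -- Sym w y : derive Sym w z, then noquad
          exfalso
          have hsymwz : A w z ∧ A z w := by
            by_cases hzw : A z w
            · by_cases hwz : A w z
              · exact ⟨hwz, hzw⟩
              · exact absurd ((F2 y z w hyz1 hnzy hzw hwz).2 hwy) (fun h => h)
            · have hwz3 : A w z := total z w hwz'.symm hzw
              exact absurd ((F2 x w z hxw hnwx hwz3 hzw).2 hxz2) (fun h => h)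
          exact noquad y z x w hyz' hwx' (fun p => hnzy p.2) (fun p => hnwx p.1)
            hxy2 hxy1 hxz2 hxz1 hsymwz.1 hsymwz.2 hwy hyw
        · exact ⟨hyw, hwy⟩
      · have hwy3 : A w y := total y w hwy'.symm hyw
        exfalso
        exact (F2 x w y hxw hnwx hwy3 hyw).2 hxy2
    have hd2 : dout x < dout y := by
      rw [hdout]
      exact hsmono _ _ z h3 ⟨hyz1, hnzy⟩ (fun h => h.2 hxz2)
    rw [hδ]
    simp only
    omega
  -- the key function and its order
  set K : Fin n → Lex (ℤ × Fin n) := fun v => toLex (δ v, v) with hK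
  have hKinj : Function.Injective K := by
    intro u v h
    have h2 := congrArg (fun p => (ofLex p).2) h
    simpa [hK] using h2
  have hKlt : ∀ x y : Fin n, K x < K y ↔ (δ x < δ y ∨ (δ x = δ y ∧ x < y)) := by
    intro x y
    rw [hK]
    exact Prod.Lex.lt_iff
  have hKdle : ∀ x y : Fin n, K x < K y → δ x ≤ δ y := by
    intro x y h
    rcases (hKlt x y).1 h with h | h
    · exact h.le
    · exact h.1.le
  -- O1 : the order refines the arc relation
  have O1 : ∀ x y : Fin n, K x < K y → A x y := by
    intro x y h
    by_contra hxy
    have hne : x ≠ y := by rintro rfl; exact lt_irrefl _ h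
    have hyx : A y x := total x y hne hxy
    have := StrictDelta y x hyx hxy
    have := hKdle x y h
    omega
  -- L1 : proper-interval property of the order
  have L1 : ∀ x y z : Fin n, K x < K y → K y < K z → A x z → A z x →
      A y x ∧ A z y := by
    intro x y z hxy hyz hxz hzx
    have hxy' : x ≠ y := by rintro rfl; exact lt_irrefl _ hxy
    have hyz' : y ≠ z := by rintro rfl; exact lt_irrefl _ hyz
    have hxz' : x ≠ z := by rintro rfl; exact lt_irrefl _ (hxy.trans hyz)
    have hAxy : A x y := O1 x y hxy
    have hAyz : A y z := O1 y z hyz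
    constructor
    · by_contra hnyx
      obtain ⟨hzy, _⟩ := F1 x y z hAxy hnyx hAyz hzx hxz' hyz'
      have := apexHead x y z hAxy hnyx hxz hzx hxz' hAyz hzy hyz'
      have := hKdle y z hyz
      omega
    · by_contra hnzy
      obtain ⟨_, hyx⟩ := F1 y z x hAyz hnzy hzx hAxy hxy'.symm hxz'.symm
      have := apexTail x y z hAyz hnzy hAxy hyx hxy' hxz hzx hxz'
      have := hKdle x y hxy
      omega
  -- the core verification lemma
  have VL : ∀ a b c d : Fin n, K a ≤ K c → K d < K b → A a b → A c d →
      A a d ∧ A c b := by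
    intro a b c d hac hdb hab hcd
    constructor
    · rcases lt_trichotomy (K a) (K d) with h | h | h
      · exact O1 a d h
      · have had : a = d := hKinj h
        rcases eq_or_lt_of_le hac with he | hl
        · have : a = c := hKinj he
          rw [this]; exact hcd
        · have hne : a ≠ c := fun h' => by rw [h'] at hl; exact lt_irrefl _ hl
          have hAac : A a c := O1 a c hl
          have hAca : A c a := by rw [had]; exact hcd
          have := (loops a c hne hAac hAca).1
          rw [← had] at *
          exact this
      · rcases eq_or_lt_of_le hac with he | hl
        · have : a = c := hKinj he
          rw [this]; exact hcd
        · have hAdc : A d c := O1 d c (h.trans hl)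
          exact (L1 d a c h hl hAdc hcd).1
    · rcases lt_trichotomy (K c) (K b) with h | h | h
      · exact O1 c b h
      · have hcb : c = b := hKinj h
        have hne : d ≠ c := by rintro rfl; exact lt_irrefl _ (hcb ▸ hdb)
        have hAdc : A d c := O1 d c (hcb ▸ hdb)
        have := (loops d c hne hAdc hcd).2
        rw [hcb] at this ⊢
        exact hcb ▸ this
      · have hAdc : A d c := O1 d c (hdb.trans h)
        exact (L1 d b c hdb h hAdc hcd).2
  -- build the sorting permutation
  have hcard : (Finset.univ.image K).card = n := by
    rw [Finset.card_image_of_injective _ hKinj]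
    simp
  set e := (Finset.univ.image K).orderIsoOfFin hcard with he
  have hTmem : ∀ x, x ∈ Finset.univ.image K ↔ x ∈ Set.range K := by
    intro x
    simp [Set.mem_range, eq_comm]
  set σ : Equiv.Perm (Fin n) :=
    (e.toEquiv.trans (Equiv.subtypeEquivRight hTmem)).trans
      (Equiv.ofInjective K hKinj).symm with hσ
  have hKσ : ∀ i, K (σ i) = ((e i : { x // x ∈ Finset.univ.image K }) : Lex (ℤ × Fin n)) := by
    intro i
    rw [hσ]
    simp only [Equiv.trans_apply]
    rw [Equiv.apply_ofInjective_symm hKinj]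
    rfl
  have hmonoK : ∀ i j : Fin n, i < j → K (σ i) < K (σ j) := by
    intro i j h
    rw [hKσ, hKσ]
    exact e.lt_iff_lt.mpr h
  have hmonoKle : ∀ i j : Fin n, i ≤ j → K (σ i) ≤ K (σ j) := by
    intro i j h
    rcases eq_or_lt_of_le h with rfl | h
    · exact le_rfl
    · exact (hmonoK i j h).le
  refine ⟨σ, ?_⟩
  have main : ∀ i j k s : Fin n, i ≤ j → A (σ i) (σ k) → A (σ j) (σ s) →
      A (σ (min i j)) (σ (min k s)) ∧ A (σ (max i j)) (σ (max k s)) := by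
    intro i j k s hij h1 h2
    rw [min_eq_left hij, max_eq_right hij]
    rcases le_or_gt k s with hks | hsk
    · rw [min_eq_left hks, max_eq_right hks]
      exact ⟨h1, h2⟩
    · rw [min_eq_right hsk.le, max_eq_left hsk.le]
      exact VL (σ i) (σ k) (σ j) (σ s) (hmonoKle i j hij) (hmonoK s k hsk) h1 h2
  intro i k j s hik hjs
  rcases le_total i j with h | h
  · exact main i j k s h hik hjs
  · have h2 := main j i s k h hjs hik
    rw [min_comm j i, max_comm j i, min_comm s k, max_comm s k] at h2
    exact h2
end

section
/- Let H = TT_k[S_1,...,S_k] be the composition of a transitive tournament TT_k with digraphs S_1,...,S_k, where each S_i is either a single loopless vertex or a reflexive semicomplete digraph not containing R as an induced subdigraph whose symmetric subdigraph has connected underlying graph that is a proper interval graph. Then the loopless part I of H is a transitive tournament, and H contains no induced copy of W, R', or a directed 3-cycle with at least one loop. -/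
section aux
variable {V : Type*} (A : V → V → Prop) (P : V → Prop) (f : V → ℕ)

lemma auxN
    (hinj : ∀ x y, P x → P y → f x = f y → x = y)
    (humb : ∀ x y z : V, P x → P y → P z → f x < f y → f y < f z →
      (A x z ∧ A z x) → (A x y ∧ A y x) ∧ (A y z ∧ A z y))
    (m : V) (hPm : P m) :
    ∀ v : V, Relation.ReflTransGen (fun a b => P a ∧ P b ∧ A a b ∧ A b a) v m →
      f v < f m → ∃ x, P x ∧ f x < f m ∧ A x m ∧ A m x := by
  intro v h
  induction h using Relation.ReflTransGen.head_induction_on with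
  | refl => intro h; omega
  | head h' hp ih =>
    rename_i a b
    intro hlt
    rcases lt_trichotomy (f b) (f m) with hb | hb | hb
    · exact ih hb
    · obtain rfl : b = m := hinj _ _ h'.2.1 hPm hb
      exact ⟨a, h'.1, hlt, h'.2.2⟩
    · have := humb a m b h'.1 hPm h'.2.1 hlt hb ⟨h'.2.2.1, h'.2.2.2⟩
      exact ⟨a, h'.1, hlt, this.1⟩

lemma auxN'
    (hinj : ∀ x y, P x → P y → f x = f y → x = y)
    (humb : ∀ x y z : V, P x → P y → P z → f x < f y → f y < f z →
      (A x z ∧ A z x) → (A x y ∧ A y x) ∧ (A y z ∧ A z y))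
    (m : V) (hPm : P m) :
    ∀ v : V, Relation.ReflTransGen (fun a b => P a ∧ P b ∧ A a b ∧ A b a) v m →
      f m < f v → ∃ y, P y ∧ f m < f y ∧ A m y ∧ A y m := by
  intro v h
  induction h using Relation.ReflTransGen.head_induction_on with
  | refl => intro h; omega
  | head h' hp ih =>
    rename_i a b
    intro hlt
    rcases lt_trichotomy (f b) (f m) with hb | hb | hb
    · have := humb b m a h'.2.1 hPm h'.1 hb hlt ⟨h'.2.2.2, h'.2.2.1⟩
      exact ⟨a, h'.1, hlt, this.2⟩
    · obtain rfl : b = m := hinj _ _ h'.2.1 hPm hb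
      exact ⟨a, h'.1, hlt, h'.2.2.2, h'.2.2.1⟩
    · exact ih hb

lemma noCycle
    (hsemi : ∀ x y, P x → P y → x ≠ y → A x y ∨ A y x)
    (hnoR : ∀ u v w, P u → P v → P w →
      A u v → A v w → A w u → A u w → ¬ A v u → ¬ A w v → False)
    (hconn : ∀ x y, P x → P y →
      Relation.ReflTransGen (fun a b => P a ∧ P b ∧ A a b ∧ A b a) x y)
    (hinj : ∀ x y, P x → P y → f x = f y → x = y)
    (humb : ∀ x y z : V, P x → P y → P z → f x < f y → f y < f z →
      (A x z ∧ A z x) → (A x y ∧ A y x) ∧ (A y z ∧ A z y)) :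
    ∀ a b c, P a → P b → P c → A a b → ¬ A b a → A b c → ¬ A c b →
      A c a → ¬ A a c → False := by
  -- Case 1 : cycle a ≺ m ≺ c ≺ a with f a < f m < f c, descent on f m - f a
  have case1 : ∀ n : ℕ, ∀ a m c, P a → P m → P c → f a < f m → f m < f c →
      A a m → ¬ A m a → A m c → ¬ A c m → A c a → ¬ A a c →
      f m - f a ≤ n → False := by
    intro n
    induction n with
    | zero => intro a m c _ _ _ h1 h2 _ _ _ _ _ _ hle; omega
    | succ n ih =>
      intro a m c hPa hPm hPc ham hmc hAam hAma hAmc hAcm hAca hAac hle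
      obtain ⟨x, hPx, hxm, hAxm, hAmx⟩ :=
        auxN A P f hinj humb m hPm a (hconn a m hPa hPm) ham
      have hax : f a < f x := by
        rcases lt_trichotomy (f x) (f a) with h | h | h
        · exact absurd ((humb x a m hPx hPa hPm h ham ⟨hAxm, hAmx⟩).2.2) hAma
        · obtain rfl : x = a := hinj _ _ hPx hPa h
          exact absurd hAmx hAma
        · exact h
      have hxc : f x < f c := hxm.trans hmc
      have hxnec : x ≠ c := fun h => by rw [h] at hxc; omega
      have hanex : a ≠ x := fun h => by rw [h] at hax; omega
      -- x ≺ c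
      have hAcx : ¬ A c x := by
        intro hAcx
        by_cases hAxc : A x c
        · exact absurd ((humb x m c hPx hPm hPc hxm hmc ⟨hAxc, hAcx⟩).2.2) hAcm
        · exact hnoR m c x hPm hPc hPx hAmc hAcx hAxm hAmx hAcm hAxc
      have hAxc : A x c := (hsemi x c hPx hPc hxnec).resolve_right hAcx
      -- a ≺ x
      have hAxa : ¬ A x a := by
        intro hAxa
        by_cases hAax : A a x
        · exact hnoR x c a hPx hPc hPa hAxc hAca hAax hAxa hAcx hAac
        · exact hnoR x a m hPx hPa hPm hAxa hAam hAmx hAxm hAax hAma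
      have hAax : A a x := (hsemi a x hPa hPx hanex).resolve_right hAxa
      exact ih a x c hPa hPx hPc hax hxc hAax hAxa hAxc hAcx hAca hAac (by omega)
  -- Case 2 : cycle a ≺ b ≺ c ≺ a with f a < f c < f b, descent on f b - f c
  have case2 : ∀ n : ℕ, ∀ a b c, P a → P b → P c → f a < f c → f c < f b →
      A a b → ¬ A b a → A b c → ¬ A c b → A c a → ¬ A a c →
      f b - f c ≤ n → False := by
    intro n
    induction n with
    | zero => intro a b c _ _ _ h1 h2 _ _ _ _ _ _ hle; omega
    | succ n ih =>
      intro a b c hPa hPb hPc hac hcb hAab hAba hAbc hAcb hAca hAac hle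
      obtain ⟨y, hPy, hcy, hAcy, hAyc⟩ :=
        auxN' A P f hinj humb c hPc b (hconn b c hPb hPc) hcb
      have hyb : f y < f b := by
        rcases lt_trichotomy (f y) (f b) with h | h | h
        · exact h
        · obtain rfl : y = b := hinj _ _ hPy hPb h
          exact absurd hAcy hAcb
        · exact absurd ((humb c b y hPc hPb hPy hcb h ⟨hAcy, hAyc⟩).1.1) hAcb
      have hay : f a < f y := hac.trans hcy
      have hynea : y ≠ a := fun h => by rw [h] at hay; omega
      have hbney : b ≠ y := fun h => by rw [h] at hyb; omega
      -- y ≺ a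
      have hAay : ¬ A a y := by
        intro hAay
        by_cases hAya : A y a
        · exact absurd ((humb a c y hPa hPc hPy hac hcy ⟨hAay, hAya⟩).1.1) hAac
        · exact hnoR c a y hPc hPa hPy hAca hAay hAyc hAcy hAac hAya
      have hAya : A y a := (hsemi y a hPy hPa hynea).resolve_right hAay
      -- b ≺ y
      have hAyb : ¬ A y b := by
        intro hAyb
        by_cases hAby : A b y
        · exact hnoR y a b hPy hPa hPb hAya hAab hAby hAyb hAay hAba
        · exact hnoR y b c hPy hPb hPc hAyb hAbc hAcy hAyc hAby hAcb
      have hAby : A b y := (hsemi b y hPb hPy hbney).resolve_right hAyb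
      exact ih a b y hPa hPb hPy hay hyb hAab hAba hAby hAyb hAya hAay (by omega)
  intro a b c hPa hPb hPc hAab hAba hAbc hAcb hAca hAac
  have hab : a ≠ b := by rintro rfl; exact hAba hAab
  have hbc : b ≠ c := by rintro rfl; exact hAcb hAbc
  have hac : a ≠ c := by rintro rfl; exact hAac hAca
  have hab' : f a ≠ f b := fun h => hab (hinj _ _ hPa hPb h)
  have hbc' : f b ≠ f c := fun h => hbc (hinj _ _ hPb hPc h)
  have hac' : f a ≠ f c := fun h => hac (hinj _ _ hPa hPc h)
  rcases hab'.lt_or_gt with h1 | h1 <;> rcases hbc'.lt_or_gt with h2 | h2 <;>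
    rcases hac'.lt_or_gt with h3 | h3
  · exact case1 (f b - f a) a b c hPa hPb hPc h1 h2 hAab hAba hAbc hAcb hAca hAac le_rfl
  · omega
  · exact case2 (f b - f c) a b c hPa hPb hPc h3 h2 hAab hAba hAbc hAcb hAca hAac le_rfl
  · exact case1 (f a - f c) c a b hPc hPa hPb h3 h1 hAca hAac hAab hAba hAbc hAcb le_rfl
  · exact case2 (f c - f a) b c a hPb hPc hPa h1 h3 hAbc hAcb hAca hAac hAab hAba le_rfl
  · exact case1 (f c - f b) b c a hPb hPc hPa h2 h3 hAbc hAcb hAca hAac hAab hAba le_rfl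
  · omega
  · exact case2 (f a - f b) c a b hPc hPa hPb h2 h1 hAca hAac hAab hAba hAbc hAcb le_rfl

end aux

/-- If `H = TT_k[S_1,...,S_k]` (encoded by a partition map `part` into
`Fin k`, all arcs going forward between distinct parts), where each part is either a
single loopless vertex or a reflexive semicomplete digraph with no induced `R` whose
symmetric subdigraph is connected with proper interval underlying graph, then the
loopless part of `H` is a transitive tournament and `H` has no induced `W`, `R'`, or
directed 3-cycle with at least one loop. -/
theorem stmt10 {V : Type*} {k : ℕ} (A : V → V → Prop) (part : V → Fin k)
    (hbetween : ∀ x y : V, part x < part y → A x y ∧ ¬ A y x)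
    (hparts : ∀ i : Fin k,
      ((∃! x : V, part x = i) ∧ (∀ x, part x = i → ¬ A x x)) ∨
      ((∀ x, part x = i → A x x) ∧
       (∀ x y, part x = i → part y = i → x ≠ y → A x y ∨ A y x) ∧
       (¬ ∃ a b c : V, part a = i ∧ part b = i ∧ part c = i ∧
          a ≠ b ∧ a ≠ c ∧ b ≠ c ∧
          A a b ∧ A b c ∧ A c a ∧ A a c ∧ ¬ A b a ∧ ¬ A c b) ∧
       (∀ x y, part x = i → part y = i →
          Relation.ReflTransGen
            (fun a b => part a = i ∧ part b = i ∧ A a b ∧ A b a) x y) ∧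
       (∃ f : V → ℕ, (∀ x y, part x = i → part y = i → f x = f y → x = y) ∧
          ∀ x y z : V, part x = i → part y = i → part z = i →
            f x < f y → f y < f z → (A x z ∧ A z x) →
            (A x y ∧ A y x) ∧ (A y z ∧ A z y)))) :
    ((∀ u v : V, ¬ A u u → ¬ A v v → u ≠ v → (A u v ∨ A v u) ∧ ¬ (A u v ∧ A v u)) ∧
     (∀ u v w : V, ¬ A u u → ¬ A v v → ¬ A w w → A u v → A v w → A u w)) ∧
    (¬ ∃ a b : V, a ≠ b ∧ A a b ∧ A b a ∧ A b b ∧ ¬ A a a) ∧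
    (¬ ∃ a b c : V, a ≠ b ∧ a ≠ c ∧ b ≠ c ∧
      A a b ∧ ¬ A b a ∧ A b c ∧ A c b ∧ A c a ∧ ¬ A a c ∧ A b b ∧ A c c ∧ ¬ A a a) ∧
    (¬ ∃ a b c : V, a ≠ b ∧ a ≠ c ∧ b ≠ c ∧
      A a b ∧ A b c ∧ A c a ∧ ¬ A b a ∧ ¬ A c b ∧ ¬ A a c ∧
      (A a a ∨ A b b ∨ A c c)) := by
  -- a loopless vertex is alone in its part, and its part has no loops at all
  have hsingle : ∀ u : V, ¬ A u u → ∀ x, part x = part u → x = u ∧ ¬ A x x := by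
    intro u hu x hx
    rcases hparts (part u) with ⟨⟨w, hw, huniq⟩, hnl⟩ | ⟨hl, _⟩
    · have hxu : x = u := (huniq x hx).trans (huniq u rfl).symm
      exact ⟨hxu, hnl x hx⟩
    · exact absurd (hl u rfl) hu
  refine ⟨⟨?_, ?_⟩, ?_, ?_, ?_⟩
  · -- tournament on loopless vertices
    intro u v hu hv huv
    have hne : part u ≠ part v := fun h => huv ((hsingle v hv u h).1)
    rcases hne.lt_or_gt with h | h
    · obtain ⟨h1, h2⟩ := hbetween u v h
      exact ⟨Or.inl h1, fun hh => h2 hh.2⟩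
    · obtain ⟨h1, h2⟩ := hbetween v u h
      exact ⟨Or.inr h1, fun hh => h2 hh.1⟩
  · -- transitivity on loopless vertices
    intro u v w hu hv hw hAuv hAvw
    have h1 : part u < part v := by
      rcases lt_trichotomy (part u) (part v) with h | h | h
      · exact h
      · obtain rfl := (hsingle v hv u h).1
        exact absurd hAuv hv
      · exact absurd hAuv (hbetween v u h).2
    have h2 : part v < part w := by
      rcases lt_trichotomy (part v) (part w) with h | h | h
      · exact h
      · obtain rfl := (hsingle w hw v h).1
        exact absurd hAvw hw
      · exact absurd hAvw (hbetween w v h).2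
    exact (hbetween u w (h1.trans h2)).1
  · -- no induced W
    rintro ⟨a, b, hab, hAab, hAba, hAbb, hAaa⟩
    rcases lt_trichotomy (part a) (part b) with h | h | h
    · exact (hbetween a b h).2 hAba
    · exact (hsingle a hAaa b h.symm).2 hAbb
    · exact (hbetween b a h).2 hAab
  · -- no induced R'
    rintro ⟨a, b, c, hab, hac, hbc, hAab, hAba, hAbc, hAcb, hAca, hAac, hAbb, hAcc, hAaa⟩
    have h1 : part a < part b := by
      rcases lt_trichotomy (part a) (part b) with h | h | h
      · exact h
      · exact absurd hAbb (hsingle a hAaa b h.symm).2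
      · exact absurd hAab (hbetween b a h).2
    have h2 : part c < part a := by
      rcases lt_trichotomy (part a) (part c) with h | h | h
      · exact absurd hAca (hbetween a c h).2
      · exact absurd hAcc (hsingle a hAaa c h.symm).2
      · exact h
    exact (hbetween c b (h2.trans h1)).2 hAbc
  · -- no strict directed 3-cycle with a loop
    rintro ⟨a, b, c, hab, hac, hbc, hAab, hAbc, hAca, hAba, hAcb, hAac, -⟩
    have h1 : part a ≤ part b := le_of_not_gt fun h => (hbetween b a h).2 hAab
    have h2 : part b ≤ part c := le_of_not_gt fun h => (hbetween c b h).2 hAbc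
    have h3 : part c ≤ part a := le_of_not_gt fun h => (hbetween a c h).2 hAca
    have hpb : part b = part a := le_antisymm (h2.trans h3) h1
    have hpc : part c = part a := le_antisymm h3 (h1.trans h2)
    rcases hparts (part a) with ⟨⟨w, hw, huniq⟩, -⟩ | ⟨-, hsemi, hnoR, hconn, f, hinj, humb⟩
    · exact hab ((huniq a rfl).trans (huniq b hpb).symm)
    · refine noCycle A (fun v => part v = part a) f hsemi ?_ hconn hinj humb
        a b c rfl hpb hpc hAab hAba hAbc hAcb hAca hAac
      intro u v w hu hv hw g1 g2 g3 g4 g5 g6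
      have huv : u ≠ v := by rintro rfl; exact g5 g1
      have hvw : v ≠ w := by rintro rfl; exact g6 g2
      have huw : u ≠ w := by rintro rfl; exact g6 g1
      exact hnoR ⟨u, v, w, hu, hv, hw, huv, huw, hvw, g1, g2, g3, g4, g5, g6⟩
end

section
/- Let S be a reflexive semicomplete digraph not containing R as an induced subdigraph, whose symmetric subdigraph S^sym is connected (as an undirected graph) and whose underlying graph U(S^sym) is a proper interval graph. Then S does not contain C*_3 (the reflexive directed 3-cycle) as an induced subdigraph. -/
lemma cross_lemma {α : Type*} (S : α → α → Prop) (P : α → Prop) :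
    ∀ {u v : α}, Relation.ReflTransGen S u v → P u → ¬ P v →
      ∃ x y, S x y ∧ P x ∧ ¬ P y := by
  intro u v h
  induction h with
  | refl => intro hu hv; exact absurd hu hv
  | @tail b c h s ih =>
    intro hu hv
    by_cases hb : P b
    · exact ⟨b, c, s, hb, hv⟩
    · exact ih hu hb

/-- A reflexive semicomplete digraph with no induced `R`, whose
symmetric subdigraph is connected and has a proper interval underlying graph,
contains no induced reflexive directed 3-cycle. -/
theorem stmt11 {n : ℕ} (A : Fin n → Fin n → Prop)
    (hrefl : ∀ v, A v v)
    (hsemi : ∀ u v : Fin n, u ≠ v → A u v ∨ A v u)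
    (hnoR : ¬ ∃ a b c : Fin n, a ≠ b ∧ a ≠ c ∧ b ≠ c ∧
      A a b ∧ A b c ∧ A c a ∧ A a c ∧ ¬ A b a ∧ ¬ A c b)
    (hconn : ∀ u v : Fin n, Relation.ReflTransGen (fun x y => A x y ∧ A y x) u v)
    (hpin : ∃ σ : Equiv.Perm (Fin n), ∀ i j k : Fin n, i < j → j < k →
      (A (σ i) (σ k) ∧ A (σ k) (σ i)) →
      (A (σ i) (σ j) ∧ A (σ j) (σ i)) ∧ (A (σ j) (σ k) ∧ A (σ k) (σ j))) :
    ¬ ∃ a b c : Fin n, a ≠ b ∧ a ≠ c ∧ b ≠ c ∧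
      A a b ∧ A b c ∧ A c a ∧ ¬ A b a ∧ ¬ A c b ∧ ¬ A a c := by
  rintro ⟨a, b, c, hab, hac, hbc, hAab, hAbc, hAca, hnba, hncb, hnac⟩
  obtain ⟨σ, hσ⟩ := hpin
  -- consecutive vertices in the umbrella ordering are symmetric-adjacent
  have consec : ∀ i j : Fin n, (i : ℕ) + 1 = (j : ℕ) →
      A (σ i) (σ j) ∧ A (σ j) (σ i) := by
    intro i j hij
    have hij' : i < j := by rw [Fin.lt_def]; omega
    obtain ⟨x, y, hxy, hx, hy⟩ :=
      cross_lemma (fun x y => A x y ∧ A y x) (fun v => σ.symm v ≤ i)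
        (hconn (σ i) (σ j)) (by simp) (by simp only [Equiv.symm_apply_apply]; exact not_le.mpr hij')
    have hxeq : x = σ (σ.symm x) := (σ.apply_symm_apply x).symm
    have hyeq : y = σ (σ.symm y) := (σ.apply_symm_apply y).symm
    rw [hxeq, hyeq] at hxy
    have hiy : i < σ.symm y := lt_of_not_ge hy
    have h1 : A (σ i) (σ (σ.symm y)) ∧ A (σ (σ.symm y)) (σ i) := by
      rcases lt_or_eq_of_le hx with hlt | heq
      · exact (hσ _ _ _ hlt hiy hxy).2
      · rw [heq] at hxy; exact hxy
    have hjy : j ≤ σ.symm y := by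
      rw [Fin.le_def]; have := Fin.lt_def.mp hiy; omega
    rcases lt_or_eq_of_le hjy with hlt | heq
    · exact (hσ i j _ hij' hlt h1).1
    · rw [← heq] at h1; exact h1
  -- no "bad triangle" with middle vertex at position q
  have noBad : ∀ q : ℕ, ¬ ∃ m x y : Fin n,
      A m x ∧ A x y ∧ A y m ∧ ¬ A x m ∧ ¬ A y x ∧ ¬ A m y ∧
      ((σ.symm m : ℕ) = q) ∧
      ((σ.symm x < σ.symm m ∧ σ.symm m < σ.symm y) ∨
       (σ.symm y < σ.symm m ∧ σ.symm m < σ.symm x)) := by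
    intro q
    induction q using Nat.strong_induction_on with
    | _ q ih =>
    rintro ⟨m, x, y, hmx, hxy, hym, hnxm, hnyx, hnmy, hq, hord⟩
    have hmxne : m ≠ x := by rintro rfl; exact hnxm (hrefl _)
    have hxyne : x ≠ y := by rintro rfl; exact hnyx (hrefl _)
    have hymne : y ≠ m := by rintro rfl; exact hnmy (hrefl _)
    have hq1 : 1 ≤ q := by
      rcases hord with ⟨h1, _⟩ | ⟨h1, _⟩ <;>
        · have := Fin.lt_def.mp h1; omega
    have hqn : q < n := by have := (σ.symm m).isLt; omega
    have hmσ : m = σ (σ.symm m) := (σ.apply_symm_apply m).symm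
    set qF : Fin n := σ.symm m with hqF
    set eF : Fin n := ⟨q - 1, by omega⟩ with heF
    have heFq : (eF : ℕ) = q - 1 := rfl
    have hqFq : (qF : ℕ) = q := hq
    have hcons : A (σ eF) (σ qF) ∧ A (σ qF) (σ eF) := consec eF qF (by omega)
    set e := σ eF with he
    have hem : A e m ∧ A m e := by rw [hmσ]; exact hcons
    have hex : e ≠ x := by rintro heq2; exact hnxm (heq2 ▸ hem.1)
    have hey : e ≠ y := by rintro heq2; exact hnmy (heq2 ▸ hem.2)
    have hexm : e ≠ m := by
      intro heq2
      have h3 : eF = qF := σ.injective (by rw [← he, ← hmσ, heq2])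
      have := congrArg Fin.val h3
      simp [heFq, hqFq] at this
      omega
    have hAex : A e x := by
      by_contra hne
      have hxe : A x e := (hsemi x e (Ne.symm hex)).resolve_right hne
      exact hnoR ⟨m, x, e, hmxne, Ne.symm hexm, Ne.symm hex,
        hmx, hxe, hem.1, hem.2, hnxm, hne⟩
    have hAye : A y e := by
      by_contra hne
      have hey' : A e y := (hsemi e y hey).resolve_right hne
      exact hnoR ⟨e, y, m, hey, hexm, hymne, hey', hym, hem.2, hem.1, hne, hnmy⟩
    have heFlt : eF < qF := by rw [Fin.lt_def]; omega
    have symall : (A e x ∧ A x e) → (A e y ∧ A y e) → False := by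
      rintro hsx hsy
      rcases hord with ⟨h1, h2⟩ | ⟨h1, h2⟩
      · have hy' : A (σ eF) (σ (σ.symm y)) ∧ A (σ (σ.symm y)) (σ eF) := by
          rw [σ.apply_symm_apply, ← he]; exact ⟨hsy.1, hsy.2⟩
        have h3 := (hσ eF qF (σ.symm y) heFlt h2 hy').2
        rw [← hmσ, σ.apply_symm_apply] at h3
        exact hnmy h3.1
      · have hx' : A (σ eF) (σ (σ.symm x)) ∧ A (σ (σ.symm x)) (σ eF) := by
          rw [σ.apply_symm_apply, ← he]; exact ⟨hsx.1, hsx.2⟩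
        have h3 := (hσ eF qF (σ.symm x) heFlt h2 hx').2
        rw [← hmσ, σ.apply_symm_apply] at h3
        exact hnxm h3.2
    by_cases hxe : A x e
    · have hAey : A e y := by
        by_contra hne
        exact hnoR ⟨x, y, e, hxyne, Ne.symm hex, Ne.symm hey,
          hxy, hAye, hAex, hxe, hnyx, hne⟩
      exact symall ⟨hAex, hxe⟩ ⟨hAey, hAye⟩
    · by_cases hey2 : A e y
      · exact hnoR ⟨e, x, y, hex, hey, hxyne, hAex, hxy, hAye, hey2, hxe, hnyx⟩
      · -- new bad triangle with middle e at position q - 1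
        have hse : σ.symm e = eF := by rw [he]; simp
        have hxE : (σ.symm x : ℕ) ≠ q - 1 := by
          intro h
          apply hex
          have h3 : σ.symm x = eF := Fin.ext (by rw [heFq]; exact h)
          rw [he, ← h3, σ.apply_symm_apply]
        have hyE : (σ.symm y : ℕ) ≠ q - 1 := by
          intro h
          apply hey
          have h3 : σ.symm y = eF := Fin.ext (by rw [heFq]; exact h)
          rw [he, ← h3, σ.apply_symm_apply]
        refine ih (q - 1) (by omega) ⟨e, x, y, hAex, hxy, hAye, hxe, hnyx, hey2,
          by rw [hse, heFq], ?_⟩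
        rcases hord with ⟨h1, h2⟩ | ⟨h1, h2⟩
        · left
          have hv1 := Fin.lt_def.mp h1
          have hv2 := Fin.lt_def.mp h2
          constructor
          · rw [Fin.lt_def, hse, heFq]; omega
          · rw [Fin.lt_def, hse, heFq]; omega
        · right
          have hv1 := Fin.lt_def.mp h1
          have hv2 := Fin.lt_def.mp h2
          constructor
          · rw [Fin.lt_def, hse, heFq]; omega
          · rw [Fin.lt_def, hse, heFq]; omega
  -- find the middle vertex of the triangle a, b, c and contradict noBad
  have hpab : (σ.symm a : ℕ) ≠ (σ.symm b : ℕ) :=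
    fun h => hab (σ.symm.injective (Fin.ext h))
  have hpac : (σ.symm a : ℕ) ≠ (σ.symm c : ℕ) :=
    fun h => hac (σ.symm.injective (Fin.ext h))
  have hpbc : (σ.symm b : ℕ) ≠ (σ.symm c : ℕ) :=
    fun h => hbc (σ.symm.injective (Fin.ext h))
  have h6 : ((σ.symm b : ℕ) < (σ.symm a : ℕ) ∧ (σ.symm a : ℕ) < (σ.symm c : ℕ)) ∨
      ((σ.symm c : ℕ) < (σ.symm a : ℕ) ∧ (σ.symm a : ℕ) < (σ.symm b : ℕ)) ∨
      ((σ.symm c : ℕ) < (σ.symm b : ℕ) ∧ (σ.symm b : ℕ) < (σ.symm a : ℕ)) ∨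
      ((σ.symm a : ℕ) < (σ.symm b : ℕ) ∧ (σ.symm b : ℕ) < (σ.symm c : ℕ)) ∨
      ((σ.symm a : ℕ) < (σ.symm c : ℕ) ∧ (σ.symm c : ℕ) < (σ.symm b : ℕ)) ∨
      ((σ.symm b : ℕ) < (σ.symm c : ℕ) ∧ (σ.symm c : ℕ) < (σ.symm a : ℕ)) := by
    omega
  rcases h6 with h | h | h | h | h | h
  · exact noBad _ ⟨a, b, c, hAab, hAbc, hAca, hnba, hncb, hnac, rfl,
      Or.inl ⟨Fin.lt_def.mpr h.1, Fin.lt_def.mpr h.2⟩⟩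
  · exact noBad _ ⟨a, b, c, hAab, hAbc, hAca, hnba, hncb, hnac, rfl,
      Or.inr ⟨Fin.lt_def.mpr h.1, Fin.lt_def.mpr h.2⟩⟩
  · exact noBad _ ⟨b, c, a, hAbc, hAca, hAab, hncb, hnac, hnba, rfl,
      Or.inl ⟨Fin.lt_def.mpr h.1, Fin.lt_def.mpr h.2⟩⟩
  · exact noBad _ ⟨b, c, a, hAbc, hAca, hAab, hncb, hnac, hnba, rfl,
      Or.inr ⟨Fin.lt_def.mpr h.1, Fin.lt_def.mpr h.2⟩⟩
  · exact noBad _ ⟨c, a, b, hAca, hAab, hAbc, hnac, hnba, hncb, rfl,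
      Or.inl ⟨Fin.lt_def.mpr h.1, Fin.lt_def.mpr h.2⟩⟩
  · exact noBad _ ⟨c, a, b, hAca, hAab, hAbc, hnac, hnba, hncb, rfl,
      Or.inr ⟨Fin.lt_def.mpr h.1, Fin.lt_def.mpr h.2⟩⟩
end

section
/- Let S be a reflexive semicomplete digraph not containing R as an induced subdigraph, whose symmetric subdigraph S^sym is connected, and whose underlying graph contains no induced claw. Suppose u, v, w are vertices with u strictly dominating v, v strictly dominating w, and w strictly dominating u (i.e., they induce C*_3), chosen among all such triples to minimize the minimum pairwise distance in S^sym. If P = u, u_1, ..., u_p = v is a shortest path from u to v in S^sym with p ≥ 2, then u_1 strictly dominates v, w strictly dominates u_1, and the triple (u_1, v, w) also induces C*_3 with strictly smaller minimum pairwise distance — a contradiction; hence no such triple exists. -/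
/-- Bounded reachability along a relation: there is a chain of length exactly `k`. -/
def stmt12Reaches {α : Type*} (S : α → α → Prop) : ℕ → α → α → Prop
  | 0, u, v => u = v
  | (k+1), u, v => ∃ x, S u x ∧ stmt12Reaches S k x v

theorem stmt12Reaches_of_rtg {α : Type*} {S : α → α → Prop} {u v : α}
    (h : Relation.ReflTransGen S u v) : ∃ k, stmt12Reaches S k u v := by
  induction h using Relation.ReflTransGen.head_induction_on with
  | refl => exact ⟨0, rfl⟩
  | head hstep _ ih =>
      obtain ⟨k, hk⟩ := ih
      exact ⟨k + 1, _, hstep, hk⟩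

/-- In a reflexive semicomplete digraph with no induced `R`, with
connected symmetric subdigraph whose underlying graph is claw-free, there is no
triple `u, v, w` inducing the reflexive directed 3-cycle `C*_3`
(u strictly dominates v, v strictly dominates w, w strictly dominates u). -/
theorem stmt12 {n : ℕ} (A : Fin n → Fin n → Prop)
    (hrefl : ∀ v, A v v)
    (hsemi : ∀ u v : Fin n, u ≠ v → A u v ∨ A v u)
    (hnoR : ¬ ∃ a b c : Fin n, a ≠ b ∧ a ≠ c ∧ b ≠ c ∧
      A a b ∧ A b c ∧ A c a ∧ A a c ∧ ¬ A b a ∧ ¬ A c b)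
    (hconn : ∀ u v : Fin n, Relation.ReflTransGen (fun x y => A x y ∧ A y x) u v)
    (hclawfree : ¬ ∃ y x₁ x₂ x₃ : Fin n,
      y ≠ x₁ ∧ y ≠ x₂ ∧ y ≠ x₃ ∧ x₁ ≠ x₂ ∧ x₁ ≠ x₃ ∧ x₂ ≠ x₃ ∧
      (A y x₁ ∧ A x₁ y) ∧ (A y x₂ ∧ A x₂ y) ∧ (A y x₃ ∧ A x₃ y) ∧
      ¬ (A x₁ x₂ ∧ A x₂ x₁) ∧ ¬ (A x₁ x₃ ∧ A x₃ x₁) ∧ ¬ (A x₂ x₃ ∧ A x₃ x₂)) :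
    ¬ ∃ u v w : Fin n, u ≠ v ∧ u ≠ w ∧ v ≠ w ∧
      (A u v ∧ ¬ A v u) ∧ (A v w ∧ ¬ A w v) ∧ (A w u ∧ ¬ A u w) := by
  intro hex
  set S : Fin n → Fin n → Prop := fun x y => A x y ∧ A y x with hS
  -- the set of lengths of symmetric chains from u to v over all C*₃ triples
  set P : ℕ → Prop := fun k => ∃ u v w : Fin n, u ≠ v ∧ u ≠ w ∧ v ≠ w ∧
      (A u v ∧ ¬ A v u) ∧ (A v w ∧ ¬ A w v) ∧ (A w u ∧ ¬ A u w) ∧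
      stmt12Reaches S k u v with hPdef
  have hPex : ∃ k, P k := by
    obtain ⟨u, v, w, h1, h2, h3, h4, h5, h6⟩ := hex
    obtain ⟨k, hk⟩ := stmt12Reaches_of_rtg (hconn u v)
    exact ⟨k, u, v, w, h1, h2, h3, h4, h5, h6, hk⟩
  classical
  set p := Nat.find hPex with hp
  obtain ⟨u, v, w, huv, huw, hvw, ⟨hAuv, hAvu⟩, ⟨hAvw, hAwv⟩, ⟨hAwu, hAuw⟩, hreach⟩ :=
    Nat.find_spec hPex
  rw [← hp] at hreach
  have hmin : ∀ k < p, ¬ P k := fun k hk => Nat.find_min hPex hk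
  -- p ≠ 0
  have hp0 : p ≠ 0 := by
    intro h
    rw [h] at hreach
    exact huv hreach
  obtain ⟨k, hpk⟩ := Nat.exists_eq_succ_of_ne_zero hp0
  rw [hpk] at hreach
  · obtain ⟨u1, ⟨hAuu1, hAu1u⟩, hreach'⟩ := hreach
    have hklt : k < p := by omega
    -- u1 ≠ u
    have hu1u : u1 ≠ u := by
      rintro rfl
      exact hmin k hklt ⟨u1, v, w, huv, huw, hvw, ⟨hAuv, hAvu⟩, ⟨hAvw, hAwv⟩,
        ⟨hAwu, hAuw⟩, hreach'⟩
    have hu1v : u1 ≠ v := fun h => hAvu (h ▸ hAu1u)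
    have hu1w : u1 ≠ w := fun h => hAuw (h ▸ hAuu1)
    -- u1 strictly dominates v
    have hstep1 : A u1 v ∧ ¬ A v u1 := by
      by_cases hv1 : A v u1
      · by_cases h1v : A u1 v
        · -- u1 ↔ v : analyze u1 vs w
          by_cases h1w : A u1 w
          · by_cases hw1 : A w u1
            · -- claw with center u1, leaves u, v, w
              exact absurd ⟨u1, u, v, w, hu1u, hu1v, hu1w, huv, huw, hvw,
                ⟨hAu1u, hAuu1⟩, ⟨h1v, hv1⟩, ⟨h1w, hw1⟩,
                fun h => hAvu h.2, fun h => hAuw h.1, fun h => hAwv h.2⟩ hclawfree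
            · -- R on (u1, w, u)
              exact absurd ⟨u1, w, u, hu1w, hu1u, (Ne.symm huw),
                h1w, hAwu, hAuu1, hAu1u, hw1, hAuw⟩ hnoR
          · have hw1 : A w u1 := (hsemi u1 w hu1w).resolve_left h1w
            -- R on (v, w, u1)
            exact absurd ⟨v, w, u1, hvw, (Ne.symm hu1v), (Ne.symm hu1w),
              hAvw, hw1, h1v, hv1, hAwv, h1w⟩ hnoR
        · -- R on (u, v, u1)
          exact absurd ⟨u, v, u1, huv, (Ne.symm hu1u), (Ne.symm hu1v),
            hAuv, hv1, hAu1u, hAuu1, hAvu, h1v⟩ hnoR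
      · exact ⟨(hsemi u1 v hu1v).resolve_right hv1, hv1⟩
    obtain ⟨hA1v, hAv1⟩ := hstep1
    -- w strictly dominates u1
    have hstep2 : A w u1 ∧ ¬ A u1 w := by
      by_cases h1w : A u1 w
      · by_cases hw1 : A w u1
        · -- R on (u1, v, w)
          exact absurd ⟨u1, v, w, hu1v, hu1w, hvw,
            hA1v, hAvw, hw1, h1w, hAv1, hAwv⟩ hnoR
        · -- R on (u1, w, u)
          exact absurd ⟨u1, w, u, hu1w, hu1u, (Ne.symm huw),
            h1w, hAwu, hAuu1, hAu1u, hw1, hAuw⟩ hnoR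
      · exact ⟨(hsemi u1 w hu1w).resolve_left h1w, h1w⟩
    obtain ⟨hAw1, hA1w⟩ := hstep2
    -- the triple (u1, v, w) is a C*₃ with a shorter chain: contradiction
    exact hmin k hklt ⟨u1, v, w, hu1v, hu1w, hvw, ⟨hA1v, hAv1⟩, ⟨hAvw, hAwv⟩,
      ⟨hAw1, hA1w⟩, hreach'⟩
end

section
/- Let H be a reflexive semicomplete digraph not containing R as an induced subdigraph with H^sym connected, ordered v_1,...,v_n so that the proper-interval ordering condition holds for symmetric arcs (i<j<k and v_i v_k symmetric imply v_i v_j and v_j v_k symmetric) and all consecutive arcs v_i v_{i+1} are symmetric. Then for every vertex v_i, either v_i dominates all v_k with k > i and is dominated by all v_k with k < i, or v_i dominates all v_k with k < i and is dominated by all v_k with k > i. -/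
section Aux

variable {n : ℕ} {A : Fin n → Fin n → Prop}

lemma semiA (hsemi : ∀ u v : Fin n, u ≠ v → A u v ∨ A v u) {u v : Fin n} (h : u ≠ v) (hn : ¬ A v u) : A u v :=
  (hsemi u v h).resolve_right hn

lemma noR' (hnoR : ¬ ∃ a b c : Fin n, a ≠ b ∧ a ≠ c ∧ b ≠ c ∧
      A a b ∧ A b c ∧ A c a ∧ A a c ∧ ¬ A b a ∧ ¬ A c b) {a b c : Fin n} (h1 : a ≠ b) (h2 : a ≠ c) (h3 : b ≠ c)
    (h4 : A a b) (h5 : A b c) (h6 : A c a) (h7 : A a c)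
    (h8 : ¬ A b a) (h9 : ¬ A c b) : False :=
  hnoR ⟨a, b, c, h1, h2, h3, h4, h5, h6, h7, h8, h9⟩

/-- Domination propagates across symmetric edges, version 1:
if `l → i` strictly and `i ~ m` symmetrically, `m ≠ l`, then `A l m`. -/
lemma lemF (hsemi : ∀ u v : Fin n, u ≠ v → A u v ∨ A v u) (hnoR : ¬ ∃ a b c : Fin n, a ≠ b ∧ a ≠ c ∧ b ≠ c ∧
      A a b ∧ A b c ∧ A c a ∧ A a c ∧ ¬ A b a ∧ ¬ A c b) {l i m : Fin n} (hli : l ≠ i) (hml : m ≠ l) (hmi : m ≠ i)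
    (h1 : ¬ A i l) (h2 : A i m) (h3 : A m i) : A l m := by
  by_contra hlm
  exact noR' hnoR hml hmi hli (semiA hsemi hml hlm) (semiA hsemi hli h1) h2 h3 hlm h1

/-- Domination propagates across symmetric edges, version 2:
if `i → l` strictly and `i ~ m` symmetrically, `m ≠ l`, then `A m l`. -/
lemma lemF' (hsemi : ∀ u v : Fin n, u ≠ v → A u v ∨ A v u) (hnoR : ¬ ∃ a b c : Fin n, a ≠ b ∧ a ≠ c ∧ b ≠ c ∧
      A a b ∧ A b c ∧ A c a ∧ A a c ∧ ¬ A b a ∧ ¬ A c b) {l i m : Fin n} (hil : i ≠ l) (him : i ≠ m) (hlm : l ≠ m)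
    (h1 : ¬ A l i) (h2 : A i m) (h3 : A m i) : A m l := by
  by_contra hml
  exact noR' hnoR hil him hlm (semiA hsemi hil h1) (semiA hsemi hlm hml) h3 h2 h1 hml

/-- If `i → r` strictly with `i < r`, then `i` dominates everything in between. -/
lemma lemL3 (hsemi : ∀ u v : Fin n, u ≠ v → A u v ∨ A v u)
    (hnoR : ¬ ∃ a b c : Fin n, a ≠ b ∧ a ≠ c ∧ b ≠ c ∧
      A a b ∧ A b c ∧ A c a ∧ A a c ∧ ¬ A b a ∧ ¬ A c b)
    (horder : ∀ i j k : Fin n, i < j → j < k → (A i k ∧ A k i) →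
      (A i j ∧ A j i) ∧ (A j k ∧ A k j))
    (hconsec : ∀ i : Fin n, ∀ h : i.val + 1 < n,
      A i ⟨i.val + 1, h⟩ ∧ A ⟨i.val + 1, h⟩ i)
    (r i j : Fin n) (hij : i < j) (hjr : j < r) (hri : ¬ A r i) : A i j := by
  have hij' : i.val < j.val := hij
  have hjr' : j.val < r.val := hjr
  have hmlt : r.val - 1 < n := by omega
  set m : Fin n := ⟨r.val - 1, hmlt⟩ with hm
  have hmv : m.val = r.val - 1 := rfl
  have h1n : m.val + 1 < n := by omega
  obtain ⟨hc1, hc2⟩ := hconsec m h1n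
  have heq : (⟨m.val + 1, h1n⟩ : Fin n) = r := by
    apply Fin.ext
    show m.val + 1 = r.val
    omega
  rw [heq] at hc1 hc2
  have hir : i ≠ r := Fin.ne_of_val_ne (by omega)
  have hmi : m ≠ i := Fin.ne_of_val_ne (by omega)
  have hmr : m ≠ r := Fin.ne_of_val_ne (by omega)
  have him : A i m := by
    by_contra h
    exact noR' hnoR hmi hmr hir (semiA hsemi hmi h) (semiA hsemi hir hri) hc2 hc1 h hri
  by_cases hjm : j = m
  · rw [hjm]; exact him
  · have hjmv : j.val ≠ m.val := fun hh => hjm (Fin.ext hh)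
    have hjm' : j < m := Fin.lt_def.mpr (by omega)
    by_cases hmi2 : A m i
    · exact ((horder i j m hij hjm' ⟨him, hmi2⟩).1).1
    · exact lemL3 hsemi hnoR horder hconsec m i j hij hjm' hmi2
termination_by r.val
decreasing_by omega

/-- Mirror of `lemL3`: if `i → l` strictly with `l < i`, then everything in between
dominates `i`. -/
lemma lemL4 (hsemi : ∀ u v : Fin n, u ≠ v → A u v ∨ A v u)
    (hnoR : ¬ ∃ a b c : Fin n, a ≠ b ∧ a ≠ c ∧ b ≠ c ∧
      A a b ∧ A b c ∧ A c a ∧ A a c ∧ ¬ A b a ∧ ¬ A c b)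
    (horder : ∀ i j k : Fin n, i < j → j < k → (A i k ∧ A k i) →
      (A i j ∧ A j i) ∧ (A j k ∧ A k j))
    (hconsec : ∀ i : Fin n, ∀ h : i.val + 1 < n,
      A i ⟨i.val + 1, h⟩ ∧ A ⟨i.val + 1, h⟩ i)
    (l i j : Fin n) (hlj : l < j) (hji : j < i) (hil : ¬ A i l) : A j i := by
  have hlj' : l.val < j.val := hlj
  have hji' : j.val < i.val := hji
  have hin : i.val < n := i.isLt
  have h1n : l.val + 1 < n := by omega
  set m : Fin n := ⟨l.val + 1, h1n⟩ with hm
  have hmv : m.val = l.val + 1 := rfl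
  obtain ⟨hc1, hc2⟩ := hconsec l h1n
  rw [← hm] at hc1 hc2
  have hline : l ≠ i := Fin.ne_of_val_ne (by omega)
  have hlm : l ≠ m := Fin.ne_of_val_ne (by omega)
  have him : i ≠ m := Fin.ne_of_val_ne (by omega)
  have hmi : A m i := by
    by_contra h
    exact noR' hnoR hline hlm him (semiA hsemi hline hil) (semiA hsemi him h) hc2 hc1 hil h
  by_cases hjm : j = m
  · rw [hjm]; exact hmi
  · have hjmv : j.val ≠ m.val := fun hh => hjm (Fin.ext hh)
    have hmj : m < j := Fin.lt_def.mpr (by omega)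
    by_cases him2 : A i m
    · exact ((horder m j i hmj hji ⟨hmi, him2⟩).2).1
    · exact lemL4 hsemi hnoR horder hconsec m i j hmj hji him2
termination_by i.val - l.val
decreasing_by omega

/-- No strict out-arc `i → r'` together with strict in-arc `r → i`, both to the
right, with `r' < r`. -/
lemma lemL5 (hsemi : ∀ u v : Fin n, u ≠ v → A u v ∨ A v u)
    (hnoR : ¬ ∃ a b c : Fin n, a ≠ b ∧ a ≠ c ∧ b ≠ c ∧
      A a b ∧ A b c ∧ A c a ∧ A a c ∧ ¬ A b a ∧ ¬ A c b)
    (horder : ∀ i j k : Fin n, i < j → j < k → (A i k ∧ A k i) →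
      (A i j ∧ A j i) ∧ (A j k ∧ A k j))
    (hconsec : ∀ i : Fin n, ∀ h : i.val + 1 < n,
      A i ⟨i.val + 1, h⟩ ∧ A ⟨i.val + 1, h⟩ i)
    (i r' r : Fin n) (h1 : i < r') (h2 : r' < r)
    (h3 : ¬ A r' i) (h4 : ¬ A i r) : False := by
  have h1' : i.val < r'.val := h1
  have h2' : r'.val < r.val := h2
  have hrn : r.val < n := r.isLt
  have h1n : r'.val + 1 < n := by omega
  set m : Fin n := ⟨r'.val + 1, h1n⟩ with hm
  have hmv : m.val = r'.val + 1 := rfl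
  obtain ⟨hc1, hc2⟩ := hconsec r' h1n
  rw [← hm] at hc1 hc2
  have hrm' : r' < m := Fin.lt_def.mpr (by omega)
  have him : i ≠ m := Fin.ne_of_val_ne (by omega)
  have hmine : m ≠ i := Fin.ne_of_val_ne (by omega)
  have hmr' : m ≠ r' := Fin.ne_of_val_ne (by omega)
  have hir' : i ≠ r' := ne_of_lt h1
  by_cases hAim : A i m
  · by_cases hAmi : A m i
    · exact h3 ((horder i r' m h1 hrm' ⟨hAim, hAmi⟩).1).2
    · by_cases hmr : m = r
      · exact h4 (hmr ▸ hAim)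
      · have hmrv : m.val ≠ r.val := fun hh => hmr (Fin.ext hh)
        have hmltr : m < r := Fin.lt_def.mpr (by omega)
        exact lemL5 hsemi hnoR horder hconsec i m r (h1.trans hrm') hmltr hAmi h4
  · by_cases hAmi : A m i
    · exact noR' hnoR hmine hmr' hir' hAmi (semiA hsemi hir' h3) hc1 hc2 hAim h3
    · rcases hsemi i m him with h | h
      · exact hAim h
      · exact hAmi h
termination_by r.val - r'.val
decreasing_by omega

/-- Mirror of `lemL5`. -/
lemma lemL6 (hsemi : ∀ u v : Fin n, u ≠ v → A u v ∨ A v u)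
    (hnoR : ¬ ∃ a b c : Fin n, a ≠ b ∧ a ≠ c ∧ b ≠ c ∧
      A a b ∧ A b c ∧ A c a ∧ A a c ∧ ¬ A b a ∧ ¬ A c b)
    (horder : ∀ i j k : Fin n, i < j → j < k → (A i k ∧ A k i) →
      (A i j ∧ A j i) ∧ (A j k ∧ A k j))
    (hconsec : ∀ i : Fin n, ∀ h : i.val + 1 < n,
      A i ⟨i.val + 1, h⟩ ∧ A ⟨i.val + 1, h⟩ i)
    (x y z : Fin n) (hxy : x < y) (hyz : y < z)
    (h1 : ¬ A z y) (h2 : ¬ A x z) : False := by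
  have hxy' : x.val < y.val := hxy
  have hyz' : y.val < z.val := hyz
  have hmlt : y.val - 1 < n := by omega
  set m : Fin n := ⟨y.val - 1, hmlt⟩ with hm
  have hmv : m.val = y.val - 1 := rfl
  have h1n : m.val + 1 < n := by omega
  obtain ⟨hc1, hc2⟩ := hconsec m h1n
  have heq : (⟨m.val + 1, h1n⟩ : Fin n) = y := by
    apply Fin.ext
    show m.val + 1 = y.val
    omega
  rw [heq] at hc1 hc2
  have hmy : m < y := Fin.lt_def.mpr (by omega)
  have hyzne : y ≠ z := ne_of_lt hyz
  have hym : y ≠ m := Fin.ne_of_val_ne (by omega)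
  have hzm : z ≠ m := Fin.ne_of_val_ne (by omega)
  by_cases hAmz : A m z
  · by_cases hAzm : A z m
    · exact h1 ((horder m y z hmy hyz ⟨hAmz, hAzm⟩).2).2
    · by_cases hmx : m = x
      · exact h2 (hmx ▸ hAmz)
      · have hmxv : m.val ≠ x.val := fun hh => hmx (Fin.ext hh)
        have hxm : x < m := Fin.lt_def.mpr (by omega)
        exact lemL6 hsemi hnoR horder hconsec x m z hxm (hmy.trans hyz) hAzm h2
  · by_cases hAzm : A z m
    · exact noR' hnoR hyzne hym hzm (semiA hsemi hyzne h1) hAzm hc1 hc2 h1 hAmz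
    · rcases hsemi z m hzm with h | h
      · exact hAzm h
      · exact hAmz h
termination_by y.val
decreasing_by omega

/-- No two strict out-arcs of `i` on opposite sides. -/
lemma lemE (hsemi : ∀ u v : Fin n, u ≠ v → A u v ∨ A v u)
    (hnoR : ¬ ∃ a b c : Fin n, a ≠ b ∧ a ≠ c ∧ b ≠ c ∧
      A a b ∧ A b c ∧ A c a ∧ A a c ∧ ¬ A b a ∧ ¬ A c b)
    (horder : ∀ i j k : Fin n, i < j → j < k → (A i k ∧ A k i) →
      (A i j ∧ A j i) ∧ (A j k ∧ A k j))
    (hconsec : ∀ i : Fin n, ∀ h : i.val + 1 < n,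
      A i ⟨i.val + 1, h⟩ ∧ A ⟨i.val + 1, h⟩ i)
    (l i r : Fin n) (hli : l < i) (hir : i < r)
    (h1 : ¬ A l i) (h2 : ¬ A r i) : False := by
  have hli' : l.val < i.val := hli
  have hir' : i.val < r.val := hir
  have hin : i.val < n := i.isLt
  have hrn : r.val < n := r.isLt
  have up : ∀ t, i.val ≤ t → ∀ htn : t < n, ¬ A l ⟨t, htn⟩ := by
    intro t ht
    induction t, ht using Nat.le_induction with
    | base =>
      intro htn
      exact h1
    | succ t ht ih =>
      intro htn1
      have htn : t < n := by omega
      have ihc := ih htn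
      obtain ⟨hc1, hc2⟩ := hconsec ⟨t, htn⟩ htn1
      have hAml : A (⟨t + 1, htn1⟩ : Fin n) l :=
        lemF' hsemi hnoR
          (show (⟨t, htn⟩ : Fin n) ≠ l from Fin.ne_of_val_ne (by simp; omega))
          (show (⟨t, htn⟩ : Fin n) ≠ ⟨t + 1, htn1⟩ from Fin.ne_of_val_ne (by simp))
          (show l ≠ (⟨t + 1, htn1⟩ : Fin n) from Fin.ne_of_val_ne (by simp; omega))
          ihc hc1 hc2
      intro hAlm2
      have humb := horder l i ⟨t + 1, htn1⟩ hli (Fin.lt_def.mpr (by simp; omega))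
        ⟨hAlm2, hAml⟩
      exact h1 humb.1.1
  have hnAlr : ¬ A l r := up r.val hir'.le r.isLt
  have down : ∀ d t, ∀ htn : t < n, t + d = i.val → l.val ≤ t → ¬ A r ⟨t, htn⟩ := by
    intro d
    induction d with
    | zero =>
      intro t htn hsum hl
      have heqi : (⟨t, htn⟩ : Fin n) = i := Fin.ext (by show t = i.val; omega)
      rw [heqi]; exact h2
    | succ d ih =>
      intro t htn hsum hl
      have htn1 : t + 1 < n := by omega
      have ihc := ih (t + 1) htn1 (by omega) (by omega)
      obtain ⟨hc1, hc2⟩ := hconsec ⟨t, htn⟩ htn1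
      have hArm : A (⟨t, htn⟩ : Fin n) r :=
        lemF' hsemi hnoR
          (show (⟨t + 1, htn1⟩ : Fin n) ≠ r from Fin.ne_of_val_ne (by simp; omega))
          (show (⟨t + 1, htn1⟩ : Fin n) ≠ ⟨t, htn⟩ from Fin.ne_of_val_ne (by simp))
          (show r ≠ (⟨t, htn⟩ : Fin n) from Fin.ne_of_val_ne (by simp; omega))
          ihc hc2 hc1
      intro hArm2
      have humb := horder ⟨t, htn⟩ i r (Fin.lt_def.mpr (by simp; omega)) hir
        ⟨hArm, hArm2⟩
      exact h2 humb.2.2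
  have hnArl : ¬ A r l := down (i.val - l.val) l.val l.isLt (by omega) le_rfl
  rcases hsemi l r (Fin.ne_of_val_ne (by omega)) with h | h
  · exact hnAlr h
  · exact hnArl h

/-- No two strict in-arcs of `i` from opposite sides. -/
lemma lemE' (hsemi : ∀ u v : Fin n, u ≠ v → A u v ∨ A v u)
    (hnoR : ¬ ∃ a b c : Fin n, a ≠ b ∧ a ≠ c ∧ b ≠ c ∧
      A a b ∧ A b c ∧ A c a ∧ A a c ∧ ¬ A b a ∧ ¬ A c b)
    (horder : ∀ i j k : Fin n, i < j → j < k → (A i k ∧ A k i) →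
      (A i j ∧ A j i) ∧ (A j k ∧ A k j))
    (hconsec : ∀ i : Fin n, ∀ h : i.val + 1 < n,
      A i ⟨i.val + 1, h⟩ ∧ A ⟨i.val + 1, h⟩ i)
    (l i r : Fin n) (hli : l < i) (hir : i < r)
    (h1 : ¬ A i l) (h2 : ¬ A i r) : False := by
  have hli' : l.val < i.val := hli
  have hir' : i.val < r.val := hir
  have hin : i.val < n := i.isLt
  have hrn : r.val < n := r.isLt
  have up : ∀ t, i.val ≤ t → ∀ htn : t < n, ¬ A ⟨t, htn⟩ l := by
    intro t ht
    induction t, ht using Nat.le_induction with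
    | base =>
      intro htn
      exact h1
    | succ t ht ih =>
      intro htn1
      have htn : t < n := by omega
      have ihc := ih htn
      obtain ⟨hc1, hc2⟩ := hconsec ⟨t, htn⟩ htn1
      have hAlm : A l (⟨t + 1, htn1⟩ : Fin n) :=
        lemF hsemi hnoR
          (show l ≠ (⟨t, htn⟩ : Fin n) from Fin.ne_of_val_ne (by simp; omega))
          (show (⟨t + 1, htn1⟩ : Fin n) ≠ l from Fin.ne_of_val_ne (by simp; omega))
          (show (⟨t + 1, htn1⟩ : Fin n) ≠ ⟨t, htn⟩ from Fin.ne_of_val_ne (by simp))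
          ihc hc1 hc2
      intro hml
      have humb := horder l i ⟨t + 1, htn1⟩ hli (Fin.lt_def.mpr (by simp; omega))
        ⟨hAlm, hml⟩
      exact h1 humb.1.2
  have hnArl : ¬ A r l := up r.val hir'.le r.isLt
  have down : ∀ d t, ∀ htn : t < n, t + d = i.val → l.val ≤ t → ¬ A ⟨t, htn⟩ r := by
    intro d
    induction d with
    | zero =>
      intro t htn hsum hl
      have heqi : (⟨t, htn⟩ : Fin n) = i := Fin.ext (by show t = i.val; omega)
      rw [heqi]; exact h2
    | succ d ih =>
      intro t htn hsum hl
      have htn1 : t + 1 < n := by omega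
      have ihc := ih (t + 1) htn1 (by omega) (by omega)
      obtain ⟨hc1, hc2⟩ := hconsec ⟨t, htn⟩ htn1
      have hArm : A r (⟨t, htn⟩ : Fin n) :=
        lemF hsemi hnoR
          (show r ≠ (⟨t + 1, htn1⟩ : Fin n) from Fin.ne_of_val_ne (by simp; omega))
          (show (⟨t, htn⟩ : Fin n) ≠ r from Fin.ne_of_val_ne (by simp; omega))
          (show (⟨t, htn⟩ : Fin n) ≠ ⟨t + 1, htn1⟩ from Fin.ne_of_val_ne (by simp))
          ihc hc2 hc1
      intro hmr
      have humb := horder ⟨t, htn⟩ i r (Fin.lt_def.mpr (by simp; omega)) hir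
        ⟨hmr, hArm⟩
      exact h2 humb.2.1
  have hnAlr : ¬ A l r := down (i.val - l.val) l.val l.isLt (by omega) le_rfl
  rcases hsemi l r (Fin.ne_of_val_ne (by omega)) with h | h
  · exact hnAlr h
  · exact hnArl h

end Aux

/-- In a reflexive semicomplete digraph with no induced `R`, connected
symmetric subdigraph, ordered so that the proper-interval umbrella condition holds
for symmetric arcs and consecutive arcs are symmetric, each vertex either dominates
all later vertices and is dominated by all earlier ones, or vice versa. -/
theorem stmt13 {n : ℕ} (A : Fin n → Fin n → Prop)
    (hrefl : ∀ v, A v v)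
    (hsemi : ∀ u v : Fin n, u ≠ v → A u v ∨ A v u)
    (hnoR : ¬ ∃ a b c : Fin n, a ≠ b ∧ a ≠ c ∧ b ≠ c ∧
      A a b ∧ A b c ∧ A c a ∧ A a c ∧ ¬ A b a ∧ ¬ A c b)
    (hconn : ∀ u v : Fin n, Relation.ReflTransGen (fun x y => A x y ∧ A y x) u v)
    (horder : ∀ i j k : Fin n, i < j → j < k → (A i k ∧ A k i) →
      (A i j ∧ A j i) ∧ (A j k ∧ A k j))
    (hconsec : ∀ i : Fin n, ∀ h : i.val + 1 < n,
      A i ⟨i.val + 1, h⟩ ∧ A ⟨i.val + 1, h⟩ i) :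
    ∀ i : Fin n,
      ((∀ k : Fin n, i < k → A i k) ∧ (∀ k : Fin n, k < i → A k i)) ∨
      ((∀ k : Fin n, k < i → A i k) ∧ (∀ k : Fin n, i < k → A k i)) := by
  intro i
  by_cases hneg : (∃ k, i < k ∧ ¬ A i k) ∨ (∃ k, k < i ∧ ¬ A k i)
  · right
    rcases hneg with ⟨r, hir, hAir⟩ | ⟨l, hli, hAli⟩
    · refine ⟨fun k hk => ?_, fun k hik => ?_⟩
      · by_contra hAik
        exact lemE' hsemi hnoR horder hconsec k i r hk hir hAik hAir
      · by_contra hAki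
        rcases lt_trichotomy k r with h | h | h
        · exact lemL5 hsemi hnoR horder hconsec i k r hik h hAki hAir
        · rcases hsemi i r (ne_of_lt hir) with h' | h'
          · exact hAir h'
          · exact (h ▸ hAki) h'
        · exact hAir (lemL3 hsemi hnoR horder hconsec k i r hir h hAki)
    · refine ⟨fun k hk => ?_, fun k hik => ?_⟩
      · by_contra hAik
        rcases lt_trichotomy k l with h | h | h
        · exact hAli (lemL4 hsemi hnoR horder hconsec k i l h hli hAik)
        · rcases hsemi l i (ne_of_lt hli) with h' | h'
          · exact hAli h'
          · exact (h ▸ hAik) h'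
        · exact lemL6 hsemi hnoR horder hconsec l k i h hk hAik hAli
      · by_contra hAki
        exact lemE hsemi hnoR horder hconsec l i k hli hik hAli hAki
  · push_neg at hneg
    exact Or.inl ⟨hneg.1, hneg.2⟩
end

section
/- Let H be the digraph with vertex set {1,2,3} and arc set {12,23,32,31,22,33} (the digraph R'). For a loopless digraph G on p vertices, construct the bipartite digraph D with vertices {x_1, x_2 : x ∈ V(G)} and arcs {x_1 x_2 : x ∈ V(G)} ∪ {x_2 y_1 : xy ∈ A(G)}. Then for any homomorphism f of D to H in which no x_1 is mapped to 2 and no x_2 is mapped to 1 and no x_1 is mapped to 3 while x_2 is mapped to 2 for the same x, the set I = {x ∈ V(G) : f(x_1) = 1} is an independent set of G; conversely, every independent set I of G arises this way from the homomorphism g with g(x_1)=1, g(x_2)=2 for x ∈ I and g(x_1)=g(x_2)=3 otherwise. -/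
/-- The digraph `R'` on vertices `{0,1,2}` (standing for `{1,2,3}`) with arcs
`{12,23,32,31,22,33}`. -/
def RprimeArc : Fin 3 → Fin 3 → Prop := fun a b =>
  (a = 0 ∧ b = 1) ∨ (a = 1 ∧ b = 2) ∨ (a = 2 ∧ b = 1) ∨ (a = 2 ∧ b = 0) ∨
  (a = 1 ∧ b = 1) ∨ (a = 2 ∧ b = 2)

/-- The arcs of the bipartite digraph `D` built from a loopless digraph `G`:
vertices `x₁ = Sum.inl x` and `x₂ = Sum.inr x`, arcs `x₁x₂` for each vertex `x`
and `x₂y₁` for each arc `xy` of `G`. -/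
def DArc {V : Type*} (G : V → V → Prop) : (V ⊕ V) → (V ⊕ V) → Prop
  | Sum.inl x, Sum.inr y => x = y
  | Sum.inr x, Sum.inl y => G x y
  | _, _ => False

/-- combinatorial core of the NP-hardness reduction for MinHOM(R'). -/
theorem stmt15 {V : Type*} (G : V → V → Prop) (hloopless : ∀ x, ¬ G x x) :
    (∀ f : V ⊕ V → Fin 3,
      (∀ u v : V ⊕ V, DArc G u v → RprimeArc (f u) (f v)) →
      (∀ x : V, f (Sum.inl x) ≠ 1) →
      (∀ x : V, f (Sum.inr x) ≠ 0) →
      (∀ x : V, ¬ (f (Sum.inl x) = 2 ∧ f (Sum.inr x) = 1)) →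
      ∀ x y : V, f (Sum.inl x) = 0 → f (Sum.inl y) = 0 → x ≠ y →
        ¬ G x y ∧ ¬ G y x) ∧
    (∀ I : Set V, (∀ x ∈ I, ∀ y ∈ I, x ≠ y → ¬ G x y ∧ ¬ G y x) →
      ∃ g : V ⊕ V → Fin 3,
        (∀ x ∈ I, g (Sum.inl x) = 0 ∧ g (Sum.inr x) = 1) ∧
        (∀ x ∉ I, g (Sum.inl x) = 2 ∧ g (Sum.inr x) = 2) ∧
        (∀ u v : V ⊕ V, DArc G u v → RprimeArc (g u) (g v)) ∧
        (∀ x : V, g (Sum.inl x) ≠ 1) ∧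
        (∀ x : V, g (Sum.inr x) ≠ 0) ∧
        (∀ x : V, ¬ (g (Sum.inl x) = 2 ∧ g (Sum.inr x) = 1)) ∧
        (∀ x : V, g (Sum.inl x) = 0 ↔ x ∈ I)) := by
  constructor
  · intro f hf _ _ _ x y hx hy _
    have hx2 : f (Sum.inr x) = 1 := by
      have := hf (Sum.inl x) (Sum.inr x) rfl
      rw [hx] at this
      unfold RprimeArc at this
      rcases this with ⟨_,h⟩|⟨h,_⟩|⟨h,_⟩|⟨h,_⟩|⟨h,_⟩|⟨h,_⟩ <;> simp_all
    have hy2 : f (Sum.inr y) = 1 := by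
      have := hf (Sum.inl y) (Sum.inr y) rfl
      rw [hy] at this
      unfold RprimeArc at this
      rcases this with ⟨_,h⟩|⟨h,_⟩|⟨h,_⟩|⟨h,_⟩|⟨h,_⟩|⟨h,_⟩ <;> simp_all
    constructor
    · intro hG
      have := hf (Sum.inr x) (Sum.inl y) hG
      rw [hx2, hy] at this
      unfold RprimeArc at this
      simp at this
    · intro hG
      have := hf (Sum.inr y) (Sum.inl x) hG
      rw [hy2, hx] at this
      unfold RprimeArc at this
      simp at this
  · intro I hI
    classical
    refine ⟨fun u => match u with
      | Sum.inl x => if x ∈ I then 0 else 2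
      | Sum.inr x => if x ∈ I then 1 else 2, ?_, ?_, ?_, ?_, ?_, ?_, ?_⟩
    · intro x hx; simp [hx]
    · intro x hx; simp [hx]
    · rintro (x|x) (y|y) h <;> simp only [DArc] at h
      · subst h
        by_cases hx : x ∈ I <;> simp [hx, RprimeArc]
      · by_cases hx : x ∈ I <;> by_cases hy : y ∈ I <;> simp [hx, hy, RprimeArc]
        exact absurd h (hI x hx y hy (fun e => hloopless x (e ▸ h))).1
    · intro x; by_cases hx : x ∈ I <;> simp [hx]
    · intro x; by_cases hx : x ∈ I <;> simp [hx]
    · intro x; by_cases hx : x ∈ I <;> simp [hx]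
    · intro x; by_cases hx : x ∈ I <;> simp [hx]
end
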